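/- arXiv:1706.03208 — 4 statements merged into one kernel-verified Lean document; each statement's English description precedes it below -/
import Mathlib

section
/- Let A be an alternating Büchi automaton and let T be a run of A (on some word w ∈ Σ^ω) with root(T) = ι. Then T is accepting if and only if for every π ∈ T there exists a constant k_π ∈ ℕ such that every path ψ ∈ Q^+ with πψ ∈ T and |ψ| ≥ k_π contains an accepting state. -/
/-- An alternating Büchi automaton over alphabet `σ` with states `Q`:
initial state `ι`, transition function `δ` (where `P ∈ δ q a` means `q →a P`),
and accepting states `α`. -/
structure ABA (σ Q : Type*) where
  ι : Q
  δ : Q → σ → Set (Set Q)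
  α : Set Q

variable {σ Q : Type*}

/-- The assumption `∅ ∉ δ(q, a)` for all `q, a`. -/
def ABA.NoEmpty (A : ABA σ Q) : Prop := ∀ q a, ∅ ∉ A.δ q a

/-- The set of successors of a path `π` in a tree `T ⊆ Q⁺`. -/
def succs (T : Set (List Q)) (π : List Q) : Set Q := {q | π ++ [q] ∈ T}

/-- A tree over `Q`: a set of nonempty finite words over `Q`, closed under nonempty
prefixes and containing exactly one word of length one (its root). -/
structure IsTree (T : Set (List Q)) : Prop where
  not_nil : [] ∉ T
  prefix_closed : ∀ π ∈ T, ∀ ρ : List Q, ρ <+: π → ρ ≠ [] → ρ ∈ T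
  root : ∃! q : Q, [q] ∈ T

/-- The last state of a path (`A.ι` as a dummy for the empty path). -/
def lastSt (A : ABA σ Q) (π : List Q) : Q := π.getLastD A.ι

/-- A partial run of `A` on `w`: a finite tree in which every path either has no
successors or takes a transition of `A` on the appropriate letter of `w`. -/
structure IsPartialRun (A : ABA σ Q) (w : ℕ → σ) (T : Set (List Q)) : Prop where
  tree : IsTree T
  finite : T.Finite
  step : ∀ π ∈ T, succs T π = ∅ ∨ succs T π ∈ A.δ (lastSt A π) (w (π.length - 1))

/-- A run of `A` on `w`. -/
structure IsRun (A : ABA σ Q) (w : ℕ → σ) (T : Set (List Q)) : Prop where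
  tree : IsTree T
  step : ∀ π ∈ T, succs T π ∈ A.δ (lastSt A π) (w (π.length - 1))

/-- A (finite, maximal) branch of a tree. -/
def IsBranch (T : Set (List Q)) (π : List Q) : Prop := π ∈ T ∧ succs T π = ∅

/-- An infinite branch of a tree: all its nonempty finite prefixes belong to the tree. -/
def InfBranch (T : Set (List Q)) (ξ : ℕ → Q) : Prop :=
  ∀ n : ℕ, (List.ofFn fun i : Fin (n + 1) => ξ i) ∈ T

/-- A run is accepting iff every infinite branch contains infinitely many accepting
states. -/
def Accepting (A : ABA σ Q) (T : Set (List Q)) : Prop :=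
  ∀ ξ : ℕ → Q, InfBranch T ξ → ∀ n : ℕ, ∃ m ≥ n, ξ m ∈ A.α

/-- The language of `A`: the infinite words having an accepting run rooted at `ι`. -/
def ABA.Lang (A : ABA σ Q) : Set (ℕ → σ) :=
  {w | ∃ T : Set (List Q), IsRun A w T ∧ [A.ι] ∈ T ∧ Accepting A T}

/-- `p ≼_α r` : `p ∈ α ⇒ r ∈ α`. -/
def αle (A : ABA σ Q) (p r : Q) : Prop := p ∈ A.α → r ∈ A.α

/-- A forward simulation on `A`. -/
def ForwardSim (A : ABA σ Q) (F : Q → Q → Prop) : Prop :=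
  ∀ p r, F p r → (p ∈ A.α → r ∈ A.α) ∧
    ∀ a P, P ∈ A.δ p a → ∃ R ∈ A.δ r a, ∀ r' ∈ R, ∃ p' ∈ P, F p' r'

/-- A backward simulation on `A` parametrised by the forward simulation `F`. -/
def BackwardSim (A : ABA σ Q) (F B : Q → Q → Prop) : Prop :=
  ∀ p r, B p r → (p = A.ι → r = A.ι) ∧ (p ∈ A.α → r ∈ A.α) ∧
    ∀ a q P, p ∉ P → insert p P ∈ A.δ q a →
      ∃ s R, r ∉ R ∧ insert r R ∈ A.δ s a ∧ B q s ∧ ∀ y ∈ R, ∃ x ∈ P, F x y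

/-- A run `T` of `A` rooted at `ι` is accepting iff for every `π ∈ T` there is a
constant `k_π` such that every path `ψ ∈ Q⁺` with `πψ ∈ T` and `|ψ| ≥ k_π` contains an
accepting state. -/
theorem stmt_15 [Finite σ] [Finite Q] (A : ABA σ Q) (hne : A.NoEmpty)
    (w : ℕ → σ) (T : Set (List Q)) (hT : IsRun A w T) (hroot : [A.ι] ∈ T) :
    Accepting A T ↔
      ∀ π ∈ T, ∃ k : ℕ, ∀ ψ : List Q, ψ ≠ [] → π ++ ψ ∈ T → k ≤ ψ.length →
        ∃ q ∈ A.α, q ∈ ψ := by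
  constructor
  · -- hard direction: accepting → bounded constants exist
    intro hacc π hπ
    by_contra hcon
    push_neg at hcon
    -- hcon : ∀ k, ∃ ψ, ψ ≠ [] ∧ π ++ ψ ∈ T ∧ k ≤ ψ.length ∧ ∀ q ∈ A.α, q ∉ ψ
    have hπne : π ≠ [] := fun h => hT.tree.not_nil (h ▸ hπ)
    set S : Set (List Q) := {ψ | π ++ ψ ∈ T ∧ ∀ q ∈ A.α, q ∉ ψ} with hS
    have hSpre : ∀ ψ ∈ S, ∀ ρ, ρ <+: ψ → ρ ∈ S := by
      intro ψ hψ ρ hρ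
      obtain ⟨t, rfl⟩ := hρ
      refine ⟨hT.tree.prefix_closed _ hψ.1 _ ⟨t, by simp⟩ (by simp [hπne]), ?_⟩
      intro q hq hqρ
      exact hψ.2 q hq (List.mem_append_left t hqρ)
    set Good : List Q → Prop := fun ψ => ∀ k : ℕ, ∃ φ, k ≤ φ.length ∧ ψ ++ φ ∈ S with hGood
    have good_nil : Good [] := by
      intro k
      obtain ⟨ψ, h1, h2, h3, h4⟩ := hcon k
      exact ⟨ψ, h3, by simpa [hS] using ⟨h2, h4⟩⟩
    have good_mem : ∀ ψ, Good ψ → ψ ∈ S := by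
      intro ψ hg
      obtain ⟨φ, -, hφ⟩ := hg 0
      exact hSpre _ hφ ψ ⟨φ, rfl⟩
    have good_step : ∀ ψ, Good ψ → ∃ q, Good (ψ ++ [q]) := by
      intro ψ hg
      choose φ hlen hmem using hg
      have hne' : ∀ k : ℕ, φ (k + 1) ≠ [] := by
        intro k h
        have := hlen (k + 1)
        rw [h] at this; simp at this
      set f : ℕ → Q := fun k => (φ (k + 1)).head (hne' k) with hf
      haveI : Nonempty Q := ⟨A.ι⟩
      obtain ⟨q, hq⟩ := Finite.exists_infinite_fiber f
      have hqinf : (f ⁻¹' {q}).Infinite := Set.infinite_coe_iff.mp hq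
      refine ⟨q, fun k => ?_⟩
      obtain ⟨k', hk'mem, hk'gt⟩ := hqinf.exists_gt k
      have hfk : f k' = q := hk'mem
      refine ⟨(φ (k' + 1)).tail, ?_, ?_⟩
      · have h1 := hlen (k' + 1)
        have : (φ (k' + 1)).tail.length = (φ (k' + 1)).length - 1 := List.length_tail
        omega
      · have heq : ψ ++ [q] ++ (φ (k' + 1)).tail = ψ ++ φ (k' + 1) := by
          rw [List.append_assoc]
          congr 1
          rw [← hfk, hf]
          exact List.cons_head_tail (hne' k')
        rw [heq]; exact hmem (k' + 1)
    -- build the infinite α-free branch by iterating good_step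
    set next : {ψ : List Q // Good ψ} → {ψ : List Q // Good ψ} :=
      fun x => ⟨x.1 ++ [Classical.choose (good_step x.1 x.2)],
        Classical.choose_spec (good_step x.1 x.2)⟩ with hnext
    set L : ℕ → {ψ : List Q // Good ψ} := fun n => next^[n] ⟨[], good_nil⟩ with hL
    have hlen : ∀ n, (L n).1.length = n := by
      intro n
      induction n with
      | zero => simp [hL]
      | succ n ih =>
        have : L (n + 1) = next (L n) := by
          simp only [hL, Function.iterate_succ_apply']
        rw [this, hnext]
        simp [ih]
    have hmono : ∀ n m, n ≤ m → (L n).1 <+: (L m).1 := by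
      intro n m hnm
      induction m with
      | zero =>
        obtain rfl : n = 0 := by omega
        exact List.prefix_refl _
      | succ m ih =>
        have hstep : L (m + 1) = next (L m) := by
          simp only [hL, Function.iterate_succ_apply']
        rcases Nat.lt_or_ge n (m + 1) with h | h
        · have := ih (by omega)
          rw [hstep, hnext]
          exact this.trans ⟨_, rfl⟩
        · have : n = m + 1 := by omega
          subst this; exact List.prefix_refl _
    set B : ℕ → List Q := fun n => π ++ (L n).1 with hB
    have hBmem : ∀ n, B n ∈ T := fun n => (good_mem _ (L n).2).1
    have hBlen : ∀ n, (B n).length = π.length + n := by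
      intro n; simp [hB, hlen]
    have hBmono : ∀ n m, n ≤ m → B n <+: B m := by
      intro n m hnm
      obtain ⟨t, ht⟩ := hmono n m hnm
      exact ⟨t, by simp [hB, ← ht]⟩
    have hπpos : 1 ≤ π.length := List.length_pos_iff.mpr hπne
    have hilt : ∀ i : ℕ, i < (B (i + 1)).length := by
      intro i; rw [hBlen]; omega
    set ξ : ℕ → Q := fun i => (B (i + 1)).getD i A.ι with hξ
    have hξget : ∀ i n (h : i < n), ξ i = (B n)[i]'(by rw [hBlen]; omega) := by
      intro i n h
      rw [hξ]
      simp only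
      rw [List.getD_eq_getElem _ _ (hilt i)]
      exact (hBmono (i + 1) n h).getElem (hilt i)
    have hbranch : InfBranch T ξ := by
      intro n
      have heq : (List.ofFn fun i : Fin (n + 1) => ξ i) = (B (n + 1)).take (n + 1) := by
        apply List.ext_getElem
        · rw [List.length_ofFn, List.length_take, hBlen]; omega
        · intro i h1 h2
          rw [List.getElem_ofFn, List.getElem_take]
          exact hξget i (n + 1) (by simpa using h1)
      rw [heq]
      refine hT.tree.prefix_closed _ (hBmem (n + 1)) _ (List.take_prefix _ _) ?_
      have : ((B (n + 1)).take (n + 1)).length = n + 1 := by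
        rw [List.length_take, hBlen]; omega
      intro h; rw [h] at this; simp at this
    obtain ⟨m, hm, hmem⟩ := hacc ξ hbranch π.length
    have : ξ m = (L (m + 1)).1[m - π.length]'(by rw [hlen]; omega) := by
      rw [hξget m (m + 1) (by omega)]
      exact List.getElem_append_right hm
    exact (good_mem _ (L (m + 1)).2).2 (ξ m) hmem (this ▸ List.getElem_mem _)
  · -- easy direction
    intro h ξ hξ n
    obtain ⟨k, hk⟩ := h _ (hξ n)
    set ψ : List Q := List.ofFn fun i : Fin (k + 1) => ξ (n + 1 + i) with hψ
    have hcat : (List.ofFn fun i : Fin (n + 1) => ξ i) ++ ψ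
        = List.ofFn fun i : Fin (n + k + 2) => ξ i := by
      apply List.ext_getElem
      · simp [hψ]; omega
      · intro i h1 h2
        rw [List.getElem_ofFn]
        rcases Nat.lt_or_ge i (n + 1) with hlt | hge
        · rw [List.getElem_append_left (by simpa using hlt), List.getElem_ofFn]
        · rw [List.getElem_append_right (by simpa using hge)]
          simp only [hψ, List.getElem_ofFn]
          congr 1
          simp only [List.length_ofFn] at h1 ⊢
          omega
    have hmem : (List.ofFn fun i : Fin (n + 1) => ξ i) ++ ψ ∈ T := by
      rw [hcat]
      have := hξ (n + k + 1)
      convert this using 2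
    obtain ⟨q, hqα, hqψ⟩ := hk ψ (by simp [hψ]) hmem (by simp [hψ])
    rw [hψ, List.mem_ofFn] at hqψ
    obtain ⟨i, rfl⟩ := hqψ
    exact ⟨n + 1 + i, by omega, hqα⟩
end

section
/- Let A be an alternating Büchi automaton, ≼_F a reflexive and transitive forward simulation on A such that A is ≼_F-unambiguous, ≼_B a reflexive and transitive backward simulation on A parametrised by ≼_F, ≼_M a mediated preorder induced by ≼_F and ≼_B, and A+ the automaton extended according to ≼_M. Then for every accepting run T of A+ on a word w ∈ Σ^ω, there exists an accepting run U of A on w. -/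
variable {σ Q : Type*}

/-- `A` is `≼_F`-unambiguous: no transition has two distinct forward-equivalent states
on its right-hand side. -/
def Unambiguous (A : ABA σ Q) (F : Q → Q → Prop) : Prop :=
  ∀ p a P, P ∈ A.δ p a → ∀ q ∈ P, ∀ r ∈ P, q ≠ r → ¬ (F q r ∧ F r q)

/-- `M` is a mediated preorder induced by the forward simulation `F` and the backward
simulation `B`: a preorder containing `F`, contained in `F ∘ B⁻¹` (existence of a
mediator), and forward extensible. -/
structure IsMediated (F B M : Q → Q → Prop) : Prop where
  refl : Reflexive M
  trans : Transitive M
  le_f : ∀ q r, F q r → M q r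
  mediator : ∀ q r, M q r → ∃ s, F q s ∧ B r s
  fwd_ext : ∀ q r s, M q r → F r s → M q s

/-- The automaton `A⁺` extended according to the mediated preorder `M`:
`δ⁺(q, a) = ⋃ {δ(p, a) | p ≼_M q}` and `α⁺ = {p | ∃ q ∈ α, q ≡_M p}`. -/
def extABA (A : ABA σ Q) (M : Q → Q → Prop) : ABA σ Q where
  ι := A.ι
  δ := fun q a => {P | ∃ p, M p q ∧ P ∈ A.δ p a}
  α := {p | ∃ q ∈ A.α, M q p ∧ M p q}


namespace Stmt16Aux

variable {σ Q : Type*}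

lemma length_sub_one_lt {α : Type*} {l : List α} (h : l ≠ []) : l.length - 1 < l.length :=
  Nat.sub_lt (List.length_pos_iff.mpr h) one_pos

lemma getLastD_eq_getElem {α : Type*} {l : List α} (h : l ≠ []) (x : α) :
    l.getLastD x = l[l.length - 1]'(length_sub_one_lt h) := by
  rw [List.getLastD_eq_getLast?, List.getLast?_eq_getLast h, Option.getD_some,
    List.getLast_eq_getElem]

lemma lastSt_eq_getElem (A : ABA σ Q) {l : List Q} (h : l ≠ []) :
    lastSt A l = l[l.length - 1]'(length_sub_one_lt h) := getLastD_eq_getElem h _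

lemma lastSt_cons (A : ABA σ Q) (r : Q) {l : List Q} (h : l ≠ []) :
    lastSt A (r :: l) = lastSt A l := by
  cases l with
  | nil => exact absurd rfl h
  | cons a t =>
    show (a :: t).getLastD r = (a :: t).getLastD A.ι
    rw [List.getLastD_cons, List.getLastD_cons]

lemma lastSt_concat (A : ABA σ Q) (l : List Q) (c : Q) : lastSt A (l ++ [c]) = c := by
  simp [lastSt]

lemma lastSt_singleton (A : ABA σ Q) (r : Q) : lastSt A [r] = r := rfl

/-- `Good A M w T d π E r` : `E` is a depth-`d` partial run of `A` with root label `r`,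
whose every level fully takes `A`-transitions, matching the `T`-node `π`, and whose
root-to-leaf paths are position-wise `α`-covering the `α⁺`-positions of corresponding
paths of `T` through `π`. -/
inductive Good (A : ABA σ Q) (M : Q → Q → Prop) (w : ℕ → σ) (T : Set (List Q)) :
    ℕ → List Q → Set (List Q) → Q → Prop
  | base {π : List Q} {r : Q} (hπ : π ∈ T)
      (hα : lastSt A π ∈ (extABA A M).α → r ∈ A.α) :
      Good A M w T 1 π {[r]} r
  | step {d : ℕ} {π : List Q} {r : Q} {R : Set Q} {cs : Q → Q} {Es : Q → Set (List Q)}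
      (hπ : π ∈ T) (hα : lastSt A π ∈ (extABA A M).α → r ∈ A.α)
      (hR : R ∈ A.δ r (w (π.length - 1)))
      (hcs : ∀ y ∈ R, π ++ [cs y] ∈ T)
      (hch : ∀ y ∈ R, Good A M w T (d + 1) (π ++ [cs y]) (Es y) y) :
      Good A M w T (d + 2) π ({[r]} ∪ ⋃ y ∈ R, (List.cons r) '' Es y) r

variable {A : ABA σ Q} {M : Q → Q → Prop} {w : ℕ → σ} {T : Set (List Q)}

lemma mem_step_iff {r : Q} {R : Set Q} {Es : Q → Set (List Q)} {ρ : List Q} :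
    ρ ∈ ({[r]} ∪ ⋃ y ∈ R, (List.cons r) '' Es y : Set (List Q)) ↔
      ρ = [r] ∨ ∃ y ∈ R, ∃ s ∈ Es y, ρ = r :: s := by
  constructor
  · rintro (h | h)
    · exact Or.inl h
    · simp only [Set.mem_iUnion, Set.mem_image] at h
      obtain ⟨y, hy, s, hs, rfl⟩ := h
      exact Or.inr ⟨y, hy, s, hs, rfl⟩
  · rintro (rfl | ⟨y, hy, s, hs, rfl⟩)
    · exact Or.inl rfl
    · exact Or.inr (by simp only [Set.mem_iUnion, Set.mem_image]; exact ⟨y, hy, s, hs, rfl⟩)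

lemma Good.pi_mem {d π E r} (h : Good A M w T d π E r) : π ∈ T := by
  cases h with
  | base hπ _ => exact hπ
  | step hπ _ _ _ _ => exact hπ

lemma Good.alpha {d π E r} (h : Good A M w T d π E r) :
    lastSt A π ∈ (extABA A M).α → r ∈ A.α := by
  cases h with
  | base _ hα => exact hα
  | step _ hα _ _ _ => exact hα

lemma Good.root_mem {d π E r} (h : Good A M w T d π E r) : [r] ∈ E := by
  cases h with
  | base _ _ => rfl
  | step _ _ _ _ _ => exact Or.inl rfl

lemma Good.root_uniq {d π E r} (h : Good A M w T d π E r) {q : Q} (hq : [q] ∈ E) : q = r := by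
  cases h with
  | base _ _ => simpa using hq
  | step _ _ _ _ _ =>
    rcases mem_step_iff.mp hq with h | ⟨y, _, s, _, hcons⟩
    · simpa using h
    · exact (List.cons.injEq _ _ _ _ ▸ hcons).1

lemma Good.nil_not_mem {d π E r} (h : Good A M w T d π E r) : [] ∉ E := by
  cases h with
  | base _ _ => simp
  | step _ _ _ _ _ =>
    intro hmem
    rcases mem_step_iff.mp hmem with h | ⟨y, _, s, _, hcons⟩
    · exact List.cons_ne_nil _ _ h.symm
    · exact List.cons_ne_nil _ _ hcons.symm

lemma Good.ne_nil {d π E r} (h : Good A M w T d π E r) {ρ : List Q} (hρ : ρ ∈ E) : ρ ≠ [] :=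
  fun hn => h.nil_not_mem (hn ▸ hρ)

lemma Good.prefix_closed {d π E r} (h : Good A M w T d π E r) :
    ∀ ρ ∈ E, ∀ s : List Q, s <+: ρ → s ≠ [] → s ∈ E := by
  induction h with
  | base hπ hα =>
    intro ρ hρ s hs hsne
    rcases hρ with rfl
    rcases hs with ⟨t, ht⟩
    cases s with
    | nil => exact absurd rfl hsne
    | cons a s' =>
      simp only [List.cons_append] at ht
      obtain ⟨rfl, ht'⟩ := List.cons.inj ht
      have : s' = [] := by
        cases s' with
        | nil => rfl
        | cons b s'' => simp at ht'
      subst this; rfl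
  | @step d' π' r' R' cs' Es' hπ hα hR hcs hch ih =>
    intro ρ hρ s hs hsne
    rcases mem_step_iff.mp hρ with rfl | ⟨y, hy, u, hu, rfl⟩
    · rcases hs with ⟨t, ht⟩
      cases s with
      | nil => exact absurd rfl hsne
      | cons a s' =>
        simp only [List.cons_append] at ht
        obtain ⟨rfl, ht'⟩ := List.cons.inj ht
        have : s' = [] := by
          cases s' with
          | nil => rfl
          | cons b s'' => simp at ht'
        subst this; exact Or.inl rfl
    · cases s with
      | nil => exact absurd rfl hsne
      | cons b s' =>
        rw [List.cons_prefix_cons] at hs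
        obtain ⟨rfl, hs'⟩ := hs
        rcases eq_or_ne s' [] with h' | h'
        · subst h'; exact Or.inl rfl
        · have : s' ∈ Es' y := ih y hy u hu s' hs' h'
          exact mem_step_iff.mpr (Or.inr ⟨y, hy, s', this, rfl⟩)

lemma Good.len_le {d π E r} (h : Good A M w T d π E r) : ∀ ρ ∈ E, ρ.length ≤ d := by
  induction h with
  | base hπ hα => intro ρ hρ; rcases hρ with rfl; simp
  | @step d' π' r' R' cs' Es' hπ hα hR hcs hch ih =>
    intro ρ hρ
    rcases mem_step_iff.mp hρ with rfl | ⟨y, hy, u, hu, rfl⟩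
    · simp
    · have := ih y hy u hu
      simp only [List.length_cons]
      omega

end Stmt16Aux

namespace Stmt16Aux

variable {σ Q : Type*} {A : ABA σ Q} {M : Q → Q → Prop} {w : ℕ → σ} {T : Set (List Q)}
variable {F : Q → Q → Prop}

lemma gi {α : Type*} (l : List α) {i j : ℕ} (hij : i = j) {hi : i < l.length} :
    l[i]'hi = l[j]'(hij ▸ hi) := by subst hij; rfl

lemma head_determined {R : Set Q} {Es : Q → Set (List Q)} {cs : Q → Q} {d : ℕ} {π : List Q}
    (hch : ∀ y ∈ R, Good A M w T (d + 1) (π ++ [cs y]) (Es y) y)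
    {y y' : Q} (hy : y ∈ R) (hy' : y' ∈ R) {s : List Q} (hs : s ∈ Es y) (hs' : s ∈ Es y') :
    y = y' := by
  have hne : s ≠ [] := (hch y hy).ne_nil hs
  cases s with
  | nil => exact absurd rfl hne
  | cons a t =>
    have h1 : [a] ∈ Es y := (hch y hy).prefix_closed _ hs [a] ⟨t, rfl⟩ (by simp)
    have h2 : [a] ∈ Es y' := (hch y' hy').prefix_closed _ hs' [a] ⟨t, rfl⟩ (by simp)
    rw [← (hch y hy).root_uniq h1, ← (hch y' hy').root_uniq h2]

lemma succs_step_root {r : Q} {R : Set Q} {Es : Q → Set (List Q)} {cs : Q → Q} {d : ℕ}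
    {π : List Q} (hch : ∀ y ∈ R, Good A M w T (d + 1) (π ++ [cs y]) (Es y) y) :
    succs ({[r]} ∪ ⋃ y ∈ R, (List.cons r) '' Es y) [r] = R := by
  ext q
  constructor
  · intro hq
    have hq' : [r] ++ [q] ∈ ({[r]} ∪ ⋃ y ∈ R, (List.cons r) '' Es y : Set (List Q)) := hq
    rcases mem_step_iff.mp hq' with h | ⟨y, hy, s, hs, hcons⟩
    · simp at h
    · have : s = [q] := (List.cons.inj hcons).2.symm
      subst this
      rwa [(hch y hy).root_uniq hs]
  · intro hq
    have : [r] ++ [q] ∈ ({[r]} ∪ ⋃ y ∈ R, (List.cons r) '' Es y : Set (List Q)) :=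
      mem_step_iff.mpr (Or.inr ⟨q, hq, [q], (hch q hq).root_mem, rfl⟩)
    exact this

lemma succs_step_deep {r : Q} {R : Set Q} {Es : Q → Set (List Q)} {cs : Q → Q} {d : ℕ}
    {π : List Q} (hch : ∀ y ∈ R, Good A M w T (d + 1) (π ++ [cs y]) (Es y) y)
    {y₀ : Q} (hy₀ : y₀ ∈ R) {s : List Q} (hs : s ∈ Es y₀) :
    succs ({[r]} ∪ ⋃ y ∈ R, (List.cons r) '' Es y) (r :: s) = succs (Es y₀) s := by
  have hsne : s ≠ [] := (hch y₀ hy₀).ne_nil hs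
  ext q
  constructor
  · intro hq
    have hq' : (r :: s) ++ [q] ∈ ({[r]} ∪ ⋃ y ∈ R, (List.cons r) '' Es y : Set (List Q)) := hq
    rw [List.cons_append] at hq'
    rcases mem_step_iff.mp hq' with h | ⟨y, hy, u, hu, hcons⟩
    · exact absurd (List.cons.inj h).2 (by simp)
    · have hu' : u = s ++ [q] := (List.cons.inj hcons).2.symm
      subst hu'
      have hsy : s ∈ Es y := (hch y hy).prefix_closed _ hu s ⟨[q], rfl⟩ hsne
      have : y = y₀ := head_determined hch hy hy₀ hsy hs
      subst this
      exact hu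
  · intro hq
    have : (r :: s) ++ [q] ∈ ({[r]} ∪ ⋃ y ∈ R, (List.cons r) '' Es y : Set (List Q)) := by
      rw [List.cons_append]
      exact mem_step_iff.mpr (Or.inr ⟨y₀, hy₀, s ++ [q], hq, rfl⟩)
    exact this

lemma Good.trans_mem (hTn : ([] : List Q) ∉ T) {d π E r} (h : Good A M w T d π E r) :
    ∀ ρ ∈ E, ρ.length < d →
      succs E ρ ∈ A.δ (lastSt A ρ) (w (π.length - 1 + (ρ.length - 1))) := by
  induction h with
  | base hπ hα =>
    intro ρ hρ hlen
    rcases hρ with rfl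
    simp at hlen
  | @step d' π' r' R' cs' Es' hπ hα hR hcs hch ih =>
    intro ρ hρ hlen
    have hπne : π' ≠ [] := fun hn => hTn (hn ▸ hπ)
    have hπpos : 1 ≤ π'.length := List.length_pos_iff.mpr hπne
    rcases mem_step_iff.mp hρ with rfl | ⟨y, hy, u, hu, rfl⟩
    · rw [succs_step_root hch]
      simpa [lastSt_singleton] using hR
    · have hune : u ≠ [] := (hch y hy).ne_nil hu
      have hupos : 1 ≤ u.length := List.length_pos_iff.mpr hune
      rw [succs_step_deep hch hy hu, lastSt_cons _ _ hune]
      have hlt : u.length < d' + 1 := by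
        have : (r' :: u).length = u.length + 1 := by simp
        omega
      have hmem := ih y hy u hu hlt
      have harith : (π' ++ [cs' y]).length - 1 + (u.length - 1)
          = π'.length - 1 + ((r' :: u).length - 1) := by
        have h1 : (π' ++ [cs' y]).length = π'.length + 1 := by simp
        have h2 : (r' :: u).length = u.length + 1 := by simp
        omega
      rwa [harith] at hmem

lemma Good.extend_to_leaf (hne : A.NoEmpty) {d π E r}
    (h : Good A M w T d π E r) :
    ∀ ρ ∈ E, ∃ ρ', ρ <+: ρ' ∧ ρ' ∈ E ∧ ρ'.length = d := by
  induction h with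
  | base hπ hα =>
    intro ρ hρ; rcases hρ with rfl
    exact ⟨[_], List.prefix_refl _, rfl, rfl⟩
  | @step d' π' r' R' cs' Es' hπ hα hR hcs hch ih =>
    intro ρ hρ
    rcases mem_step_iff.mp hρ with rfl | ⟨y, hy, u, hu, rfl⟩
    · have hRne : R'.Nonempty := by
        rcases Set.eq_empty_or_nonempty R' with h' | h'
        · exact absurd (h' ▸ hR) (hne _ _)
        · exact h'
      obtain ⟨y, hy⟩ := hRne
      obtain ⟨u', hpre, hu', hlen⟩ := ih y hy [y] (hch y hy).root_mem
      refine ⟨r' :: u', ⟨u', by simp⟩, ?_, by simp [hlen]⟩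
      exact mem_step_iff.mpr (Or.inr ⟨y, hy, u', hu', rfl⟩)
    · obtain ⟨u', hpre, hu', hlen⟩ := ih y hy u hu
      refine ⟨r' :: u', ?_, mem_step_iff.mpr (Or.inr ⟨y, hy, u', hu', rfl⟩), by simp [hlen]⟩
      rw [List.cons_prefix_cons]; exact ⟨rfl, hpre⟩

lemma Good.leafcond (hTn : ([] : List Q) ∉ T) {d π E r} (h : Good A M w T d π E r) :
    ∀ ρ ∈ E, ρ.length = d → ∃ τ, τ ∈ T ∧ τ.length = π.length - 1 + d ∧ π <+: τ ∧
      ∀ (i : ℕ) (h1 : π.length - 1 + i < τ.length) (h2 : i < ρ.length),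
        τ[π.length - 1 + i] ∈ (extABA A M).α → ρ[i] ∈ A.α := by
  induction h with
  | @base π' r' hπ hα =>
    intro ρ hρ hlen
    rcases hρ with rfl
    have hπne : π' ≠ [] := fun hn => hTn (hn ▸ hπ)
    have hπpos : 1 ≤ π'.length := List.length_pos_iff.mpr hπne
    refine ⟨π', hπ, by omega, List.prefix_refl _, ?_⟩
    intro i h1 h2 hmem
    have hi0 : i = 0 := by
      have : ([r'] : List Q).length = 1 := rfl
      omega
    subst hi0
    have hget : π'[π'.length - 1 + 0]'h1 = lastSt A π' := by
      rw [lastSt_eq_getElem A hπne]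
      exact gi π' (by omega)
    rw [hget] at hmem
    simpa using hα hmem
  | @step d' π' r' R' cs' Es' hπ hα hR hcs hch ih =>
    intro ρ hρ hlen
    have hπne : π' ≠ [] := fun hn => hTn (hn ▸ hπ)
    have hπpos : 1 ≤ π'.length := List.length_pos_iff.mpr hπne
    rcases mem_step_iff.mp hρ with rfl | ⟨y, hy, u, hu, rfl⟩
    · exfalso
      have : ([r'] : List Q).length = 1 := rfl
      omega
    · have hulen : u.length = d' + 1 := by
        have : (r' :: u).length = u.length + 1 := by simp
        omega
      obtain ⟨τ, hτT, hτlen, hτpre, hτ⟩ := ih y hy u hu hulen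
      have hπclen : (π' ++ [cs' y]).length = π'.length + 1 := by simp
      have hππ : π' <+: τ := (List.prefix_append _ _).trans hτpre
      refine ⟨τ, hτT, by omega, hππ, ?_⟩
      intro i h1 h2 hmem
      cases i with
      | zero =>
        have hb : π'.length - 1 < π'.length := by omega
        have hget : τ[π'.length - 1 + 0]'h1 = lastSt A π' := by
          have e1 : τ[π'.length - 1 + 0]'h1 = τ[π'.length - 1]'(by omega) := gi τ (by omega)
          rw [e1, ← hππ.getElem hb, lastSt_eq_getElem A hπne]
        rw [hget] at hmem
        simpa using hα hmem
      | succ j =>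
        have h2' : j < u.length := by
          have : (r' :: u).length = u.length + 1 := by simp
          omega
        have h1' : (π' ++ [cs' y]).length - 1 + j < τ.length := by omega
        have harith : π'.length - 1 + (j + 1) = (π' ++ [cs' y]).length - 1 + j := by omega
        have hmem' : τ[(π' ++ [cs' y]).length - 1 + j]'h1' ∈ (extABA A M).α := by
          rw [← gi τ harith]; exact hmem
        have := hτ j h1' h2' hmem'
        simpa using this

lemma Good.flift (hF : ForwardSim A F) {d π E x} (h : Good A M w T d π E x) :
    ∀ x', F x x' → ∃ E', Good A M w T d π E' x' := by
  induction h with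
  | @base π' r' hπ hα =>
    intro x' hxx'
    exact ⟨{[x']}, Good.base hπ (fun hm => (hF _ _ hxx').1 (hα hm))⟩
  | @step d' π' r' R' cs' Es' hπ hα hR hcs hch ih =>
    intro x' hxx'
    obtain ⟨R2, hR2, hcov⟩ := (hF _ _ hxx').2 _ _ hR
    have hex : ∀ y' : Q, ∃ (c : Q) (E' : Set (List Q)), y' ∈ R2 →
        (π' ++ [c] ∈ T ∧ Good A M w T (d' + 1) (π' ++ [c]) E' y') := by
      intro y'
      by_cases hy' : y' ∈ R2
      · obtain ⟨y, hy, hyy'⟩ := hcov y' hy'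
        obtain ⟨E', hE'⟩ := ih y hy y' hyy'
        exact ⟨cs' y, E', fun _ => ⟨hcs y hy, hE'⟩⟩
      · exact ⟨cs' r', ∅, fun hmem => absurd hmem hy'⟩
    choose cs2 Es2 hEs2 using hex
    exact ⟨{[x']} ∪ ⋃ y ∈ R2, (List.cons x') '' Es2 y,
      Good.step hπ (fun hm => (hF _ _ hxx').1 (hα hm)) hR2
        (fun y hy => (hEs2 y hy).1) (fun y hy => (hEs2 y hy).2)⟩

end Stmt16Aux

namespace Stmt16Aux

variable {σ Q : Type*} {A : ABA σ Q} {M : Q → Q → Prop} {w : ℕ → σ} {T : Set (List Q)}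
variable {F B : Q → Q → Prop}

/-- Number of states forward-simulating `x` (including `x`): a height function. -/
noncomputable def htF (F : Q → Q → Prop) (x : Q) : ℕ := Set.ncard {t | F x t}

lemma htF_mono [Finite Q] (hFt : Transitive F) {x y : Q} (hxy : F x y) : htF F y ≤ htF F x :=
  Set.ncard_le_ncard (fun t ht => hFt hxy ht) (Set.toFinite _)

lemma htF_pos [Finite Q] (hFr : Reflexive F) (x : Q) : 0 < htF F x := by
  rw [htF, Set.ncard_pos (Set.toFinite _)]
  exact ⟨x, hFr x⟩

lemma F_of_htF_eq [Finite Q] (hFr : Reflexive F) (hFt : Transitive F) {x y : Q}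
    (hxy : F x y) (heq : htF F x = htF F y) : F y x := by
  have hsub : {t | F y t} ⊆ {t | F x t} := fun t ht => hFt hxy ht
  have := Set.eq_of_subset_of_ncard_le hsub (le_of_eq heq) (Set.toFinite _)
  have hx : x ∈ {t | F x t} := hFr x
  rw [← this] at hx
  exact hx

/-- The key decreasing-潜在 lemma for the replacement loop. -/
lemma sum_lt [Finite Q] (hFr : Reflexive F) (hFt : Transitive F) (hunamb : Unambiguous A F)
    {a : σ} {s₂ : Q} {X' : Set Q} (hX' : X' ∈ A.δ s₂ a)
    {Znew Zold : Finset Q} (hZnew : ∀ y ∈ Znew, y ∈ X')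
    {z : Q} (hz : z ∈ Zold) (hmax : ∀ x ∈ Zold, htF F x ≤ htF F z)
    (g : Q → Q) (hg : ∀ y ∈ Znew, g y ∈ Zold ∧ g y ≠ z ∧ F (g y) y)
    (nq : ℕ) (hnq : Znew.card ≤ nq) :
    ∑ y ∈ Znew, (nq + 2) ^ htF F y < ∑ x ∈ Zold, (nq + 2) ^ htF F x := by
  classical
  set BQ := nq + 2 with hBQ
  set D := htF F z with hD
  have hD1 : 1 ≤ D := htF_pos hFr z
  -- split Znew by whether height is preserved
  have hsplit := Finset.sum_filter_add_sum_filter_not Znew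
    (fun y => htF F y = htF F (g y)) (fun y => BQ ^ htF F y)
  set Ze := Znew.filter (fun y => htF F y = htF F (g y)) with hZe
  set Zl := Znew.filter (fun y => ¬ htF F y = htF F (g y)) with hZl
  -- on Ze, g is injective
  have hinj : ∀ y ∈ Ze, ∀ y' ∈ Ze, g y = g y' → y = y' := by
    intro y hy y' hy' hgy
    simp only [hZe, Finset.mem_filter] at hy hy'
    obtain ⟨hyZ, hyht⟩ := hy
    obtain ⟨hy'Z, hy'ht⟩ := hy'
    by_contra hne
    have h1 : F (g y) y := (hg y hyZ).2.2
    have h2 : F (g y') y' := (hg y' hy'Z).2.2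
    have hb1 : F y (g y) := F_of_htF_eq hFr hFt h1 hyht.symm
    have hb2 : F y' (g y') := F_of_htF_eq hFr hFt h2 hy'ht.symm
    have hyy' : F y y' := hFt hb1 (hgy ▸ h2)
    have hy'y : F y' y := hFt hb2 (hgy ▸ h1)
    exact hunamb _ _ _ hX' y (hZnew y hyZ) y' (hZnew y' hy'Z) hne ⟨hyy', hy'y⟩
  have hZesum : ∑ y ∈ Ze, BQ ^ htF F y ≤ ∑ x ∈ Zold.erase z, BQ ^ htF F x := by
    have h1 : ∑ y ∈ Ze, BQ ^ htF F y = ∑ y ∈ Ze, BQ ^ htF F (g y) := by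
      apply Finset.sum_congr rfl
      intro y hy
      simp only [hZe, Finset.mem_filter] at hy
      rw [hy.2]
    rw [h1, ← Finset.sum_image (f := fun x => BQ ^ htF F x) hinj]
    apply Finset.sum_le_sum_of_subset
    intro x hx
    simp only [Finset.mem_image] at hx
    obtain ⟨y, hy, rfl⟩ := hx
    simp only [hZe, Finset.mem_filter] at hy
    exact Finset.mem_erase.mpr ⟨(hg y hy.1).2.1, (hg y hy.1).1⟩
  have hZlsum : ∑ y ∈ Zl, BQ ^ htF F y ≤ nq * BQ ^ (D - 1) := by
    have hle : ∀ y ∈ Zl, BQ ^ htF F y ≤ BQ ^ (D - 1) := by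
      intro y hy
      simp only [hZl, Finset.mem_filter] at hy
      obtain ⟨hyZ, hyne⟩ := hy
      have h1 : F (g y) y := (hg y hyZ).2.2
      have h2 : htF F y ≤ htF F (g y) := htF_mono hFt h1
      have h3 : htF F (g y) ≤ D := hmax _ (hg y hyZ).1
      have : htF F y ≤ D - 1 := by omega
      exact Nat.pow_le_pow_right (by omega) this
    calc ∑ y ∈ Zl, BQ ^ htF F y ≤ Zl.card • BQ ^ (D - 1) :=
          Finset.sum_le_card_nsmul _ _ _ hle
      _ = Zl.card * BQ ^ (D - 1) := by rw [smul_eq_mul]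
      _ ≤ nq * BQ ^ (D - 1) := by
          apply Nat.mul_le_mul_right
          calc Zl.card ≤ Znew.card := Finset.card_le_card (Finset.filter_subset _ _)
            _ ≤ nq := hnq
  have hstrict : nq * BQ ^ (D - 1) < BQ ^ D := by
    have : BQ ^ D = BQ ^ (D - 1) * BQ := by
      rw [← pow_succ]
      congr 1
      omega
    rw [this]
    have hpow : 0 < BQ ^ (D - 1) := Nat.pow_pos (by omega)
    calc nq * BQ ^ (D - 1) < BQ * BQ ^ (D - 1) :=
          (Nat.mul_lt_mul_right hpow).mpr (by omega)
      _ = BQ ^ (D - 1) * BQ := Nat.mul_comm _ _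
  calc ∑ y ∈ Znew, BQ ^ htF F y = ∑ y ∈ Ze, BQ ^ htF F y + ∑ y ∈ Zl, BQ ^ htF F y := hsplit.symm
    _ ≤ ∑ x ∈ Zold.erase z, BQ ^ htF F x + nq * BQ ^ (D - 1) :=
        Nat.add_le_add hZesum hZlsum
    _ < ∑ x ∈ Zold.erase z, BQ ^ htF F x + BQ ^ D := by omega
    _ = BQ ^ D + ∑ x ∈ Zold.erase z, BQ ^ htF F x := Nat.add_comm _ _
    _ = ∑ x ∈ Zold, BQ ^ htF F x := by rw [hD]; exact Finset.add_sum_erase Zold (fun x => BQ ^ htF F x) hz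

end Stmt16Aux

namespace Stmt16Aux

variable {σ Q : Type*} {A : ABA σ Q} {M : Q → Q → Prop} {w : ℕ → σ} {T : Set (List Q)}
variable {F B : Q → Q → Prop}

/-- `z` has a good tree below the `T`-node `π` (for some child of `π`). -/
def HasT (A : ABA σ Q) (M : Q → Q → Prop) (w : ℕ → σ) (T : Set (List Q))
    (d : ℕ) (π : List Q) (z : Q) : Prop :=
  ∃ c E, π ++ [c] ∈ T ∧ Good A M w T (d + 1) (π ++ [c]) E z

open Classical in
noncomputable def pendF [Finite Q] (A : ABA σ Q) (M : Q → Q → Prop) (w : ℕ → σ)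
    (T : Set (List Q)) (d : ℕ) (π : List Q) (X : Set Q) : Finset Q :=
  (Set.toFinite {u ∈ X | ¬ HasT A M w T d π u}).toFinset

lemma mem_pendF [Finite Q] {d : ℕ} {π : List Q} {X : Set Q} {x : Q} :
    x ∈ pendF A M w T d π X ↔ x ∈ X ∧ ¬ HasT A M w T d π x := by
  classical
  rw [pendF, Set.Finite.mem_toFinset]
  rfl

noncomputable def pot [Finite Q] (A : ABA σ Q) (M : Q → Q → Prop) (w : ℕ → σ)
    (T : Set (List Q)) (F : Q → Q → Prop) (d : ℕ) (π : List Q) (X : Set Q) : ℕ :=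
  ∑ x ∈ pendF A M w T d π X, (Nat.card Q + 2) ^ htF F x

lemma loopLemma [Finite Q] (hF : ForwardSim A F) (hFr : Reflexive F) (hFt : Transitive F)
    (hunamb : Unambiguous A F) (hB : BackwardSim A F B) (hBr : Reflexive B)
    (hBt : Transitive B) {d : ℕ} {π : List Q} {a : σ}
    (hIH : ∀ z, (∃ c, π ++ [c] ∈ T ∧ F c z) → ∃ r, B z r ∧ HasT A M w T d π r) :
    ∀ (N : ℕ) (s : Q) (X : Set Q), X ∈ A.δ s a →
      (∀ z ∈ X, HasT A M w T d π z ∨ ∃ c, π ++ [c] ∈ T ∧ F c z) →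
      pot A M w T F d π X ≤ N →
      ∃ s' X', B s s' ∧ (s ∈ A.α → s' ∈ A.α) ∧ X' ∈ A.δ s' a ∧
        ∀ z ∈ X', HasT A M w T d π z := by
  intro N
  induction N using Nat.strong_induction_on with
  | _ N IHN =>
  intro s X hX hmem hpot
  by_cases hall : ∀ z ∈ X, HasT A M w T d π z
  · exact ⟨s, X, hBr s, id, hX, hall⟩
  · push_neg at hall
    obtain ⟨z0, hz0X, hz0n⟩ := hall
    have hPne : (pendF A M w T d π X).Nonempty := ⟨z0, mem_pendF.mpr ⟨hz0X, hz0n⟩⟩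
    obtain ⟨z, hzP, hzmax⟩ := Finset.exists_max_image (pendF A M w T d π X) (htF F) hPne
    have hzX : z ∈ X := (mem_pendF.mp hzP).1
    have hzn : ¬ HasT A M w T d π z := (mem_pendF.mp hzP).2
    have hzpend : ∃ c, π ++ [c] ∈ T ∧ F c z := (hmem z hzX).resolve_left hzn
    obtain ⟨rz, hBzrz, hHrz⟩ := hIH z hzpend
    have hzX' : z ∉ X \ {z} := by simp
    have hX2 : insert z (X \ {z}) ∈ A.δ s a := by
      rw [Set.insert_diff_singleton, Set.insert_eq_self.mpr hzX]
      exact hX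
    obtain ⟨s₂, R₂, hrzR₂, hins₂, hBss₂, hcov⟩ := (hB z rz hBzrz).2.2 a s (X \ {z}) hzX' hX2
    have hmem' : ∀ u ∈ insert rz R₂, HasT A M w T d π u ∨ ∃ c, π ++ [c] ∈ T ∧ F c u := by
      intro u hu
      rcases Set.mem_insert_iff.mp hu with rfl | huR
      · exact Or.inl hHrz
      · obtain ⟨x, hxX, hFxu⟩ := hcov u huR
        by_cases hx : HasT A M w T d π x
        · obtain ⟨c, E, hcT, hG⟩ := hx
          obtain ⟨E', hG'⟩ := hG.flift hF u hFxu
          exact Or.inl ⟨c, E', hcT, hG'⟩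
        · obtain ⟨c, hcT, hFcx⟩ := (hmem x hxX.1).resolve_left hx
          exact Or.inr ⟨c, hcT, hFt hFcx hFxu⟩
    have hwit : ∀ y, ∃ x, y ∈ pendF A M w T d π (insert rz R₂) →
        ((x ∈ pendF A M w T d π X ∧ x ≠ z) ∧ F x y) := by
      intro y
      by_cases hy : y ∈ pendF A M w T d π (insert rz R₂)
      · have hyX' := (mem_pendF.mp hy).1
        have hyn := (mem_pendF.mp hy).2
        have hyR : y ∈ R₂ := by
          rcases Set.mem_insert_iff.mp hyX' with rfl | h
          · exact absurd hHrz hyn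
          · exact h
        obtain ⟨x, hxX, hFxy⟩ := hcov y hyR
        have hxn : ¬ HasT A M w T d π x := by
          intro hx
          obtain ⟨c, E, hcT, hG⟩ := hx
          obtain ⟨E', hG'⟩ := hG.flift hF y hFxy
          exact hyn ⟨c, E', hcT, hG'⟩
        exact ⟨x, fun _ => ⟨⟨mem_pendF.mpr ⟨hxX.1, hxn⟩, hxX.2⟩, hFxy⟩⟩
      · exact ⟨z, fun h => absurd h hy⟩
    choose g hg using hwit
    have hdec : pot A M w T F d π (insert rz R₂) < pot A M w T F d π X := by
      have hcard : (pendF A M w T d π (insert rz R₂)).card ≤ Nat.card Q := by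
        have := Fintype.ofFinite Q
        simpa [Nat.card_eq_fintype_card] using
          Finset.card_le_univ (pendF A M w T d π (insert rz R₂))
      exact sum_lt hFr hFt hunamb hins₂
        (fun y hy => (mem_pendF.mp hy).1) hzP hzmax g
        (fun y hy => by
          obtain ⟨⟨h1, h2⟩, h3⟩ := hg y hy
          exact ⟨h1, h2, h3⟩)
        (Nat.card Q) hcard
    have hlt : pot A M w T F d π (insert rz R₂) < N := lt_of_lt_of_le hdec hpot
    obtain ⟨s₃, X₃, hBs₂s₃, hα₂₃, hX₃, hall₃⟩ :=
      IHN _ hlt s₂ (insert rz R₂) hins₂ hmem' le_rfl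
    exact ⟨s₃, X₃, hBt hBss₂ hBs₂s₃,
      fun hs => hα₂₃ ((hB s s₂ hBss₂).2.1 hs), hX₃, hall₃⟩

lemma superlemma [Finite Q] (hne : A.NoEmpty) (hF : ForwardSim A F) (hFr : Reflexive F)
    (hFt : Transitive F) (hunamb : Unambiguous A F) (hB : BackwardSim A F B)
    (hBr : Reflexive B) (hBt : Transitive B) (hM : IsMediated F B M)
    (hT : IsRun (extABA A M) w T) :
    ∀ (d : ℕ) (π : List Q), π ∈ T → ∀ y, M (lastSt A π) y →
      ∃ r E, B y r ∧ Good A M w T (d + 1) π E r := by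
  intro d
  induction d with
  | zero =>
    intro π hπ y hMqy
    by_cases hq : lastSt A π ∈ (extABA A M).α
    · obtain ⟨x, hxα, hMxq, hMqx⟩ := hq
      obtain ⟨t, hFxt, hByt⟩ := hM.mediator x y (hM.trans hMxq hMqy)
      exact ⟨t, {[t]}, hByt, Good.base hπ (fun _ => (hF x t hFxt).1 hxα)⟩
    · exact ⟨y, {[y]}, hBr y, Good.base hπ (fun h => absurd h hq)⟩
  | succ d IHd =>
    intro π hπ y hMqy
    have hstep' : succs T π ∈ (extABA A M).δ (lastSt A π) (w (π.length - 1)) := hT.step π hπ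
    obtain ⟨p, hMpq, hPT⟩ := hstep'
    have hstage : ∃ y₁, B y y₁ ∧ (lastSt A π ∈ (extABA A M).α → y₁ ∈ A.α) ∧ M p y₁ := by
      by_cases hqα : lastSt A π ∈ (extABA A M).α
      · obtain ⟨x, hxα, hMxq, hMqx⟩ := hqα
        obtain ⟨t, hFxt, hByt⟩ := hM.mediator x y (hM.trans hMxq hMqy)
        exact ⟨t, hByt, fun _ => (hF x t hFxt).1 hxα,
          hM.fwd_ext _ _ _ (hM.trans hMpq hMqx) hFxt⟩
      · exact ⟨y, hBr y, fun h => absurd h hqα, hM.trans hMpq hMqy⟩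
    obtain ⟨y₁, hBy₁, hα₁, hMpy₁⟩ := hstage
    obtain ⟨s, hFps, hBy₁s⟩ := hM.mediator p y₁ hMpy₁
    obtain ⟨R, hR, hcov⟩ := (hF p s hFps).2 (w (π.length - 1)) _ hPT
    have hIH' : ∀ z, (∃ c, π ++ [c] ∈ T ∧ F c z) → ∃ r, B z r ∧ HasT A M w T d π r := by
      rintro z ⟨c, hcT, hFcz⟩
      have hMcz : M (lastSt A (π ++ [c])) z := by
        rw [lastSt_concat]; exact hM.le_f _ _ hFcz
      obtain ⟨r, E, hBzr, hG⟩ := IHd (π ++ [c]) hcT z hMcz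
      exact ⟨r, hBzr, c, E, hcT, hG⟩
    have hmem0 : ∀ z ∈ R, HasT A M w T d π z ∨ ∃ c, π ++ [c] ∈ T ∧ F c z := by
      intro z hz
      obtain ⟨c, hcP, hFcz⟩ := hcov z hz
      exact Or.inr ⟨c, hcP, hFcz⟩
    obtain ⟨s', X', hBss', hαss', hX', hall⟩ :=
      loopLemma hF hFr hFt hunamb hB hBr hBt hIH' (pot A M w T F d π R) s R hR hmem0 le_rfl
    have hex : ∀ y' : Q, ∃ (c : Q) (E' : Set (List Q)), y' ∈ X' →
        (π ++ [c] ∈ T ∧ Good A M w T (d + 1) (π ++ [c]) E' y') := by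
      intro y'
      by_cases h : y' ∈ X'
      · obtain ⟨c, E', hcT, hG⟩ := hall y' h
        exact ⟨c, E', fun _ => ⟨hcT, hG⟩⟩
      · exact ⟨p, ∅, fun hm => absurd hm h⟩
    choose cs2 Es2 hEs2 using hex
    refine ⟨s', {[s']} ∪ ⋃ y' ∈ X', (List.cons s') '' Es2 y',
      hBt (hBt hBy₁ hBy₁s) hBss', ?_⟩
    exact Good.step hπ (fun hm => hαss' ((hB y₁ s hBy₁s).2.1 (hα₁ hm))) hX'
      (fun y' hy' => (hEs2 y' hy').1) (fun y' hy' => (hEs2 y' hy').2)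

end Stmt16Aux

namespace Stmt16Aux

variable {σ Q : Type*}

lemma ultra_pigeon {β : Type*} [Finite β] (𝒰 : Ultrafilter ℕ) (f : ℕ → β) :
    ∃ b, {n | f n = b} ∈ 𝒰 := by
  by_contra h
  push_neg at h
  have hcompl : ∀ b, {n | f n = b}ᶜ ∈ 𝒰 := fun b => Ultrafilter.compl_mem_iff_notMem.mpr (h b)
  have hcompl' : ∀ b, {n | f n = b}ᶜ ∈ (𝒰 : Filter ℕ) := fun b => hcompl b
  have hint : (⋂ b, {n | f n = b}ᶜ) ∈ (𝒰 : Filter ℕ) := Filter.iInter_mem.mpr hcompl'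
  have hempty : (⋂ b, {n | f n = b}ᶜ) = (∅ : Set ℕ) := by
    ext n
    simp only [Set.mem_iInter, Set.mem_compl_iff, Set.mem_setOf_eq, Set.mem_empty_iff_false,
      iff_false, not_forall, not_not]
    exact ⟨f n, rfl⟩
  rw [hempty] at hint
  exact Filter.empty_notMem _ hint

lemma koenig [Finite Q] {G : Set (List Q)}
    (hpc : ∀ ρ ∈ G, ∀ s : List Q, s <+: ρ → s ≠ [] → s ∈ G)
    (hroot : ∀ q q' : Q, [q] ∈ G → [q'] ∈ G → q = q')
    (hlen : ∀ k : ℕ, 1 ≤ k → ∃ ρ ∈ G, ρ.length = k) :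
    ∃ ξ : ℕ → Q, ∀ n : ℕ, (List.ofFn fun i : Fin (n + 1) => ξ i) ∈ G := by
  classical
  have hFQ := Fintype.ofFinite Q
  set Gd : List Q → Prop := fun π => ∀ k, π.length ≤ k → ∃ τ ∈ G, π <+: τ ∧ τ.length = k
    with hGd
  -- extension step
  have hext : ∀ π : List Q, π ∈ G → Gd π → ∃ q, (π ++ [q]) ∈ G ∧ Gd (π ++ [q]) := by
    intro π hπG hπGd
    by_contra hno
    push_neg at hno
    have hbad : ∀ q : Q, ∃ k : ℕ, (π ++ [q]) ∈ G →
        ((π ++ [q]).length ≤ k ∧ ∀ τ ∈ G, (π ++ [q]) <+: τ → τ.length ≠ k) := by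
      intro q
      by_cases hq : (π ++ [q]) ∈ G
      · have this2 : ¬ ∀ k, (π ++ [q]).length ≤ k →
            ∃ τ ∈ G, (π ++ [q]) <+: τ ∧ τ.length = k := hno q hq
        push_neg at this2
        obtain ⟨k, hk1, hk2⟩ := this2
        exact ⟨k, fun _ => ⟨hk1, hk2⟩⟩
      · exact ⟨0, fun h => absurd h hq⟩
    choose f hf using hbad
    set K := (Finset.univ.sup f) + π.length + 1 with hK
    obtain ⟨τ, hτG, hτpre, hτlen⟩ := hπGd K (by omega)
    have hπlt : π.length < τ.length := by omega
    set q : Q := τ[π.length]'hπlt with hqdef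
    have hπeq : π = τ.take π.length := List.prefix_iff_eq_take.mp hτpre
    have htake : π ++ [q] = τ.take (π.length + 1) := by
      rw [List.take_succ, List.getElem?_eq_getElem hπlt]
      rw [← hπeq]
      rfl
    have hqG : (π ++ [q]) ∈ G := by
      rw [htake]
      exact hpc τ hτG _ (List.take_prefix _ _) (by
        apply List.ne_nil_of_length_pos
        rw [List.length_take]
        omega)
    have hk := hf q hqG
    have hfqK : f q ≤ Finset.univ.sup f := Finset.le_sup (Finset.mem_univ q)
    have hfq1 : (π ++ [q]).length ≤ f q := hk.1
    have hπq_len : (π ++ [q]).length = π.length + 1 := by simp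
    have htkG : τ.take (f q) ∈ G := by
      apply hpc τ hτG _ (List.take_prefix _ _)
      apply List.ne_nil_of_length_pos
      rw [List.length_take]
      omega
    have htkpre : (π ++ [q]) <+: τ.take (f q) := by
      rw [List.prefix_take_iff]
      constructor
      · rw [htake]
        exact List.take_prefix _ _
      · exact hfq1
    exact hk.2 _ htkG htkpre (by rw [List.length_take]; omega)
  -- root
  obtain ⟨ρ1, hρ1G, hρ1len⟩ := hlen 1 le_rfl
  obtain ⟨q₀, rfl⟩ : ∃ q₀, ρ1 = [q₀] := by
    cases ρ1 with
    | nil => simp at hρ1len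
    | cons a t =>
      cases t with
      | nil => exact ⟨a, rfl⟩
      | cons b t' => simp at hρ1len
  have hGd0 : Gd [q₀] := by
    intro k hk
    obtain ⟨τ, hτG, hτlen⟩ := hlen k (by simpa using hk)
    refine ⟨τ, hτG, ?_, hτlen⟩
    cases τ with
    | nil => simp at hτlen; omega
    | cons a t =>
      have h1 : [a] ∈ G := hpc _ hτG [a] ⟨t, rfl⟩ (by simp)
      have : a = q₀ := hroot a q₀ h1 hρ1G
      subst this
      exact List.cons_prefix_cons.mpr ⟨rfl, List.nil_prefix⟩
  -- iterate
  have hstepall : ∀ p : {π : List Q // π ∈ G ∧ Gd π},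
      ∃ p' : {π : List Q // π ∈ G ∧ Gd π}, p.1 <+: p'.1 ∧ p'.1.length = p.1.length + 1 := by
    rintro ⟨π, hπG, hπGd⟩
    obtain ⟨q, hq1, hq2⟩ := hext π hπG hπGd
    exact ⟨⟨π ++ [q], hq1, hq2⟩, List.prefix_append _ _, by simp⟩
  choose stepf hstepf using hstepall
  set b : ℕ → {π : List Q // π ∈ G ∧ Gd π} :=
    fun n => stepf^[n] ⟨[q₀], hρ1G, hGd0⟩ with hb
  have hbsucc : ∀ n, b (n + 1) = stepf (b n) := fun n =>
    Function.iterate_succ_apply' _ _ _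
  have hblen : ∀ n, (b n).1.length = n + 1 := by
    intro n
    induction n with
    | zero => rfl
    | succ m ih => rw [hbsucc m, (hstepf (b m)).2, ih]
  have hbmono : ∀ m n, m ≤ n → (b m).1 <+: (b n).1 := by
    intro m n hmn
    induction n with
    | zero =>
      have : m = 0 := by omega
      subst this; exact List.prefix_refl _
    | succ k ih =>
      rcases Nat.lt_or_ge m (k + 1) with h | h
      · exact (ih (by omega)).trans (by rw [hbsucc k]; exact (hstepf (b k)).1)
      · have : m = k + 1 := by omega
        subst this; exact List.prefix_refl _
  set ξ : ℕ → Q := fun n => (b n).1.getLastD q₀ with hξdef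
  refine ⟨ξ, fun n => ?_⟩
  have hofn : (List.ofFn fun i : Fin (n + 1) => ξ i) = (b n).1 := by
    apply List.ext_getElem
    · simp [hblen n]
    · intro i h1 h2
      rw [List.getElem_ofFn]
      have hi_n : i ≤ n := by
        rw [hblen n] at h2; omega
      have hbine : (b i).1 ≠ [] := by
        apply List.ne_nil_of_length_pos
        rw [hblen i]; omega
      show ξ i = (b n).1[i]'h2
      have hξi : ξ i = (b i).1[i]'(by rw [hblen i]; omega) := by
        rw [hξdef]
        show (b i).1.getLastD q₀ = _
        rw [getLastD_eq_getElem hbine q₀]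
        exact gi _ (by rw [hblen i]; omega)
      rw [hξi]
      exact (hbmono i n hi_n).getElem _
  rw [hofn]
  exact (b n).2.1

end Stmt16Aux

open Stmt16Aux

/-- For every accepting run `T` of `A⁺` on `w` there exists an accepting run `U` of `A`
on `w`. -/
theorem stmt_16 [Finite σ] [Finite Q] (A : ABA σ Q) (hne : A.NoEmpty)
    (F B M : Q → Q → Prop)
    (hFr : Reflexive F) (hFt : Transitive F) (hF : ForwardSim A F)
    (hunamb : Unambiguous A F)
    (hBr : Reflexive B) (hBt : Transitive B) (hB : BackwardSim A F B)
    (hM : IsMediated F B M)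
    (w : ℕ → σ) (T : Set (List Q))
    (hT : IsRun (extABA A M) w T) (hacc : Accepting (extABA A M) T) :
    ∃ U : Set (List Q), IsRun A w U ∧ Accepting A U := by

  classical
  obtain ⟨q₀, hq₀T, hq₀uniq⟩ := hT.tree.root
  have hTnil : ([] : List Q) ∉ T := hT.tree.not_nil
  have hDn : ∀ n : ℕ, ∃ (r : Q) (E : Set (List Q)), Good A M w T (n + 1) [q₀] E r := by
    intro n
    obtain ⟨r, E, _, hG⟩ := superlemma hne hF hFr hFt hunamb hB hBr hBt hM hT n [q₀] hq₀T q₀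
      (by rw [lastSt_singleton]; exact hM.refl q₀)
    exact ⟨r, E, hG⟩
  choose rt D hD using hDn
  set 𝒰 : Ultrafilter ℕ := Filter.hyperfilter ℕ with h𝒰
  have hUinf : ∀ s : Set ℕ, s ∈ 𝒰 → s.Infinite := by
    intro s hs
    by_contra hfin
    rw [Set.not_infinite] at hfin
    exact Filter.notMem_hyperfilter_of_finite hfin hs
  have hUne : ∀ s : Set ℕ, s ∈ 𝒰 → s.Nonempty := fun s hs => Filter.nonempty_of_mem hs
  set U : Set (List Q) := {ρ | {n | ρ ∈ D n} ∈ 𝒰} with hUdef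
  have hmemU : ∀ ρ : List Q, ρ ∈ U ↔ {n | ρ ∈ D n} ∈ 𝒰 := fun ρ => Iff.rfl
  obtain ⟨rs, hrs⟩ := ultra_pigeon 𝒰 rt
  have hrootU : [rs] ∈ U := by
    rw [hmemU]
    apply Filter.mem_of_superset hrs
    intro n hn
    simp only [Set.mem_setOf_eq] at hn ⊢
    rw [← hn]
    exact (hD n).root_mem
  have hrootUuniq : ∀ q : Q, [q] ∈ U → q = rs := by
    intro q hq
    obtain ⟨n, hn1, hn2⟩ := hUne _ (Filter.inter_mem ((hmemU _).mp hq) hrs)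
    rw [← hn2]
    exact (hD n).root_uniq hn1
  have hstepU : ∀ ρ ∈ U, succs U ρ ∈ A.δ (lastSt A ρ) (w (ρ.length - 1)) := by
    intro ρ hρ
    obtain ⟨Sv, hSv⟩ := ultra_pigeon 𝒰 (fun n => succs (D n) ρ)
    have hkey : succs U ρ = Sv := by
      ext q
      constructor
      · intro hq
        have h1 : {n | ρ ++ [q] ∈ D n} ∈ 𝒰 := hq
        obtain ⟨n, hn1, hn2⟩ := hUne _ (Filter.inter_mem h1 hSv)
        have hqn : q ∈ succs (D n) ρ := hn1
        rwa [hn2] at hqn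
      · intro hq
        show {n | ρ ++ [q] ∈ D n} ∈ 𝒰
        apply Filter.mem_of_superset hSv
        intro n hn
        have hn' : succs (D n) ρ = Sv := hn
        have : q ∈ succs (D n) ρ := by rw [hn']; exact hq
        exact this
    obtain ⟨n, hn, hngt⟩ :=
      (hUinf _ (Filter.inter_mem ((hmemU _).mp hρ) hSv)).exists_gt ρ.length
    have hmem := (hD n).trans_mem hTnil ρ hn.1 (by omega)
    rw [hkey, ← hn.2]
    have hidx : ([q₀] : List Q).length - 1 + (ρ.length - 1) = ρ.length - 1 := by simp
    rwa [hidx] at hmem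
  have hrun : IsRun A w U := by
    refine ⟨⟨?_, ?_, ⟨rs, hrootU, hrootUuniq⟩⟩, hstepU⟩
    · intro hnil
      have h1 : {n | ([] : List Q) ∈ D n} ∈ 𝒰 := hnil
      have hem : {n | ([] : List Q) ∈ D n} = ∅ := by
        ext n; simp [(hD n).nil_not_mem]
      rw [hem] at h1
      exact Filter.empty_notMem _ h1
    · intro ρ hρ s hs hsne
      show {n | s ∈ D n} ∈ 𝒰
      apply Filter.mem_of_superset ((hmemU _).mp hρ)
      intro n hn
      exact (hD n).prefix_closed ρ hn s hs hsne
  refine ⟨U, hrun, ?_⟩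
  intro ξ hbr N
  by_contra hcon
  push_neg at hcon
  set GT : Set (List Q) := {π | π ∈ T ∧ ∀ (i : ℕ) (hi : i < π.length), N ≤ i →
    π[i]'hi ∉ (extABA A M).α} with hGTdef
  have hGT_pc : ∀ ρ ∈ GT, ∀ s : List Q, s <+: ρ → s ≠ [] → s ∈ GT := by
    intro ρ hρ s hs hsne
    refine ⟨hT.tree.prefix_closed ρ hρ.1 s hs hsne, ?_⟩
    intro i hi hNi
    rw [hs.getElem hi]
    exact hρ.2 i (by have := hs.length_le; omega) hNi
  have hGT_root : ∀ q q' : Q, [q] ∈ GT → [q'] ∈ GT → q = q' := by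
    intro q q' hq hq'
    rw [hq₀uniq q hq.1, hq₀uniq q' hq'.1]
  have hGT_len : ∀ k : ℕ, 1 ≤ k → ∃ π ∈ GT, π.length = k := by
    intro k hk
    have hbl := hbr (k - 1)
    set L : List Q := List.ofFn fun i : Fin ((k - 1) + 1) => ξ i with hL
    have hLlen : L.length = k := by rw [hL, List.length_ofFn]; omega
    obtain ⟨n, hnmem, hngt⟩ := (hUinf _ ((hmemU _).mp hbl)).exists_gt k
    obtain ⟨ρ', hpre, hρ', hρ'len⟩ := (hD n).extend_to_leaf hne L hnmem
    obtain ⟨τ, hτT, hτlen, hτpre, hτcond⟩ := (hD n).leafcond hTnil ρ' hρ' hρ'len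
    have hτlen' : τ.length = n + 1 := by simpa using hτlen
    refine ⟨τ.take k, ⟨hT.tree.prefix_closed τ hτT _ (List.take_prefix _ _) ?_, ?_⟩,
      by rw [List.length_take]; omega⟩
    · apply List.ne_nil_of_length_pos
      rw [List.length_take]
      omega
    · intro i hi hNi
      have hik : i < k := by rw [List.length_take] at hi; omega
      rw [List.getElem_take]
      intro hmem
      have h1 : ([q₀] : List Q).length - 1 + i < τ.length := by
        simp only [List.length_singleton]
        omega
      have h2 : i < ρ'.length := by omega
      have hτi : τ[([q₀] : List Q).length - 1 + i]'h1 ∈ (extABA A M).α := by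
        have e : ([q₀] : List Q).length - 1 + i = i := by simp
        simp only [e]
        exact hmem
      have hρ'i := hτcond i h1 h2 hτi
      have hLi : ρ'[i]'h2 = ξ i := by
        have h3 : i < L.length := by omega
        rw [← hpre.getElem h3]
        exact List.getElem_ofFn _
      rw [hLi] at hρ'i
      exact hcon i hNi hρ'i
  obtain ⟨ξ', hξ'⟩ := koenig hGT_pc hGT_root hGT_len
  have hbr' : InfBranch T ξ' := fun n => (hξ' n).1
  obtain ⟨m, hmN, hmα⟩ := hacc ξ' hbr' N
  have hπ2 := (hξ' m).2 m (by simp) hmN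
  apply hπ2
  rw [List.getElem_ofFn]
  exact hmα
end

section
/- Let A be an alternating Büchi automaton, ≼_F a reflexive and transitive forward simulation on A such that A is ≼_F-unambiguous, ≼_B a reflexive and transitive backward simulation on A parametrised by ≼_F, ≼_M a mediated preorder induced by ≼_F and ≼_B, and A+ the automaton extended according to ≼_M. Then L(A+) = L(A). -/
variable {σ Q : Type*}

namespace Med

/-! ### small list helpers -/

lemma getLastD_ne_nil {α : Type*} {l : List α} (h : l ≠ []) (d d' : α) :
    l.getLastD d = l.getLastD d' := by
  rw [List.getLastD_eq_getLast?, List.getLastD_eq_getLast?,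
    List.getLast?_eq_getLast h]; rfl

lemma lastSt_single (A : ABA σ Q) (x : Q) : lastSt A [x] = x := rfl

lemma lastSt_concat (A : ABA σ Q) (l : List Q) (x : Q) : lastSt A (l ++ [x]) = x := by
  simp [lastSt, List.getLastD_concat]

lemma lastSt_cons (A : ABA σ Q) (a : Q) {l : List Q} (h : l ≠ []) :
    lastSt A (a :: l) = lastSt A l := by
  simp only [lastSt, List.getLastD_cons]
  exact getLastD_ne_nil h _ _

/-! ### height function and the measure -/

variable (F : Q → Q → Prop)

noncomputable def hgt (q : Q) : ℕ := {x | F q x ∧ ¬ F x q}.ncard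

variable {F}

lemma hgt_le [Finite Q] (hFt : Transitive F) {a b : Q} (hab : F a b) : hgt F b ≤ hgt F a := by
  apply Set.ncard_le_ncard _ (Set.toFinite _)
  rintro x ⟨h1, h2⟩
  exact ⟨hFt hab h1, fun h => h2 (hFt h hab)⟩

lemma hgt_lt [Finite Q] (hFr : Reflexive F) (hFt : Transitive F) {a b : Q}
    (hab : F a b) (hba : ¬ F b a) : hgt F b < hgt F a := by
  apply Set.ncard_lt_ncard _ (Set.toFinite _)
  constructor
  · rintro x ⟨h1, h2⟩
    exact ⟨hFt hab h1, fun h => h2 (hFt h hab)⟩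
  · intro hsub
    have : b ∈ {x | F a x ∧ ¬ F x a} := ⟨hab, hba⟩
    have hb := hsub this
    exact hb.2 (hFr b)

lemma hgt_eq_equiv [Finite Q] (hFr : Reflexive F) (hFt : Transitive F) {a b : Q}
    (hab : F a b) (heq : hgt F b = hgt F a) : F b a := by
  by_contra h
  exact absurd heq (Nat.ne_of_lt (hgt_lt hFr hFt hab h))

noncomputable def mea [Finite Q] (N : Finset Q) : ℕ :=
  ∑ z ∈ N, (Nat.card Q + 1) ^ (hgt F z)

lemma mea_decrease [Finite Q] [DecidableEq Q] (hFr : Reflexive F) (hFt : Transitive F)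
    (N : Finset Q) {y : Q} (hy : y ∈ N) (hmax : ∀ x ∈ N, hgt F x ≤ hgt F y)
    (N₂ : Finset Q) (g : Q → Q)
    (hg : ∀ z ∈ N₂, g z ∈ N.erase y ∧ F (g z) z)
    (hinj : ∀ z₁ ∈ N₂, ∀ z₂ ∈ N₂, z₁ ≠ z₂ → g z₁ = g z₂ →
      hgt F z₁ = hgt F (g z₁) → hgt F z₂ = hgt F (g z₂) → False) :
    mea (F := F) N₂ < mea (F := F) N := by
  classical
  set n := Nat.card Q with hn
  have hsplit : mea (F := F) N₂ =
      (∑ z ∈ N₂.filter (fun z => hgt F z = hgt F (g z)), (n+1) ^ (hgt F z)) +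
      (∑ z ∈ N₂.filter (fun z => ¬ hgt F z = hgt F (g z)), (n+1) ^ (hgt F z)) :=
    (Finset.sum_filter_add_sum_filter_not N₂ _ _).symm
  set E : Finset Q := N₂.filter (fun z => hgt F z = hgt F (g z)) with hE
  set D : Finset Q := N₂.filter (fun z => ¬ hgt F z = hgt F (g z)) with hD
  have hEinj : Set.InjOn g E := by
    intro z₁ h1 z₂ h2 hgz
    by_contra hne
    rw [hE, Finset.mem_coe, Finset.mem_filter] at h1 h2
    exact hinj z₁ h1.1 z₂ h2.1 hne hgz h1.2 h2.2
  have hEsum : (∑ z ∈ E, (n+1) ^ (hgt F z)) ≤ ∑ x ∈ N.erase y, (n+1) ^ (hgt F x) := by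
    have h1 : (∑ z ∈ E, (n+1) ^ (hgt F z)) = ∑ x ∈ E.image g, (n+1) ^ (hgt F x) := by
      rw [Finset.sum_image (fun a ha b hb hab => hEinj ha hb hab)]
      apply Finset.sum_congr rfl
      intro z hz
      rw [hE, Finset.mem_filter] at hz
      rw [hz.2]
    rw [h1]
    apply Finset.sum_le_sum_of_subset
    intro x hx
    obtain ⟨z, hz, rfl⟩ := Finset.mem_image.1 hx
    rw [hE, Finset.mem_filter] at hz
    exact (hg z hz.1).1
  have hNsum : mea (F := F) N = (n+1) ^ (hgt F y) + ∑ x ∈ N.erase y, (n+1) ^ (hgt F x) :=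
    (Finset.add_sum_erase _ _ hy).symm
  by_cases hDe : D = ∅
  · have h2 : mea (F := F) N₂ ≤ ∑ x ∈ N.erase y, (n+1) ^ (hgt F x) := by
      rw [hsplit, hDe]; simpa using hEsum
    have h3 : 0 < (n+1) ^ (hgt F y) := Nat.pow_pos (Nat.succ_pos n)
    omega
  · have hydrop : ∀ z ∈ D, hgt F z < hgt F y ∧ 1 ≤ hgt F y := by
      intro z hz
      rw [hD, Finset.mem_filter] at hz
      have hgz := hg z hz.1
      have hle : hgt F z ≤ hgt F (g z) := hgt_le hFt hgz.2
      have hlt : hgt F z < hgt F (g z) := lt_of_le_of_ne hle hz.2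
      have : hgt F (g z) ≤ hgt F y := hmax _ (Finset.mem_of_mem_erase hgz.1)
      omega
    obtain ⟨z0, hz0⟩ := Finset.nonempty_iff_ne_empty.2 hDe
    have hy1 : 1 ≤ hgt F y := (hydrop z0 hz0).2
    have hDsum : (∑ z ∈ D, (n+1) ^ (hgt F z)) ≤ D.card * (n+1) ^ (hgt F y - 1) := by
      calc (∑ z ∈ D, (n+1) ^ (hgt F z)) ≤ ∑ _z ∈ D, (n+1) ^ (hgt F y - 1) := by
            apply Finset.sum_le_sum
            intro z hz
            apply Nat.pow_le_pow_right (Nat.succ_pos n)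
            have := (hydrop z hz).1
            omega
        _ = D.card * (n+1) ^ (hgt F y - 1) := by rw [Finset.sum_const, smul_eq_mul]
    have hcard : D.card ≤ n := by
      rw [hn, ← Set.ncard_univ, ← Set.ncard_coe_finset]
      exact Set.ncard_le_ncard (Set.subset_univ _) (Set.toFinite _)
    have hpos : 0 < (n+1) ^ (hgt F y - 1) := Nat.pow_pos (Nat.succ_pos n)
    have hfinal : (∑ z ∈ D, (n+1) ^ (hgt F z)) < (n+1) ^ (hgt F y) := by
      calc (∑ z ∈ D, (n+1) ^ (hgt F z)) ≤ D.card * (n+1)^(hgt F y - 1) := hDsum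
        _ ≤ n * (n+1)^(hgt F y - 1) := Nat.mul_le_mul_right _ hcard
        _ < (n+1) * (n+1)^(hgt F y - 1) := (Nat.mul_lt_mul_right hpos).2 (Nat.lt_succ_self n)
        _ = (n+1)^(hgt F y - 1 + 1) := by rw [pow_succ]; ring
        _ = (n+1)^(hgt F y) := by congr 1; omega
    rw [hsplit, hNsum]
    omega

/-! ### paired subtrees -/

def fsuccs (G : Set (List (Q × Q))) (τ : List (Q × Q)) : Set Q :=
  {x | ∃ b, τ ++ [(x, b)] ∈ G}

variable (A : ABA σ Q) (M : Q → Q → Prop) (w : ℕ → σ) (Tp : Set (List Q))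

structure PSub (d : ℕ) (u : List Q) (G : Set (List (Q × Q))) (r : Q) : Prop where
  root_mem : [(r, lastSt A u)] ∈ G
  head_eq : ∀ τ ∈ G, τ.head? = some (r, lastSt A u)
  pref : ∀ τ ∈ G, ∀ ρ : List (Q × Q), ρ <+: τ → ρ ≠ [] → ρ ∈ G
  len : ∀ τ ∈ G, τ.length ≤ d + 1
  det : ∀ τ : List (Q × Q), ∀ x b c, τ ++ [(x, b)] ∈ G → τ ++ [(x, c)] ∈ G → b = c
  snd_ok : ∀ τ ∈ G, ∀ x b, τ ++ [(x, b)] ∈ G → b ∈ succs Tp (u ++ (τ.map Prod.snd).drop 1)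
  trans_ok : ∀ τ ∈ G, τ.length ≤ d →
    fsuccs G τ ∈ A.δ (lastSt A (τ.map Prod.fst)) (w (u.length + τ.length - 2))
  nc : ∀ τ : List (Q × Q), ∀ x b, τ ++ [(x, b)] ∈ G → τ ≠ [] →
    b ∈ (extABA A M).α → x ∈ A.α
  nc_root : lastSt A u ∈ (extABA A M).α → r ∈ A.α

variable {A M w Tp}

lemma psub_ne_nil {d u G r} (h : PSub A M w Tp d u G r) : ∀ τ ∈ G, τ ≠ [] := by
  intro τ hτ hn
  have := h.head_eq τ hτ
  rw [hn] at this
  simp at this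

lemma append_single_eq_single {α : Type*} {τ : List α} {e f : α}
    (h : τ ++ [e] = [f]) : τ = [] ∧ e = f := by
  cases τ with
  | nil => exact ⟨rfl, by simpa using h⟩
  | cons a l =>
    exfalso
    have := congrArg List.length h
    simp at this

/-- a singleton paired tree -/
lemma psub_single {u : List Q} {s : Q}
    (hnc : lastSt A u ∈ (extABA A M).α → s ∈ A.α) :
    PSub A M w Tp 0 u {[(s, lastSt A u)]} s := by
  constructor
  · rfl
  · rintro τ rfl; rfl
  · rintro τ rfl ρ hρ hne
    cases ρ with
    | nil => exact absurd rfl hne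
    | cons a l =>
      obtain ⟨t, ht⟩ := hρ
      rw [List.cons_append] at ht
      rw [List.cons.injEq] at ht
      obtain ⟨rfl, ht⟩ := ht
      have : l = [] := (List.append_eq_nil_iff.mp ht).1
      subst this
      rfl
  · rintro τ rfl; simp
  · rintro τ x b c h1 h2
    obtain ⟨-, he1⟩ := append_single_eq_single h1
    obtain ⟨-, he2⟩ := append_single_eq_single h2
    rw [Prod.mk.injEq] at he1 he2
    rw [he1.2, he2.2]
  · rintro τ rfl x b hx
    exfalso
    obtain ⟨h, -⟩ := append_single_eq_single hx
    simp at h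
  · rintro τ rfl hlen
    exfalso
    simp at hlen
  · rintro τ x b hτ hne hb
    obtain ⟨h, -⟩ := append_single_eq_single hτ
    exact absurd h hne
  · exact hnc

/-- subtree extraction -/
lemma psub_child {d : ℕ} {u : List Q} {G r x b}
    (h : PSub A M w Tp (d+1) u G r)
    (hmem : [(r, lastSt A u), (x, b)] ∈ G) :
    PSub A M w Tp d (u ++ [b])
      {ρ | ρ.head? = some (x, b) ∧ (r, lastSt A u) :: ρ ∈ G} x := by
  have hlast : lastSt A (u ++ [b]) = b := lastSt_concat A u b
  have hhd : ∀ (ρ : List (Q × Q)) (t : List (Q × Q)), ρ ≠ [] → (ρ ++ t).head? = ρ.head? := by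
    intro ρ t hρ
    cases ρ with
    | nil => exact absurd rfl hρ
    | cons a l => rfl
  constructor
  · rw [hlast]
    exact ⟨rfl, hmem⟩
  · intro τ hτ; rw [hlast]; exact hτ.1
  · rintro τ ⟨hh, hg⟩ ρ hρ hne
    constructor
    · obtain ⟨t, rfl⟩ := hρ
      rw [← hhd ρ t hne]; exact hh
    · refine h.pref _ hg ((r, lastSt A u) :: ρ) ?_ (by simp)
      obtain ⟨t, rfl⟩ := hρ
      exact ⟨t, rfl⟩
  · rintro τ ⟨hh, hg⟩
    have := h.len _ hg
    simpa using this
  · rintro τ x' b' c' ⟨h1, hg1⟩ ⟨h2, hg2⟩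
    have e1 : (r, lastSt A u) :: (τ ++ [(x', b')]) = ((r, lastSt A u) :: τ) ++ [(x', b')] := by simp
    have e2 : (r, lastSt A u) :: (τ ++ [(x', c')]) = ((r, lastSt A u) :: τ) ++ [(x', c')] := by simp
    rw [e1] at hg1; rw [e2] at hg2
    exact h.det _ _ _ _ hg1 hg2
  · rintro τ ⟨hh, hg⟩ x' b' ⟨hh2, hg2⟩
    rw [show (r, lastSt A u) :: (τ ++ [(x', b')]) = ((r, lastSt A u) :: τ) ++ [(x', b')] by simp] at hg2
    have := h.snd_ok _ hg x' b' hg2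
    -- τ has head (x,b)
    cases τ with
    | nil => simp at hh
    | cons e τt =>
      have he : e = (x, b) := by simpa using hh
      subst he
      simpa [List.append_assoc] using this
  · rintro τ ⟨hh, hg⟩ hlen
    have hg' : (r, lastSt A u) :: τ ∈ G := hg
    have hlen' : ((r, lastSt A u) :: τ).length ≤ d + 1 := by simpa using hlen
    have htr := h.trans_ok _ hg' hlen'
    have hne : τ ≠ [] := by intro hn; rw [hn] at hh; simp at hh
    have hfe : fsuccs {ρ | ρ.head? = some (x, b) ∧ (r, lastSt A u) :: ρ ∈ G} τ
        = fsuccs G ((r, lastSt A u) :: τ) := by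
      ext x'
      constructor
      · rintro ⟨b', hb1, hb2⟩
        exact ⟨b', by simpa using hb2⟩
      · rintro ⟨b', hb⟩
        refine ⟨b', ?_, by simpa using hb⟩
        rw [hhd τ _ hne]; exact hh
    rw [hfe]
    have hl : lastSt A ((τ.map Prod.fst)) = lastSt A (((r, lastSt A u) :: τ).map Prod.fst) := by
      simp only [List.map_cons]
      rw [lastSt_cons A _ (by simpa using hne)]
    rw [← hl] at htr
    have harith : u.length + ((r, lastSt A u) :: τ).length - 2 = (u ++ [b]).length + τ.length - 2 := by
      simp; omega
    rw [harith] at htr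
    exact htr
  · rintro τ x' b' ⟨hh, hg⟩ hne hb'
    rw [show (r, lastSt A u) :: (τ ++ [(x', b')]) = ((r, lastSt A u) :: τ) ++ [(x', b')] by simp] at hg
    exact h.nc _ _ _ hg (by simp) hb'
  · rw [hlast]
    intro hb
    exact h.nc [(r, lastSt A u)] x b hmem (by simp) hb

/-- assembly -/
lemma psub_assemble {d : ℕ} {u : List Q} {ρ : Q} {C : Set Q}
    (hC : C ∈ A.δ ρ (w (u.length - 1)))
    (pc : Q → Q) (Gc : Q → Set (List (Q × Q)))
    (hpc : ∀ c ∈ C, pc c ∈ succs Tp u)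
    (hGc : ∀ c ∈ C, PSub A M w Tp d (u ++ [pc c]) (Gc c) c)
    (hNC : lastSt A u ∈ (extABA A M).α → ρ ∈ A.α) :
    PSub A M w Tp (d+1) u
      (insert [(ρ, lastSt A u)]
        {τ | ∃ c ∈ C, ∃ ρ' ∈ Gc c, τ = (ρ, lastSt A u) :: ρ'}) ρ := by
  set qu := lastSt A u with hqu
  set Gass := insert [(ρ, qu)] {τ | ∃ c ∈ C, ∃ ρ' ∈ Gc c, τ = (ρ, qu) :: ρ'} with hGass
  have hhead : ∀ c ∈ C, ∀ ρ' ∈ Gc c, ρ'.head? = some (c, pc c) := by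
    intro c hc ρ' hρ'
    have := (hGc c hc).head_eq ρ' hρ'
    rwa [lastSt_concat] at this
  have hGne : ∀ c ∈ C, ∀ ρ' ∈ Gc c, ρ' ≠ [] := fun c hc => psub_ne_nil (hGc c hc)
  have hGcons : ∀ c ∈ C, ∀ ρ' ∈ Gc c, ∃ t, ρ' = (c, pc c) :: t := by
    intro c hc ρ' hρ'
    cases ρ' with
    | nil => exact absurd rfl (hGne c hc _ hρ')
    | cons f ft =>
      have := hhead c hc _ hρ'
      simp at this
      exact ⟨ft, by rw [this]⟩
  -- membership characterization for extensions
  have hext : ∀ (τ : List (Q × Q)) (x : Q) (b : Q), τ ++ [(x, b)] ∈ Gass →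
      (τ = [] ∧ x = ρ ∧ b = qu) ∨
      (τ = [(ρ, qu)] ∧ x ∈ C ∧ b = pc x) ∨
      (∃ σ c, τ = (ρ, qu) :: σ ∧ σ ≠ [] ∧ c ∈ C ∧ σ ∈ Gc c ∧ σ ++ [(x, b)] ∈ Gc c) := by
    rintro τ x b (h1 | ⟨c, hc, ρ', hρ', he⟩)
    · left
      obtain ⟨hτ, he⟩ := append_single_eq_single h1
      rw [Prod.mk.injEq] at he
      exact ⟨hτ, he.1, he.2⟩
    · right
      cases τ with
      | nil =>
        exfalso
        rw [List.nil_append, List.cons.injEq] at he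
        exact hGne c hc ρ' hρ' he.2.symm
      | cons e σ =>
        rw [List.cons_append, List.cons.injEq] at he
        obtain ⟨he1, he2⟩ := he
        subst he1
        cases σ with
        | nil =>
          left
          obtain ⟨t, ht⟩ := hGcons c hc ρ' hρ'
          rw [← he2] at ht
          simp at ht
          obtain ⟨⟨hx, hb⟩, -⟩ := ht
          subst hx
          exact ⟨rfl, hc, hb⟩
        | cons f σt =>
          right
          refine ⟨f :: σt, c, rfl, by simp, hc, ?_, by rw [he2]; exact hρ'⟩
          rw [← he2] at hρ'
          exact (hGc c hc).pref _ hρ' _ ⟨[(x,b)], rfl⟩ (by simp)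
  -- extension introduction
  have hintro : ∀ c ∈ C, ∀ ρ' ∈ Gc c, (ρ, qu) :: ρ' ∈ Gass :=
    fun c hc ρ' hρ' => Set.mem_insert_of_mem _ ⟨c, hc, ρ', hρ', rfl⟩
  constructor
  · exact Set.mem_insert _ _
  · rintro τ (rfl | ⟨c, hc, ρ', hρ', rfl⟩) <;> rfl
  · rintro τ (rfl | ⟨c, hc, ρ', hρ', rfl⟩) ρ₀ hρ₀ hne
    · obtain ⟨t, ht⟩ := hρ₀
      cases ρ₀ with
      | nil => exact absurd rfl hne
      | cons a l =>
        simp at ht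
        obtain ⟨rfl, hl, -⟩ := ht
        rw [hl]
        exact Set.mem_insert _ _
    · cases ρ₀ with
      | nil => exact absurd rfl hne
      | cons a l =>
        obtain ⟨ha, hl⟩ := List.cons_prefix_cons.1 hρ₀
        subst ha
        by_cases hln : l = []
        · subst hln; exact Set.mem_insert _ _
        · exact hintro c hc l ((hGc c hc).pref ρ' hρ' l hl hln)
  · rintro τ (rfl | ⟨c, hc, ρ', hρ', rfl⟩)
    · simp
    · have := (hGc c hc).len ρ' hρ'
      simp only [List.length_cons]
      omega
  · rintro τ x b c h1 h2
    rcases hext τ x b h1 with ⟨hτ, -, hb⟩ | ⟨hτ, hx, hb⟩ | ⟨σ, c1, hτ, hσne, hc1, hσ1, hm1⟩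
    · rcases hext τ x c h2 with ⟨-, -, hc'⟩ | ⟨hτ2, -, -⟩ | ⟨σ, c2, hτ2, -, -, -, -⟩
      · rw [hb, hc']
      · exfalso; rw [hτ] at hτ2; simp at hτ2
      · exfalso; rw [hτ] at hτ2; simp at hτ2
    · rcases hext τ x c h2 with ⟨hτ2, -, -⟩ | ⟨-, -, hc'⟩ | ⟨σ, c2, hτ2, hσne, -, -, -⟩
      · exfalso; rw [hτ2] at hτ; simp at hτ
      · rw [hb, hc']
      · exfalso
        rw [hτ] at hτ2
        rw [List.cons.injEq] at hτ2
        exact hσne hτ2.2.symm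
    · rcases hext τ x c h2 with ⟨hτ2, -, -⟩ | ⟨hτ2, -, -⟩ | ⟨σ2, c2, hτ2, hσne2, hc2, hσ2, hm2⟩
      · exfalso; rw [hτ2] at hτ; simp at hτ
      · exfalso
        rw [hτ] at hτ2
        rw [List.cons.injEq] at hτ2
        exact hσne hτ2.2
      · rw [hτ] at hτ2
        rw [List.cons.injEq] at hτ2
        have hσσ : σ = σ2 := hτ2.2
        subst hσσ
        -- identify c1 = c2 via heads
        have hcc : c1 = c2 := by
          obtain ⟨t1, ht1⟩ := hGcons c1 hc1 σ hσ1
          obtain ⟨t2, ht2⟩ := hGcons c2 hc2 σ hσ2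
          rw [ht1] at ht2
          simp at ht2
          exact ht2.1.1
        subst hcc
        exact (hGc c1 hc1).det σ x b c hm1 hm2
  · -- snd_ok
    rintro τ hτ x b hmem
    rcases hext τ x b hmem with ⟨hτe, -, -⟩ | ⟨hτe, hx, hb⟩ | ⟨σ, c, hτe, hσne, hc, hσ, hm⟩
    · exfalso
      subst hτe
      rcases hτ with h | ⟨c, hc, ρ', hρ', he⟩
      · simp at h
      · simp at he
    · subst hτe
      rw [hb]
      simpa using hpc x hx
    · subst hτe
      obtain ⟨t, ht⟩ := hGcons c hc σ hσ
      have := (hGc c hc).snd_ok σ hσ x b hm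
      rw [ht] at this ⊢
      simpa [List.append_assoc] using this
  · -- trans_ok
    rintro τ hτ hlen
    rcases hτ with rfl | ⟨c, hc, ρ', hρ', rfl⟩
    · have hfs : fsuccs Gass [(ρ, qu)] = C := by
        ext x
        constructor
        · rintro ⟨b, hb⟩
          rcases hext [(ρ, qu)] x b hb with ⟨h, -, -⟩ | ⟨-, hx, -⟩ | ⟨σ, c, hτe, hσne, -, -, -⟩
          · simp at h
          · exact hx
          · exfalso
            rw [List.cons.injEq] at hτe
            exact hσne hτe.2.symm
        · intro hx
          have hr := (hGc x hx).root_mem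
          rw [lastSt_concat] at hr
          exact ⟨pc x, hintro x hx _ hr⟩
      rw [hfs]
      have : lastSt A ([(ρ, qu)].map Prod.fst) = ρ := by simp [lastSt]
      rw [this]
      have : u.length + ([(ρ, qu)] : List (Q × Q)).length - 2 = u.length - 1 := by simp
      rw [this]
      exact hC
    · -- deeper node
      have hρ'ne := hGne c hc ρ' hρ'
      have hfs : fsuccs Gass ((ρ, qu) :: ρ') = fsuccs (Gc c) ρ' := by
        ext x
        constructor
        · rintro ⟨b, hb⟩
          rw [show (ρ, qu) :: ρ' ++ [(x, b)] = ((ρ, qu) :: ρ') ++ [(x,b)] by simp] at hb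
          rcases hext _ x b hb with ⟨h, -, -⟩ | ⟨h, -, -⟩ | ⟨σ, c2, hτe, hσne, hc2, hσ2, hm⟩
          · simp at h
          · rw [List.cons.injEq] at h
            exact absurd h.2 hρ'ne
          · rw [List.cons.injEq] at hτe
            have hσρ : σ = ρ' := hτe.2.symm
            subst hσρ
            have hcc : c2 = c := by
              obtain ⟨t1, ht1⟩ := hGcons c2 hc2 σ hσ2
              obtain ⟨t2, ht2⟩ := hGcons c hc σ hρ'
              rw [ht1] at ht2
              simp at ht2
              exact ht2.1.1
            subst hcc
            exact ⟨b, hm⟩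
        · rintro ⟨b, hb⟩
          refine ⟨b, ?_⟩
          rw [show ((ρ, qu) :: ρ') ++ [(x,b)] = (ρ, qu) :: (ρ' ++ [(x, b)]) by simp]
          exact hintro c hc _ hb
      rw [hfs]
      have hlen' : ρ'.length ≤ d := by
        simp only [List.length_cons] at hlen
        omega
      have htr := (hGc c hc).trans_ok ρ' hρ' hlen'
      have hl : lastSt A (((ρ, qu) :: ρ').map Prod.fst) = lastSt A (ρ'.map Prod.fst) := by
        simp only [List.map_cons]
        exact lastSt_cons A _ (by simpa using hρ'ne)
      rw [hl]
      have harith : u.length + ((ρ, qu) :: ρ').length - 2 = (u ++ [pc c]).length + ρ'.length - 2 := by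
        simp; omega
      rw [harith]
      exact htr
  · -- nc
    rintro τ x b hmem hne hb
    rcases hext τ x b hmem with ⟨hτe, -, -⟩ | ⟨hτe, hx, hbe⟩ | ⟨σ, c, hτe, hσne, hc, hσ, hm⟩
    · exact absurd hτe hne
    · subst hbe
      have := (hGc x hx).nc_root
      rw [lastSt_concat] at this
      exact this hb
    · exact (hGc c hc).nc σ x b hm hσne hb
  · exact hNC

/-- truncation -/
lemma psub_trunc {d : ℕ} {u : List Q} {G : Set (List (Q × Q))} {r : Q}
    (h : PSub A M w Tp (d+1) u G r) :
    PSub A M w Tp d u {τ ∈ G | τ.length ≤ d + 1} r := by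
  constructor
  · exact ⟨h.root_mem, by simp⟩
  · exact fun τ hτ => h.head_eq τ hτ.1
  · rintro τ ⟨hτ, hl⟩ ρ hρ hne
    exact ⟨h.pref τ hτ ρ hρ hne, le_trans hρ.length_le hl⟩
  · exact fun τ hτ => hτ.2
  · rintro τ x b c h1 h2
    exact h.det τ x b c h1.1 h2.1
  · rintro τ ⟨hτ, -⟩ x b hm
    exact h.snd_ok τ hτ x b hm.1
  · rintro τ ⟨hτ, -⟩ hlen
    have hfs : fsuccs {τ ∈ G | τ.length ≤ d + 1} τ = fsuccs G τ := by
      ext x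
      constructor
      · rintro ⟨b, hb, -⟩
        exact ⟨b, hb⟩
      · rintro ⟨b, hb⟩
        exact ⟨b, hb, by simp; omega⟩
    rw [hfs]
    exact h.trans_ok τ hτ (le_trans hlen (Nat.le_succ d))
  · rintro τ x b hm hne hb
    exact h.nc τ x b hm.1 hne hb
  · exact h.nc_root

/-- fst-path determines the node -/
lemma psub_fst_inj {d : ℕ} {u : List Q} {G : Set (List (Q × Q))} {r : Q}
    (h : PSub A M w Tp d u G r) :
    ∀ τ ∈ G, ∀ σ ∈ G, τ.map Prod.fst = σ.map Prod.fst → τ = σ := by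
  suffices H : ∀ n, ∀ τ ∈ G, ∀ σ ∈ G, τ.length ≤ n →
      τ.map Prod.fst = σ.map Prod.fst → τ = σ by
    intro τ hτ σ hσ he
    exact H τ.length τ hτ σ hσ le_rfl he
  intro n
  induction n with
  | zero =>
    intro τ hτ σ hσ hlen he
    exact absurd (List.length_eq_zero_iff.mp (Nat.le_zero.mp hlen)) (psub_ne_nil h τ hτ)
  | succ n ih =>
    intro τ hτ σ hσ hlen he
    have hτne := psub_ne_nil h τ hτ
    have hσne := psub_ne_nil h σ hσ
    have hτd : τ.dropLast ++ [τ.getLast hτne] = τ := List.dropLast_append_getLast hτne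
    have hσd : σ.dropLast ++ [σ.getLast hσne] = σ := List.dropLast_append_getLast hσne
    by_cases hτ0 : τ.dropLast = []
    · -- τ is a singleton; then σ too; both equal the root by head_eq
      have hlτ : τ.length = 1 := by
        rw [← hτd, hτ0]; rfl
      have hlσ : σ.length = 1 := by
        have := congrArg List.length he
        simpa [hlτ] using this.symm
      obtain ⟨e, rfl⟩ := List.length_eq_one_iff.mp hlτ
      obtain ⟨f, rfl⟩ := List.length_eq_one_iff.mp hlσ
      have h1 := h.head_eq _ hτ
      have h2 := h.head_eq _ hσ
      simp at h1 h2
      rw [h1, h2]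
    · -- both have length ≥ 2
      have hσ0 : σ.dropLast ≠ [] := by
        intro hc
        have h2 : σ.length = 1 := by rw [← hσd, hc]; rfl
        have h1 : τ.length = σ.length := by
          have := congrArg List.length he; simpa using this
        rw [h2] at h1
        apply hτ0
        have : τ.dropLast.length = 0 := by
          rw [List.length_dropLast, h1]
        exact List.length_eq_zero_iff.mp this
      have hmτ := h.pref τ hτ τ.dropLast (List.dropLast_prefix τ) hτ0
      have hmσ := h.pref σ hσ σ.dropLast (List.dropLast_prefix σ) hσ0
      -- decompose the map equality
      have hkey : ∀ (l : List (Q × Q)) (hne : l ≠ []),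
          l.dropLast.map Prod.fst ++ [(l.getLast hne).1] = l.map Prod.fst := by
        intro l hne
        conv_rhs => rw [← List.dropLast_append_getLast hne]
        rw [List.map_append]
        rfl
      have hemap : τ.dropLast.map Prod.fst ++ [(τ.getLast hτne).1]
          = σ.dropLast.map Prod.fst ++ [(σ.getLast hσne).1] := by
        rw [hkey τ hτne, hkey σ hσne, he]
      have hinj := List.append_inj' hemap (by simp)
      have hdl : τ.dropLast = σ.dropLast := by
        apply ih _ hmτ _ hmσ _ hinj.1
        have : τ.dropLast.length < τ.length := by
          rw [List.length_dropLast]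
          have : 0 < τ.length := List.length_pos_iff.mpr hτne
          omega
        omega
      have hfst : (τ.getLast hτne).1 = (σ.getLast hσne).1 := by
        have := hinj.2; simpa using this
      -- use det
      have hb : (τ.getLast hτne).2 = (σ.getLast hσne).2 := by
        apply h.det τ.dropLast (τ.getLast hτne).1 _ _
        · rw [← Prod.mk.eta (p := τ.getLast hτne)] at hτd
          rw [hτd]; exact hτ
        · rw [hdl, hfst]
          rw [← Prod.mk.eta (p := σ.getLast hσne)] at hσd
          rw [hσd]; exact hσ
      rw [← hτd, ← hσd, hdl]
      congr 1
      rw [← Prod.mk.eta (p := τ.getLast hτne), ← Prod.mk.eta (p := σ.getLast hσne), hfst, hb]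

variable {F B : Q → Q → Prop}

theorem build_rebuild [Finite Q]
    (hFr : Reflexive F) (hFt : Transitive F) (hF : ForwardSim A F)
    (hunamb : Unambiguous A F)
    (hBr : Reflexive B) (hBt : Transitive B) (hB : BackwardSim A F B)
    (hM : IsMediated F B M)
    (wit : List Q → Q)
    (hwit : ∀ u ∈ Tp, M (wit u) (lastSt A u) ∧ succs Tp u ∈ A.δ (wit u) (w (u.length - 1))) :
    ∀ d : ℕ,
      (∀ (u : List Q) (G : Set (List (Q × Q))) (r : Q), PSub A M w Tp d u G r →
        ∀ r₂, F r r₂ → ∃ G₂, PSub A M w Tp d u G₂ r₂) ∧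
      (∀ u ∈ Tp, ∀ r, M (lastSt A u) r →
        ∃ s G, B r s ∧ PSub A M w Tp d u G s) := by
  classical
  -- the mediation step
  have med : ∀ u ∈ Tp, ∀ r, M (lastSt A u) r →
      ∃ s, F (wit u) s ∧ B r s ∧ (lastSt A u ∈ (extABA A M).α → s ∈ A.α) := by
    intro u hu r hMr
    obtain ⟨hMw, -⟩ := hwit u hu
    by_cases hq : lastSt A u ∈ (extABA A M).α
    · obtain ⟨qα, hqα, hM1, hM2⟩ := hq
      have hMqαr : M qα r := hM.trans hM1 hMr
      obtain ⟨t, hFt1, hBt1⟩ := hM.mediator _ _ hMqαr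
      have htα : t ∈ A.α := (hF _ _ hFt1).1 hqα
      have hMpt : M (wit u) t := hM.fwd_ext _ _ _ (hM.trans hMw hM2) hFt1
      obtain ⟨s, hFs, hBs⟩ := hM.mediator _ _ hMpt
      exact ⟨s, hFs, hBt hBt1 hBs, fun _ => (hB t s hBs).2.1 htα⟩
    · have hMpr : M (wit u) r := hM.trans hMw hMr
      obtain ⟨s, hFs, hBs⟩ := hM.mediator _ _ hMpr
      exact ⟨s, hFs, hBs, fun hq' => absurd hq' hq⟩
  intro d
  induction d with
  | zero =>
    constructor
    · intro u G r hP r₂ hFr2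
      exact ⟨_, psub_single (fun hq => (hF r r₂ hFr2).1 (hP.nc_root hq))⟩
    · intro u hu r hMr
      obtain ⟨s, hFs, hBs, hsα⟩ := med u hu r hMr
      exact ⟨s, _, hBs, psub_single hsα⟩
  | succ d ih =>
    obtain ⟨reb, bld⟩ := ih
    have hreb : ∀ (u : List Q) (G : Set (List (Q × Q))) (r : Q), PSub A M w Tp (d+1) u G r →
        ∀ r₂, F r r₂ → ∃ G₂, PSub A M w Tp (d+1) u G₂ r₂ := by
      intro u G r hP r₂ hFr2
      set qu := lastSt A u with hqu
      have hCmem := hP.trans_ok [(r, qu)] hP.root_mem (by simp)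
      have hl1 : lastSt A (([(r, qu)] : List (Q × Q)).map Prod.fst) = r := by
        simp [lastSt]
      have hl2 : u.length + ([(r, qu)] : List (Q × Q)).length - 2 = u.length - 1 := by
        simp
      rw [hl1, hl2] at hCmem
      obtain ⟨C₂, hC₂, hdom⟩ := (hF r r₂ hFr2).2 _ _ hCmem
      choose! xw hxwC hxwF using hdom
      choose! bw hbw using fun z (hz : z ∈ C₂) => hxwC z hz
      have hchild : ∀ z ∈ C₂, ∃ G₂, PSub A M w Tp d (u ++ [bw z]) G₂ z := by
        intro z hz
        have hc := psub_child hP (by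
          have := hbw z hz
          simpa using this)
        exact reb _ _ _ hc z (hxwF z hz)
      choose! Gz hGz using hchild
      have hpc : ∀ z ∈ C₂, bw z ∈ succs Tp u := by
        intro z hz
        have := hP.snd_ok [(r, qu)] hP.root_mem (xw z) (bw z) (hbw z hz)
        simpa using this
      refine ⟨_, psub_assemble hC₂ bw Gz hpc hGz ?_⟩
      exact fun hq => (hF r r₂ hFr2).1 (hP.nc_root hq)
    refine ⟨hreb, ?_⟩
    intro u hu r hMr
    obtain ⟨s, hFs, hBs, hsα⟩ := med u hu r hMr
    obtain ⟨hMw, hPmem⟩ := hwit u hu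
    obtain ⟨R, hR, hdomR⟩ := (hF (wit u) s hFs).2 (w (u.length - 1)) _ hPmem
    -- data predicates
    set FinD : Q → Prop :=
      fun c => ∃ p' G', p' ∈ succs Tp u ∧ PSub A M w Tp d (u ++ [p']) G' c with hFinD
    set RawD : Q → Prop := fun y => ∃ p' ∈ succs Tp u, F p' y with hRawD
    have hrebFin : ∀ x, FinD x → ∀ z, F x z → FinD z := by
      rintro x ⟨p', G', hp', hP'⟩ z hxz
      obtain ⟨G₂, hG₂⟩ := reb _ _ _ hP' z hxz
      exact ⟨p', G₂, hp', hG₂⟩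
    -- the node loop
    have NL : ∀ n : ℕ, ∀ N : Finset Q, ∀ ρ : Q, ∀ C : Set Q, mea (F := F) N ≤ n →
        C ∈ A.δ ρ (w (u.length - 1)) → ↑N ⊆ C →
        (∀ c ∈ C, c ∉ N → FinD c) → (∀ y ∈ N, RawD y) →
        ∃ ρ' C', B ρ ρ' ∧ C' ∈ A.δ ρ' (w (u.length - 1)) ∧ ∀ c ∈ C', FinD c := by
      intro n
      induction n with
      | zero =>
        intro N ρ C hmea hC hNC hfin hraw
        rcases N.eq_empty_or_nonempty with rfl | hne
        · exact ⟨ρ, C, hBr ρ, hC, fun c hc => hfin c hc (by simp)⟩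
        · exfalso
          have : 0 < mea (F := F) N := by
            apply Finset.sum_pos (fun i _ => Nat.pow_pos (Nat.succ_pos _)) hne
          omega
      | succ n ihn =>
        intro N ρ C hmea hC hNC hfin hraw
        rcases N.eq_empty_or_nonempty with rfl | hne
        · exact ⟨ρ, C, hBr ρ, hC, fun c hc => hfin c hc (by simp)⟩
        · obtain ⟨y, hyN, hymax⟩ := N.exists_max_image (fun x => hgt F x) hne
          obtain ⟨p', hp', hFp'y⟩ := hraw y hyN
          have hu' : u ++ [p'] ∈ Tp := hp'
          have hMly : M (lastSt A (u ++ [p'])) y := by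
            rw [lastSt_concat]
            exact hM.le_f _ _ hFp'y
          obtain ⟨cs, Gs, hBycs, hPcs⟩ := bld (u ++ [p']) hu' y hMly
          have hyC : y ∈ C := hNC hyN
          have hins : insert y (C \ {y}) = C := by
            rw [Set.insert_diff_singleton]
            exact Set.insert_eq_self.mpr hyC
          obtain ⟨ρ₂, Rh, hcnot, htr, hBρρ₂, hdomRh⟩ :=
            (hB y cs hBycs).2.2 (w (u.length - 1)) ρ (C \ {y}) (by simp) (by rw [hins]; exact hC)
          set N₂ : Finset Q :=
            (Set.toFinite {z | z ∈ Rh ∧ ∀ x ∈ C \ {y}, F x z → x ∈ N}).toFinset with hN₂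
          have hN₂mem : ∀ z, z ∈ N₂ ↔ z ∈ Rh ∧ ∀ x ∈ C \ {y}, F x z → x ∈ N := by
            intro z
            rw [hN₂, Set.Finite.mem_toFinset]
            rfl
          have hfin₂ : ∀ c ∈ insert cs Rh, c ∉ N₂ → FinD c := by
            intro c hc hcN
            rcases hc with rfl | hcRh
            · exact ⟨p', Gs, hp', hPcs⟩
            · rw [hN₂mem] at hcN
              push_neg at hcN
              obtain ⟨x, hxC, hxF, hxN⟩ := hcN hcRh
              have hFx : FinD x := hfin x hxC.1 (by
                intro hxN'
                exact hxN hxN')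
              exact hrebFin x hFx c hxF
          have hraw₂ : ∀ z ∈ N₂, RawD z := by
            intro z hz
            rw [hN₂mem] at hz
            obtain ⟨hzRh, hall⟩ := hz
            obtain ⟨x, hxC, hxF⟩ := hdomRh z hzRh
            obtain ⟨p₃, hp₃, hFp₃⟩ := hraw x (hall x hxC hxF)
            exact ⟨p₃, hp₃, hFt hFp₃ hxF⟩
          -- the measure decreases
          have hgex : ∀ z ∈ N₂, ∃ x, x ∈ N.erase y ∧ F x z := by
            intro z hz
            rw [hN₂mem] at hz
            obtain ⟨hzRh, hall⟩ := hz
            obtain ⟨x, hxC, hxF⟩ := hdomRh z hzRh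
            refine ⟨x, Finset.mem_erase.mpr ⟨?_, hall x hxC hxF⟩, hxF⟩
            intro hxy
            rw [hxy] at hxC
            exact hxC.2 rfl
          choose! g hg1 hg2 using hgex
          have hmea₂ : mea (F := F) N₂ < mea (F := F) N := by
            apply mea_decrease hFr hFt N hyN hymax N₂ g (fun z hz => ⟨hg1 z hz, hg2 z hz⟩)
            intro z₁ hz₁ z₂ hz₂ hzne hgeq he₁ he₂
            have hF₁ : F z₁ (g z₁) := hgt_eq_equiv hFr hFt (hg2 z₁ hz₁) he₁
            have hF₂ : F z₂ (g z₂) := hgt_eq_equiv hFr hFt (hg2 z₂ hz₂) he₂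
            have hF12 : F z₁ z₂ := hFt hF₁ (by rw [hgeq]; exact hg2 z₂ hz₂)
            have hF21 : F z₂ z₁ := hFt hF₂ (by rw [← hgeq]; exact hg2 z₁ hz₁)
            have hz₁Rh : z₁ ∈ Rh := ((hN₂mem z₁).1 hz₁).1
            have hz₂Rh : z₂ ∈ Rh := ((hN₂mem z₂).1 hz₂).1
            exact hunamb ρ₂ (w (u.length - 1)) _ htr z₁ (Set.mem_insert_of_mem _ hz₁Rh)
              z₂ (Set.mem_insert_of_mem _ hz₂Rh) hzne ⟨hF12, hF21⟩
          obtain ⟨ρ', C', hBρ₂ρ', hC', hfin'⟩ := ihn N₂ ρ₂ (insert cs Rh)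
            (by omega) htr
            (by
              intro z hz
              rw [Finset.mem_coe, hN₂mem] at hz
              exact Set.mem_insert_of_mem _ hz.1)
            hfin₂ hraw₂
          exact ⟨ρ', C', hBt hBρρ₂ hBρ₂ρ', hC', hfin'⟩
    -- start the loop with all of R raw
    set N₀ : Finset Q := (Set.toFinite R).toFinset with hN₀
    obtain ⟨ρst, Cst, hBsρ, hCst, hfinst⟩ := NL (mea (F := F) N₀) N₀ s R le_rfl hR
      (by intro z hz; rwa [Finset.mem_coe, hN₀, Set.Finite.mem_toFinset] at hz)
      (by
        intro c hc hcn
        exfalso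
        exact hcn (by rw [hN₀, Set.Finite.mem_toFinset]; exact hc))
      (by
        intro y hy
        rw [hN₀, Set.Finite.mem_toFinset] at hy
        exact hdomR y hy)
    choose! pc Gcf hpcf hGcf using hfinst
    refine ⟨ρst, _, hBt hBs hBsρ, psub_assemble hCst pc Gcf hpcf hGcf ?_⟩
    exact fun hq => (hB s ρst hBsρ).2.1 (hsα hq)

/-! ### concrete inverse limit -/

def trun (d : ℕ) (G : Set (List (Q × Q))) : Set (List (Q × Q)) :=
  {τ ∈ G | τ.length ≤ d + 1}

lemma trun_subset (d : ℕ) (G : Set (List (Q × Q))) : trun d G ⊆ G := fun τ hτ => hτ.1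

lemma trun_comp {d e : ℕ} (hde : d ≤ e) (G : Set (List (Q × Q))) :
    trun d (trun e G) = trun d G := by
  ext τ
  constructor
  · rintro ⟨⟨h1, -⟩, h3⟩
    exact ⟨h1, h3⟩
  · rintro ⟨h1, h2⟩
    exact ⟨⟨h1, by omega⟩, h2⟩

lemma psub_trun {d : ℕ} {u : List Q} {G : Set (List (Q × Q))} {r : Q}
    (h : PSub A M w Tp (d+1) u G r) : PSub A M w Tp d u (trun d G) r := psub_trunc h

lemma trun_eq_self {d : ℕ} {u : List Q} {G : Set (List (Q × Q))} {r : Q}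
    (h : PSub A M w Tp d u G r) : trun d G = G := by
  ext τ
  exact ⟨fun hτ => hτ.1, fun hτ => ⟨hτ, h.len τ hτ⟩⟩

lemma psub_trun_le {u : List Q} {r : Q} :
    ∀ (k d : ℕ) (G : Set (List (Q × Q))), PSub A M w Tp (d + k) u G r →
      PSub A M w Tp d u (trun d G) r := by
  intro k
  induction k with
  | zero =>
    intro d G h
    rw [Nat.add_zero] at h
    rw [trun_eq_self h]
    exact h
  | succ k ihk =>
    intro d G h
    have h1 : PSub A M w Tp (d + k) u (trun (d + k) G) r := psub_trun h
    have h2 := ihk d _ h1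
    rwa [trun_comp (Nat.le_add_right d k)] at h2

lemma psub_trun_le' {u : List Q} {r : Q} {d e : ℕ} (hde : d ≤ e)
    {G : Set (List (Q × Q))} (h : PSub A M w Tp e u G r) :
    PSub A M w Tp d u (trun d G) r := by
  obtain ⟨k, rfl⟩ := Nat.exists_eq_add_of_le hde
  exact psub_trun_le k d G h

lemma psub_set_finite [Finite Q] (d : ℕ) (u : List Q) (r : Q) :
    {G : Set (List (Q × Q)) | PSub A M w Tp d u G r}.Finite := by
  apply Set.Finite.subset ((List.finite_length_le (Q × Q) (d+1)).finite_subsets)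
  intro G hG τ hτ
  exact hG.len τ hτ

lemma chain_exists [Finite Q]
    (hex : ∀ d, ∃ G, PSub A M w Tp d [A.ι] G A.ι) :
    ∃ g : ℕ → Set (List (Q × Q)),
      (∀ d, PSub A M w Tp d [A.ι] (g d) A.ι) ∧ ∀ d, trun d (g (d+1)) = g d := by
  classical
  set P : ℕ → Set (List (Q × Q)) → Prop := fun d G => PSub A M w Tp d [A.ι] G A.ι with hP
  set good : ℕ → Set (List (Q × Q)) → Prop :=
    fun d G => P d G ∧ ∀ e, d ≤ e → ∃ H, P e H ∧ trun d H = G with hgoodd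
  have hgood : ∀ d, ∃ G, good d G := by
    intro d
    by_contra hno
    push_neg at hno
    have hch : ∀ G : {G // P d G}, ∃ e, d ≤ e ∧ ∀ H, P e H → trun d H ≠ G.1 := by
      intro G
      have h3 : ¬ (P d G.1 ∧ ∀ e, d ≤ e → ∃ H, P e H ∧ trun d H = G.1) := hno G.1
      push_neg at h3
      exact h3 G.2
    choose ef hef1 hef2 using hch
    haveI : Finite {G // P d G} := (psub_set_finite d [A.ι] A.ι).to_subtype
    obtain ⟨E, hE⟩ := (Set.finite_range ef).bddAbove
    obtain ⟨H, hH⟩ := hex (max E d)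
    have hPG : P d (trun d H) := psub_trun_le' (le_max_right E d) hH
    set GG : {G // P d G} := ⟨trun d H, hPG⟩ with hGG
    refine hef2 GG (trun (ef GG) H) (psub_trun_le' ?_ hH) ?_
    · exact le_trans (hE ⟨GG, rfl⟩) (le_max_left E d)
    · rw [trun_comp (hef1 GG)]
  have hstep : ∀ d G, good d G → ∃ G', good (d+1) G' ∧ trun d G' = G := by
    intro d G hG
    by_contra hno
    push_neg at hno
    have hch : ∀ G' : {G' // P (d+1) G' ∧ trun d G' = G},
        ∃ e, d + 1 ≤ e ∧ ∀ H, P e H → trun (d+1) H ≠ G'.1 := by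
      intro G'
      have h3 : ¬ (P (d+1) G'.1 ∧ ∀ e, d + 1 ≤ e → ∃ H, P e H ∧ trun (d+1) H = G'.1) :=
        fun hc => hno G'.1 hc G'.2.2
      push_neg at h3
      exact h3 G'.2.1
    choose ef hef1 hef2 using hch
    haveI : Finite {G' // P (d+1) G' ∧ trun d G' = G} := by
      apply Set.Finite.to_subtype
      apply Set.Finite.subset (psub_set_finite (d+1) [A.ι] A.ι)
      intro G' hG'
      exact hG'.1
    obtain ⟨E, hE⟩ := (Set.finite_range ef).bddAbove
    obtain ⟨H, hPH, hHG⟩ := hG.2 (max E (d+1)) (le_trans (Nat.le_succ d) (le_max_right _ _))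
    have hPG' : P (d+1) (trun (d+1) H) := psub_trun_le' (le_max_right E (d+1)) hPH
    have htrG : trun d (trun (d+1) H) = G := by
      rw [trun_comp (Nat.le_succ d)]
      exact hHG
    set GG : {G' // P (d+1) G' ∧ trun d G' = G} := ⟨trun (d+1) H, hPG', htrG⟩ with hGG
    refine hef2 GG (trun (ef GG) H) (psub_trun_le' ?_ hPH) ?_
    · exact le_trans (hE ⟨GG, rfl⟩) (le_max_left _ _)
    · rw [trun_comp (hef1 GG)]
  have hstep' : ∀ d (x : {G // good d G}), ∃ y : {G // good (d+1) G}, trun d y.1 = x.1 := by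
    intro d x
    obtain ⟨G', h1, h2⟩ := hstep d x.1 x.2
    exact ⟨⟨G', h1⟩, h2⟩
  choose f hf using hstep'
  obtain ⟨G0, hG0⟩ := hgood 0
  let g : ∀ d, {G // good d G} := fun d => Nat.rec ⟨G0, hG0⟩ (fun d x => f d x) d
  exact ⟨fun d => (g d).1, fun d => (g d).2.1, fun d => hf d (g d)⟩

lemma ofFn_succ_app (m : ℕ) (f : ℕ → Q) :
    (List.ofFn fun i : Fin (m+2) => f i) = (List.ofFn fun i : Fin (m+1) => f i) ++ [f (m+1)] := by
  rw [List.ofFn_succ']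
  simp

theorem lang_plus [Finite Q]
    (hFr : Reflexive F) (hFt : Transitive F) (hF : ForwardSim A F)
    (hunamb : Unambiguous A F)
    (hBr : Reflexive B) (hBt : Transitive B) (hB : BackwardSim A F B)
    (hM : IsMediated F B M)
    (hrun : IsRun (extABA A M) w Tp) (hroot : [A.ι] ∈ Tp)
    (hacc : Accepting (extABA A M) Tp) :
    w ∈ ABA.Lang A := by
  classical
  have hst : ∀ u ∈ Tp, ∃ p, M p (lastSt A u) ∧ succs Tp u ∈ A.δ p (w (u.length - 1)) :=
    fun u hu => hrun.step u hu
  haveI : Inhabited Q := ⟨A.ι⟩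
  choose! wit hwit1 hwit2 using hst
  have hwit : ∀ u ∈ Tp, M (wit u) (lastSt A u) ∧ succs Tp u ∈ A.δ (wit u) (w (u.length - 1)) :=
    fun u hu => ⟨hwit1 u hu, hwit2 u hu⟩
  have hex : ∀ d, ∃ G, PSub A M w Tp d [A.ι] G A.ι := by
    intro d
    obtain ⟨s, G, hBs, hP⟩ :=
      (build_rebuild hFr hFt hF hunamb hBr hBt hB hM wit hwit d).2 [A.ι] hroot A.ι
        (hM.refl A.ι)
    have hs : s = A.ι := (hB A.ι s hBs).1 rfl
    rw [hs] at hP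
    exact ⟨G, hP⟩
  obtain ⟨g, hg, hco⟩ := chain_exists hex
  -- monotonicity of the chain
  have hmono : ∀ d, g d ⊆ g (d+1) := by
    intro d τ hτ
    rw [← hco d] at hτ
    exact hτ.1
  have hmono' : ∀ d e, d ≤ e → g d ⊆ g e := by
    intro d e hde
    induction e with
    | zero =>
      have : d = 0 := Nat.le_zero.mp hde
      rw [this]
    | succ e ihe =>
      rcases Nat.lt_or_ge d (e+1) with h | h
      · exact le_trans (ihe (by omega)) (hmono e)
      · have : d = e + 1 := by omega
        rw [this]
  have hdown : ∀ d e, d ≤ e → ∀ τ ∈ g e, τ.length ≤ d + 1 → τ ∈ g d := by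
    intro d e hde
    obtain ⟨k, rfl⟩ := Nat.exists_eq_add_of_le hde
    induction k with
    | zero =>
      intro τ hτ _
      rwa [Nat.add_zero] at hτ
    | succ k ihk =>
      intro τ hτ hlen
      apply ihk (by omega)
      · rw [← hco (d+k)]
        exact ⟨hτ, by omega⟩
      · exact hlen
  set Gω : Set (List (Q × Q)) := ⋃ d, g d with hGω
  have hmemω : ∀ τ, τ ∈ Gω ↔ ∃ d, τ ∈ g d := fun τ => Set.mem_iUnion
  have hmemω' : ∀ τ ∈ Gω, ∀ d, τ.length ≤ d + 1 → τ ∈ g d := by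
    intro τ hτ d hlen
    obtain ⟨e, he⟩ := (hmemω τ).1 hτ
    rcases Nat.le_total d e with h | h
    · exact hdown d e h τ he hlen
    · exact hmono' e d h he
  have hωne : ∀ τ ∈ Gω, τ ≠ [] := by
    intro τ hτ
    obtain ⟨e, he⟩ := (hmemω τ).1 hτ
    exact psub_ne_nil (hg e) τ he
  have hωup : ∀ d, g d ⊆ Gω := fun d => Set.subset_iUnion g d
  have hginj : ∀ τ ∈ Gω, ∀ σ ∈ Gω, τ.map Prod.fst = σ.map Prod.fst → τ = σ := by
    intro τ hτ σ hσ he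
    obtain ⟨e1, he1⟩ := (hmemω τ).1 hτ
    obtain ⟨e2, he2⟩ := (hmemω σ).1 hσ
    exact psub_fst_inj (hg (max e1 e2)) τ (hmono' e1 _ (le_max_left _ _) he1)
      σ (hmono' e2 _ (le_max_right _ _) he2) he
  have hhdω : ∀ τ ∈ Gω, τ.head? = some (A.ι, A.ι) := by
    intro τ hτ
    obtain ⟨e, he⟩ := (hmemω τ).1 hτ
    have := (hg e).head_eq τ he
    rwa [lastSt_single] at this
  set S : Set (List Q) := {π | ∃ τ ∈ Gω, τ.map Prod.fst = π} with hS
  have hrootS : [A.ι] ∈ S := by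
    refine ⟨[(A.ι, A.ι)], hωup 0 ?_, rfl⟩
    have := (hg 0).root_mem
    rwa [lastSt_single] at this
  -- the successors of a node of S
  have hsuccs : ∀ τ ∈ Gω, succs S (τ.map Prod.fst) = fsuccs (g τ.length) τ := by
    intro τ hτ
    have hτg : τ ∈ g τ.length := hmemω' τ hτ _ (Nat.le_succ _)
    ext x
    constructor
    · rintro ⟨σ, hσ, hmap⟩
      have hσlen : σ.length = τ.length + 1 := by
        have := congrArg List.length hmap
        simpa using this
      have hσg : σ ∈ g τ.length := hmemω' σ hσ _ (by omega)
      have hσne : σ ≠ [] := hωne σ hσ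
      have hσd : σ.dropLast ++ [σ.getLast hσne] = σ := List.dropLast_append_getLast hσne
      have hσ0 : σ.dropLast ≠ [] := by
        intro hc
        have : σ.length = 1 := by rw [← hσd, hc]; rfl
        have hτ1 : 1 ≤ τ.length := List.length_pos_iff.mpr (hωne τ hτ)
        omega
      have hσdg : σ.dropLast ∈ g τ.length :=
        (hg τ.length).pref σ hσg σ.dropLast (List.dropLast_prefix σ) hσ0
      have hms : σ.dropLast.map Prod.fst ++ [(σ.getLast hσne).1] = τ.map Prod.fst ++ [x] := by
        have : (σ.dropLast ++ [σ.getLast hσne]).map Prod.fst = τ.map Prod.fst ++ [x] := by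
          rw [hσd, hmap]
        rw [List.map_append] at this
        exact this
      have hinj := List.append_inj' hms (by simp)
      have hdτ : σ.dropLast = τ :=
        psub_fst_inj (hg τ.length) _ hσdg τ hτg hinj.1
      refine ⟨(σ.getLast hσne).2, ?_⟩
      have : σ.dropLast ++ [((σ.getLast hσne).1, (σ.getLast hσne).2)] ∈ g τ.length := by
        rw [Prod.mk.eta, hσd]
        exact hσg
      rw [hdτ] at this
      have hx : (σ.getLast hσne).1 = x := by
        have := hinj.2; simpa using this
      rwa [hx] at this
    · rintro ⟨b, hb⟩
      exact ⟨τ ++ [(x, b)], hωup _ hb, by simp⟩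
  have hstep : ∀ π ∈ S, succs S π ∈ A.δ (lastSt A π) (w (π.length - 1)) := by
    rintro π ⟨τ, hτ, rfl⟩
    have hτg : τ ∈ g τ.length := hmemω' τ hτ _ (Nat.le_succ _)
    rw [hsuccs τ hτ]
    have htr := (hg τ.length).trans_ok τ hτg le_rfl
    have harith : ([A.ι] : List Q).length + τ.length - 2 = (τ.map Prod.fst).length - 1 := by
      simp
      omega
    rwa [harith] at htr
  have htree : IsTree S := by
    constructor
    · rintro ⟨τ, hτ, hmap⟩
      exact hωne τ hτ (List.map_eq_nil_iff.mp hmap)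
    · rintro π ⟨τ, hτ, rfl⟩ ρ hρ hne
      obtain ⟨e, he⟩ := (hmemω τ).1 hτ
      set τ' := τ.take ρ.length with hτ'
      have hτ'ne : τ' ≠ [] := by
        rw [hτ']
        intro hc
        have := congrArg List.length hc
        simp at this
        rcases this with h | h
        · cases ρ
          · exact hne rfl
          · simp at h
        · exact hωne τ hτ h
      have hτ'g : τ' ∈ g e := (hg e).pref τ he τ' (List.take_prefix _ _) hτ'ne
      refine ⟨τ', hωup e hτ'g, ?_⟩
      rw [hτ', List.map_take]
      exact (List.prefix_iff_eq_take.1 hρ).symm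
    · refine ⟨A.ι, hrootS, ?_⟩
      rintro q ⟨τ, hτ, hmap⟩
      have hlen : τ.length = 1 := by
        have := congrArg List.length hmap; simpa using this
      obtain ⟨e0, rfl⟩ := List.length_eq_one_iff.mp hlen
      have := hhdω _ hτ
      simp at this
      rw [this] at hmap
      simpa using hmap.symm
  -- acceptance
  have hAcc : Accepting A S := by
    intro ξ hξ
    have hπ : ∀ n, (List.ofFn fun i : Fin (n+1) => ξ i) ∈ S := hξ
    have hπsucc : ∀ n, (List.ofFn fun i : Fin (n+2) => ξ i)
        = (List.ofFn fun i : Fin (n+1) => ξ i) ++ [ξ (n+1)] := fun n => ofFn_succ_app n ξ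
    have hπlen : ∀ n, (List.ofFn fun i : Fin (n+1) => ξ i).length = n + 1 := by
      intro n; simp
    choose τf hτf1 hτf2 using hπ
    have hcoh : ∀ n, (τf (n+1)).take (n+1) = τf n := by
      intro n
      have hlen1 : (τf (n+1)).length = n + 2 := by
        have := congrArg List.length (hτf2 (n+1))
        simpa using this
      apply hginj
      · obtain ⟨e, he⟩ := (hmemω _).1 (hτf1 (n+1))
        apply hωup e
        apply (hg e).pref _ he _ (List.take_prefix _ _)
        intro hc
        have := congrArg List.length hc
        simp [hlen1] at this
      · exact hτf1 n
      · rw [List.map_take, hτf2 (n+1), hτf2 n, hπsucc n]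
        apply List.take_left'
        exact hπlen n
    have hdecomp : ∀ n, ∃ e : Q × Q, τf (n+1) = τf n ++ [e] ∧ e.1 = ξ (n+1) := by
      intro n
      have hlen1 : (τf (n+1)).length = n + 2 := by
        have := congrArg List.length (hτf2 (n+1))
        simpa using this
      have hsplit : (τf (n+1)).take (n+1) ++ (τf (n+1)).drop (n+1) = τf (n+1) :=
        List.take_append_drop _ _
      have hdlen : ((τf (n+1)).drop (n+1)).length = 1 := by
        rw [List.length_drop, hlen1]
        omega
      obtain ⟨e, he⟩ := List.length_eq_one_iff.mp hdlen
      refine ⟨e, ?_, ?_⟩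
      · rw [← hsplit, hcoh n, he]
      · have hm : (τf n ++ [e]).map Prod.fst
            = (List.ofFn fun i : Fin (n+1) => ξ i) ++ [ξ (n+1)] := by
          rw [← hcoh n, ← he, hsplit, hτf2 (n+1), hπsucc n]
        rw [List.map_append, hτf2 n] at hm
        have := List.append_cancel_left hm
        simpa using this
    choose ef hef1 hef2 using hdecomp
    set ζ : ℕ → Q := fun n => Nat.rec A.ι (fun m _ => (ef m).2) n with hζ
    have hζ0 : ζ 0 = A.ι := rfl
    have hζs : ∀ n, ζ (n+1) = (ef n).2 := fun n => rfl
    have hτf0 : τf 0 = [(A.ι, A.ι)] := by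
      have hlen0 : (τf 0).length = 1 := by
        have := congrArg List.length (hτf2 0)
        simpa using this
      obtain ⟨e0, he0⟩ := List.length_eq_one_iff.mp hlen0
      have := hhdω _ (hτf1 0)
      rw [he0] at this ⊢
      simp at this
      rw [this]
    have hsnd : ∀ n, (τf n).map Prod.snd = (List.ofFn fun i : Fin (n+1) => ζ i) := by
      intro n
      induction n with
      | zero =>
        rw [hτf0]
        simp [hζ0]
      | succ n ihn =>
        rw [hef1 n, List.map_append, ihn, ofFn_succ_app n ζ, hζs n]
        rfl
    have hTpmem : ∀ τ ∈ Gω, τ.map Prod.snd ∈ Tp := by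
      intro τ hτ
      have hτne := hωne τ hτ
      have hτg : τ ∈ g τ.length := hmemω' τ hτ _ (Nat.le_succ _)
      by_cases h0 : τ.dropLast = []
      · have hlen : τ.length = 1 := by
          rw [← List.dropLast_append_getLast hτne, h0]; rfl
        obtain ⟨e0, rfl⟩ := List.length_eq_one_iff.mp hlen
        have := hhdω _ hτ
        simp at this
        rw [this]
        simpa using hroot
      · have hτd : τ.dropLast ++ [τ.getLast hτne] = τ := List.dropLast_append_getLast hτne
        have hτdg : τ.dropLast ∈ g τ.length :=
          (hg τ.length).pref τ hτg _ (List.dropLast_prefix τ) h0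
        have hmem2 : τ.dropLast ++ [((τ.getLast hτne).1, (τ.getLast hτne).2)] ∈ g τ.length := by
          rw [Prod.mk.eta, hτd]
          exact hτg
        have hsnd_ok := (hg τ.length).snd_ok τ.dropLast hτdg _ _ hmem2
        -- compute the path
        obtain ⟨f0, t0, hft⟩ := List.exists_cons_of_ne_nil h0
        have hf0 : f0 = (A.ι, A.ι) := by
          have := hhdω τ.dropLast (hωup _ hτdg)
          rw [hft] at this
          simpa using this
        rw [hft, hf0] at hsnd_ok
        simp only [List.map_cons, List.drop_succ_cons, List.drop_zero] at hsnd_ok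
        have : ([A.ι] ++ t0.map Prod.snd) ++ [(τ.getLast hτne).2] ∈ Tp := hsnd_ok
        rw [← hτd, hft, hf0]
        rw [List.map_append, List.map_cons]
        simpa using this
    have hinfζ : InfBranch Tp ζ := by
      intro n
      rw [← hsnd n]
      exact hTpmem _ (hτf1 n)
    intro n
    obtain ⟨m, hm, hmem⟩ := hacc ζ hinfζ (n+1)
    obtain ⟨k, rfl⟩ : ∃ k, m = k + 1 := ⟨m - 1, by omega⟩
    have hτfg : τf (k+1) ∈ g (k+1) := by
      apply hmemω' _ (hτf1 (k+1))
      have := congrArg List.length (hτf2 (k+1))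
      simp at this
      omega
    have hnc := (hg (k+1)).nc (τf k) (ef k).1 (ef k).2
      (by rw [Prod.mk.eta, ← hef1 k]; exact hτfg)
      (hωne _ (hτf1 k)) (by rw [← hζs k]; exact hmem)
    refine ⟨k+1, by omega, ?_⟩
    rw [← hef2 k]
    exact hnc
  exact ⟨S, ⟨htree, hstep⟩, hrootS, hAcc⟩

end Med

/-- Extending `A` according to a mediated preorder preserves the language:
`L(A⁺) = L(A)`. -/
theorem stmt_17 [Finite σ] [Finite Q] (A : ABA σ Q) (hne : A.NoEmpty)
    (F B M : Q → Q → Prop)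
    (hFr : Reflexive F) (hFt : Transitive F) (hF : ForwardSim A F)
    (hunamb : Unambiguous A F)
    (hBr : Reflexive B) (hBt : Transitive B) (hB : BackwardSim A F B)
    (hM : IsMediated F B M) :
    ABA.Lang (extABA A M) = ABA.Lang A := by
  classical
  apply Set.Subset.antisymm
  · -- hard direction
    intro wd hwd
    obtain ⟨Tp, hrun, hroot, hacc⟩ := hwd
    exact Med.lang_plus hFr hFt hF hunamb hBr hBt hB hM hrun hroot hacc
  · -- easy direction
    intro wd hwd
    obtain ⟨T, hrunA, hrootA, haccA⟩ := hwd
    refine ⟨T, ⟨hrunA.tree, ?_⟩, hrootA, ?_⟩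
    · intro π hπ
      exact ⟨lastSt A π, hM.refl _, hrunA.step π hπ⟩
    · intro ξ hξ n
      obtain ⟨m, hm, hmem⟩ := haccA ξ hξ n
      exact ⟨m, hm, ξ m, hmem, hM.refl _, hM.refl _⟩
end

section
/- Let A be an alternating Büchi automaton, ≼_F a reflexive and transitive forward simulation on A such that A is ≼_F-unambiguous, ≼_B a reflexive and transitive backward simulation on A parametrised by ≼_F, ≼_M a mediated preorder induced by ≼_F and ≼_B, and ≡_M = ≼_M ∩ ≼_M^{-1} the mediated equivalence. Then quotienting A with respect to ≡_M preserves the language: L(A/≡_M) = L(A). -/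
variable {σ Q : Type*}

/-- The quotient automaton `A/≡` of `A` by the equivalence `e`. -/
def quotABA (A : ABA σ Q) (e : Q → Q → Prop) : ABA σ (Quot e) where
  ι := Quot.mk e A.ι
  δ := fun x a => {S | ∃ p, Quot.mk e p = x ∧ ∃ P ∈ A.δ p a, S = Quot.mk e '' P}
  α := Quot.mk e '' A.α

section Prelim

open Classical

variable {Q : Type*}

/-- Members of an infinite set of lists with the same-prefix property. -/
private lemma list_finite_length_le (Q : Type*) [Finite Q] (k : ℕ) :
    {l : List Q | l.length ≤ k}.Finite := by
  induction k with
  | zero =>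
    apply Set.Finite.subset (Set.finite_singleton ([] : List Q))
    intro l hl
    simp only [Set.mem_setOf_eq, Nat.le_zero, List.length_eq_zero_iff] at hl
    simp [hl]
  | succ k ih =>
    apply Set.Finite.subset (Set.Finite.insert ([] : List Q)
      (Set.Finite.image (fun p : Q × List Q => p.1 :: p.2)
        (Set.Finite.prod Set.finite_univ ih)))
    rintro (_ | ⟨a, t⟩) hl
    · exact Set.mem_insert _ _
    · refine Set.mem_insert_of_mem _ ⟨⟨a, t⟩, ⟨Set.mem_univ _, ?_⟩, rfl⟩
      simp only [Set.mem_setOf_eq, List.length_cons] at hl ⊢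
      omega

private lemma infinite_fiber {β : Type*} (I : Set ℕ) (hI : I.Infinite) (f : ℕ → β)
    (V : Set β) (hV : V.Finite) (hf : ∀ n ∈ I, f n ∈ V) :
    ∃ v, {n | n ∈ I ∧ f n = v}.Infinite := by
  by_contra h
  push_neg at h
  have : I ⊆ ⋃ v ∈ V, {n | n ∈ I ∧ f n = v} := by
    intro n hn
    exact Set.mem_biUnion (hf n hn) ⟨hn, rfl⟩
  exact hI (Set.Finite.subset (Set.Finite.biUnion hV (fun v _ => h v)) this)

private lemma prefix_getD {l l' : List Q} (h : l <+: l') {i : ℕ} (hi : i < l.length) (d : Q) :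
    l'.getD i d = l.getD i d := by
  obtain ⟨t, rfl⟩ := h
  exact List.getD_append l t d i hi

/-- A strict prefix can be extended by one element within the longer list. -/
private lemma prefix_snoc_of_strict {π ρ : List Q} (h : π <+: ρ) (hne : π ≠ ρ) (d : Q) :
    π ++ [ρ.getD π.length d] <+: ρ := by
  obtain ⟨t, rfl⟩ := h
  cases t with
  | nil => simp at hne
  | cons a t' =>
    have : (π ++ a :: t').getD π.length d = a := by
      rw [List.getD_append_right π _ d π.length le_rfl]
      simp
    rw [this]
    refine ⟨t', by simp⟩

/-- König's lemma: an infinite, prefix-closed set of nonempty lists over a finite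
type has an infinite branch. -/
private lemma konig [Finite Q] (S : Set (List Q))
    (hpc : ∀ π ∈ S, ∀ ρ : List Q, ρ <+: π → ρ ≠ [] → ρ ∈ S)
    (hinf : S.Infinite) : ∃ ξ : ℕ → Q, InfBranch S ξ := by
  have hQ : Nonempty Q := by
    by_contra hQ
    simp only [not_nonempty_iff] at hQ
    apply hinf
    apply Set.Finite.subset (Set.finite_singleton ([] : List Q))
    intro l _
    cases l with
    | nil => simp
    | cons a t => exact (hQ.elim a)
  obtain ⟨d⟩ := hQ
  set Ext : List Q → Set (List Q) := fun π => {ρ | ρ ∈ S ∧ π <+: ρ} with hExt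
  have hstep : ∀ π : List Q, (Ext π).Infinite → ∃ q : Q, (Ext (π ++ [q])).Infinite := by
    intro π hπ
    by_contra h
    push_neg at h
    have hsub : Ext π \ {π} ⊆ ⋃ q ∈ (Set.univ : Set Q), Ext (π ++ [q]) := by
      rintro ρ ⟨⟨hρS, hρpre⟩, hne⟩
      simp only [Set.mem_singleton_iff] at hne
      refine Set.mem_biUnion (Set.mem_univ (ρ.getD π.length d)) ?_
      exact ⟨hρS, prefix_snoc_of_strict hρpre (fun hh => hne hh.symm) d⟩
    have : (Ext π \ {π}).Finite :=
      Set.Finite.subset (Set.Finite.biUnion Set.finite_univ (fun q _ => h q)) hsub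
    exact (hπ.diff (Set.finite_singleton π)) this
  -- build the chain
  have hE0 : (Ext ([] : List Q)).Infinite := by
    apply Set.Infinite.mono (s := S) _ hinf
    intro ρ hρ; exact ⟨hρ, List.nil_prefix⟩
  let f : ∀ n : ℕ, {π : List Q // π.length = n ∧ (Ext π).Infinite} := fun n =>
    Nat.rec ⟨[], rfl, hE0⟩
      (fun _ p => ⟨p.1 ++ [Classical.choose (hstep p.1 p.2.2)],
        by simp [p.2.1], Classical.choose_spec (hstep p.1 p.2.2)⟩) n
  have hflen : ∀ n, (f n).1.length = n := fun n => (f n).2.1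
  have hfsucc : ∀ n, ∃ q, (f (n+1)).1 = (f n).1 ++ [q] := fun n => ⟨_, rfl⟩
  have hfpre : ∀ m n, m ≤ n → (f m).1 <+: (f n).1 := by
    intro m n h
    induction n with
    | zero => cases Nat.le_zero.mp h; exact List.prefix_refl _
    | succ n ih =>
      rcases Nat.le_succ_iff_eq_or_le.mp h with h' | h'
      · rw [h']
      · obtain ⟨q, hq⟩ := hfsucc n
        exact (ih h').trans (hq ▸ List.prefix_append _ _)
  refine ⟨fun n => (f (n+1)).1.getD n d, ?_⟩
  intro n
  have hmem : (f (n+1)).1 ∈ S := by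
    obtain ⟨ρ, ⟨hρS, hρpre⟩⟩ := (f (n+1)).2.2.nonempty
    refine hpc ρ hρS _ hρpre ?_
    intro hnil
    have := hflen (n+1)
    rw [hnil] at this
    simp at this
  have : (List.ofFn fun i : Fin (n + 1) => (f (i.1+1)).1.getD i.1 d) = (f (n+1)).1 := by
    apply List.ext_getElem (by simp [hflen])
    intro i h1 h2
    rw [List.getElem_ofFn]
    have hi : i < n + 1 := by simpa using h1
    have h3 : i < (f (i+1)).1.length := by rw [hflen]; omega
    rw [← List.getD_eq_getElem _ d h2]
    rw [prefix_getD (hfpre (i+1) (n+1) hi) h3 d]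
  rw [this]
  exact hmem

end Prelim
section Core

set_option linter.unusedSectionVars false

open Classical

/-- Finite trees used to approximate runs: leaves carry the corresponding
path of the original run. -/
inductive FT (Q : Type*) where
  | leaf (q : Q) (o : List Q)
  | node (q : Q) (S : Set Q) (c : Q → FT Q)

namespace FT

variable {Q : Type*}

def root : FT Q → Q
  | .leaf q _ => q
  | .node q _ _ => q

/-- The maximal paths of the tree together with the associated original path. -/
def pathData : FT Q → Set (List Q × List Q)
  | .leaf q o => {([q], o)}
  | .node q S c => {po | ∃ x ∈ S, ∃ p o, (p, o) ∈ pathData (c x) ∧ po = (q :: p, o)}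

end FT

variable {σ Q : Type*} [Finite σ] [Finite Q]
variable (A : ABA σ Q) (w : ℕ → σ) (M : Q → Q → Prop) (Tp : Set (List Q))

/-- The invariant data carried by a leaf: the original node `o` has a transition
from source `p` that is `M`-below the leaf state, together with an accepting
witness when the original state is accepting in `A⁺`. -/
def Phi (o : List Q) (q : Q) : Prop :=
  ∃ p, succs Tp o ∈ A.δ p (w (o.length - 1)) ∧ M p q ∧
    (lastSt A o ∈ (extABA A M).α → ∃ qα ∈ A.α, M p qα ∧ M qα q)

/-- Structural invariant: internal nodes at levels `j < D` carry real transitions,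
leaves sit at level `D` and carry `Phi`-data. -/
def SubA (D : ℕ) : FT Q → ℕ → Prop
  | .leaf q o, j => j = D ∧ o.length = D ∧ o ∈ Tp ∧ Phi A w M Tp o q
  | .node q S c, j => j < D ∧ S ∈ A.δ q (w (j - 1)) ∧
      ∀ x ∈ S, (c x).root = x ∧ SubA D (c x) (j + 1)

/-- Acceptance domination: on every maximal path, positions whose original state is
in `α⁺` carry states in `α` (positions strictly below the leaf level). -/
def DOM (D j : ℕ) (t : FT Q) : Prop :=
  ∀ p o, (p, o) ∈ FT.pathData t → ∀ i, i + j < D →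
    o.getD (j - 1 + i) A.ι ∈ (extABA A M).α → p.getD i A.ι ∈ A.α

def SubT (D j : ℕ) (t : FT Q) : Prop := SubA A w M Tp D t j ∧ DOM A M D j t

variable {A w M Tp}

lemma pathData_length {D : ℕ} {t : FT Q} {j : ℕ} (h : SubA A w M Tp D t j)
    {p o : List Q} (hpo : (p, o) ∈ FT.pathData t) :
    p.length + j = D + 1 ∧ o.length = D := by
  induction t generalizing j p o with
  | leaf q o' =>
    obtain ⟨rfl, hlen, _, _⟩ := h
    simp only [FT.pathData, Set.mem_singleton_iff, Prod.mk.injEq] at hpo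
    obtain ⟨rfl, rfl⟩ := hpo
    exact ⟨by simp [Nat.add_comm], hlen⟩
  | node q S c ih =>
    obtain ⟨hj, hS, hc⟩ := h
    obtain ⟨x, hx, p', o', hp', heq⟩ := hpo
    simp only [Prod.mk.injEq] at heq
    obtain ⟨rfl, rfl⟩ := heq
    obtain ⟨h1, h2⟩ := ih x ((hc x hx).2) hp'
    constructor
    · simp only [List.length_cons]; omega
    · exact h2

lemma pathData_nonempty (hne : A.NoEmpty) {D : ℕ} {t : FT Q} {j : ℕ}
    (h : SubA A w M Tp D t j) : ∃ pd, pd ∈ FT.pathData t := by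
  induction t generalizing j with
  | leaf q o => exact ⟨([q], o), rfl⟩
  | node q S c ih =>
    obtain ⟨hj, hS, hc⟩ := h
    have hSne : S.Nonempty := by
      rcases Set.eq_empty_or_nonempty S with h | h
      · exact absurd (h ▸ hS) (hne q (w (j - 1)))
      · exact h
    obtain ⟨x, hx⟩ := hSne
    obtain ⟨⟨p, o⟩, hp⟩ := ih x ((hc x hx).2) 
    exact ⟨(q :: p, o), x, hx, p, o, hp, rfl⟩

end Core
section Core2

set_option linter.unusedSectionVars false
open Classical

variable {σ Q : Type*} [Finite σ] [Finite Q]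
variable {A : ABA σ Q} {w : ℕ → σ} {M F B : Q → Q → Prop} {Tp : Set (List Q)}

private lemma getLastD_eq_getD {l : List Q} (h : l ≠ []) (d : Q) :
    l.getLastD d = l.getD (l.length - 1) d := by
  rw [List.getLastD_eq_getLast?, List.getLast?_eq_getLast h]
  have hlt : l.length - 1 < l.length := by
    cases l with
    | nil => exact absurd rfl h
    | cons a t => simp
  rw [List.getD_eq_getElem _ _ hlt, List.getLast_eq_getElem]
  rfl

section WithHyps

variable (hFr : Reflexive F) (hFt : Transitive F) (hF : ForwardSim A F)
  (hunamb : Unambiguous A F) (hBr : Reflexive B) (hBt : Transitive B)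
  (hB : BackwardSim A F B) (hM : IsMediated F B M) (hne : A.NoEmpty)

include hM in
lemma Phi_mono {o : List Q} {q y : Q} (h : Phi A w M Tp o q) (hqy : F q y) :
    Phi A w M Tp o y := by
  obtain ⟨p, hS, hpq, hcr⟩ := h
  refine ⟨p, hS, hM.fwd_ext _ _ _ hpq hqy, fun hα => ?_⟩
  obtain ⟨qα, h1, h2, h3⟩ := hcr hα
  exact ⟨qα, h1, h2, hM.fwd_ext _ _ _ h3 hqy⟩

include hM in
/-- New leaf data after extending a leaf: each new child `r` F-above an original
successor `c` gets the extended original path. -/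
lemma Phi_extend (hrun : IsRun (extABA A M) w Tp) {o : List Q} (ho : o ∈ Tp)
    {c r : Q} (hc : c ∈ succs Tp o) (hcr : F c r) :
    o ++ [c] ∈ Tp ∧ Phi A w M Tp (o ++ [c]) r := by
  have hmem : o ++ [c] ∈ Tp := hc
  refine ⟨hmem, ?_⟩
  have hstep := hrun.step _ hmem
  obtain ⟨p', hp'M, hp'δ⟩ := hstep
  have hlast : lastSt (extABA A M) (o ++ [c]) = c := List.getLastD_concat
  rw [hlast] at hp'M
  refine ⟨p', hp'δ, hM.fwd_ext _ _ _ hp'M hcr, fun hα => ?_⟩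
  have hlast2 : lastSt A (o ++ [c]) = c := List.getLastD_concat
  rw [hlast2] at hα
  obtain ⟨qα, hqαA, hqαc, hcqα⟩ := hα
  exact ⟨qα, hqαA, hM.trans hp'M hcqα, hM.fwd_ext _ _ _ hqαc hcr⟩

include hF hBt hB hM in
/-- The conversion lemma: a leaf with `Phi`-data can be replaced (via the mediator)
by a backward-larger state with a real matching transition, accepting whenever the
original state was accepting in `A⁺`. -/
lemma convert {o : List Q} {y p : Q}
    (hS : succs Tp o ∈ A.δ p (w (o.length - 1))) (hpy : M p y)
    (hcr : lastSt A o ∈ (extABA A M).α → ∃ qα ∈ A.α, M p qα ∧ M qα y) :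
    ∃ s₁, B y s₁ ∧ (lastSt A o ∈ (extABA A M).α → s₁ ∈ A.α) ∧
      ∃ R ∈ A.δ s₁ (w (o.length - 1)), ∀ r ∈ R, ∃ c ∈ succs Tp o, F c r := by
  by_cases hα : lastSt A o ∈ (extABA A M).α
  · obtain ⟨qα, hqαA, hpqα, hqαy⟩ := hcr hα
    obtain ⟨s₀, hFqαs₀, hBys₀⟩ := hM.mediator _ _ hqαy
    have hs₀A : s₀ ∈ A.α := (hF _ _ hFqαs₀).1 hqαA
    have hps₀ : M p s₀ := hM.fwd_ext _ _ _ hpqα hFqαs₀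
    obtain ⟨s₁, hFps₁, hBs₀s₁⟩ := hM.mediator _ _ hps₀
    have hs₁A : s₁ ∈ A.α := (hB _ _ hBs₀s₁).2.1 hs₀A
    obtain ⟨R, hR, hcov⟩ := (hF _ _ hFps₁).2 _ _ hS
    exact ⟨s₁, hBt hBys₀ hBs₀s₁, fun _ => hs₁A, R, hR, hcov⟩
  · obtain ⟨s₁, hFps₁, hBys₁⟩ := hM.mediator _ _ hpy
    obtain ⟨R, hR, hcov⟩ := (hF _ _ hFps₁).2 _ _ hS
    exact ⟨s₁, hBys₁, fun h => absurd h hα, R, hR, hcov⟩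

lemma subT_child {D j : ℕ} (hj : 1 ≤ j) {q : Q} {S : Set Q} {c : Q → FT Q}
    (h : SubT A w M Tp D j (FT.node q S c)) {x : Q} (hx : x ∈ S) :
    SubT A w M Tp D (j + 1) (c x) := by
  obtain ⟨⟨hjD, hS, hc⟩, hdom⟩ := h
  refine ⟨(hc x hx).2, ?_⟩
  intro p o hpo i hi hα
  have := hdom (q :: p) o ⟨x, hx, p, o, hpo, rfl⟩ (i + 1) (by omega)
    (by 
      have : j - 1 + (i + 1) = j + 1 - 1 + i := by omega
      rw [this]; exact hα)
  simpa using this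

include hF hM in
/-- Raising lemma: a processed subtree can be recreated from any `F`-larger root,
preserving original-path assignments. -/
lemma raise {D : ℕ} {t : FT Q} {j : ℕ} {r : Q} (hj : 1 ≤ j)
    (h : SubT A w M Tp D j t) (hr : F t.root r) :
    ∃ t' : FT Q, t'.root = r ∧ SubT A w M Tp D j t' ∧
      ∀ p' o', (p', o') ∈ FT.pathData t' → ∃ p, (p, o') ∈ FT.pathData t := by
  induction t generalizing j r with
  | leaf q o =>
    obtain ⟨⟨rfl, hlen, hoTp, hphi⟩, _⟩ := h
    refine ⟨FT.leaf r o, rfl, ⟨⟨rfl, hlen, hoTp, Phi_mono hM hphi hr⟩, ?_⟩, ?_⟩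
    · intro p' o' hpo i hi
      omega
    · rintro p' o' hpo
      simp only [FT.pathData, Set.mem_singleton_iff, Prod.mk.injEq] at hpo
      exact ⟨[q], by simp [FT.pathData, hpo.2]⟩
  | node q S c ih =>
    obtain ⟨⟨hjD, hS, hc⟩, hdom⟩ := h
    obtain ⟨E, hE, hcov⟩ := (hF _ _ hr).2 _ _ hS
    set G : Q → FT Q → Prop := fun e t'' => t''.root = e ∧ SubT A w M Tp D (j+1) t'' ∧
      ∀ p' o', (p', o') ∈ FT.pathData t'' → ∃ x ∈ S, ∃ p, (p, o') ∈ FT.pathData (c x)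
      with hG
    have hex : ∀ e ∈ E, ∃ t'', G e t'' := by
      intro e he
      obtain ⟨x, hx, hFxe⟩ := hcov e he
      have hroot : (c x).root = x := (hc x hx).1
      obtain ⟨t'', h1, h2, h3⟩ := ih x (j := j + 1) (r := e) (by omega)
        (subT_child hj ⟨⟨hjD, hS, hc⟩, hdom⟩ hx) (by rw [hroot]; exact hFxe)
      exact ⟨t'', h1, h2, fun p' o' hpo => ⟨x, hx, h3 p' o' hpo⟩⟩
    set ch : Q → FT Q := fun e => if h : ∃ t'', G e t'' then Classical.choose h
      else FT.leaf A.ι [] with hch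
    have hchspec : ∀ e ∈ E, G e (ch e) := by
      intro e he
      rw [hch]
      simp only [hex e he, dif_pos]
      exact Classical.choose_spec (hex e he)
    refine ⟨FT.node r E ch, rfl, ⟨⟨hjD, hE, fun e he => ⟨(hchspec e he).1,
      (hchspec e he).2.1.1⟩⟩, ?_⟩, ?_⟩
    · -- DOM
      rintro p' o' ⟨e, he, pc, oc, hpc, heq⟩
      simp only [Prod.mk.injEq] at heq
      obtain ⟨rfl, rfl⟩ := heq
      intro i hi hα
      cases i with
      | zero =>
        obtain ⟨x, hx, p, hp⟩ := (hchspec e he).2.2 pc o' hpc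
        have := hdom (q :: p) o' ⟨x, hx, p, o', hp, rfl⟩ 0 (by omega) hα
        simp only [List.getD_cons_zero] at this ⊢
        exact (hF _ _ hr).1 this
      | succ i' =>
        have hd := (hchspec e he).2.1.2 pc o' hpc i' (by omega)
        simp only [List.getD_cons_succ]
        apply hd
        have : j - 1 + (i' + 1) = j + 1 - 1 + i' := by omega
        rw [← this]
        exact hα
    · rintro p' o' ⟨e, he, pc, oc, hpc, heq⟩
      simp only [Prod.mk.injEq] at heq
      obtain ⟨rfl, rfl⟩ := heq
      obtain ⟨x, hx, p, hp⟩ := (hchspec e he).2.2 pc o' hpc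
      exact ⟨q :: p, x, hx, p, o', hp, rfl⟩

end WithHyps
end Core2
section Core3

set_option linter.unusedSectionVars false
open Classical

variable {σ Q : Type*} [Finite σ] [Finite Q]
variable {A : ABA σ Q} {w : ℕ → σ} {M F B : Q → Q → Prop} {Tp : Set (List Q)}

variable (hFr : Reflexive F) (hFt : Transitive F) (hF : ForwardSim A F)
  (hunamb : Unambiguous A F) (hBr : Reflexive B) (hBt : Transitive B)
  (hB : BackwardSim A F B) (hM : IsMediated F B M) (hne : A.NoEmpty)

include hFr hFt in
/-- In a finite nonempty set there is an element minimal with respect to the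
preorder `F`. -/
private lemma exists_F_min :
    ∀ (n : ℕ) (N : Set Q), N.ncard ≤ n → N.Nonempty →
      ∃ e ∈ N, ∀ e' ∈ N, F e' e → F e e' := by
  intro n
  induction n with
  | zero =>
    intro N hcard hN
    rw [Nat.le_zero, Set.ncard_eq_zero (Set.toFinite N)] at hcard
    exact absurd (hcard ▸ hN) (by simp)
  | succ n ihn =>
    rintro N hcard ⟨a, ha⟩
    set N' := {x ∈ N | F x a ∧ ¬ F a x} with hN'
    by_cases hN'ne : N'.Nonempty
    · have haN' : a ∉ N' := by
        intro h
        exact h.2.2 (hFr a)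
      have hss : N' ⊂ N := ⟨fun x hx => hx.1, fun hsub => haN' (hsub ha)⟩
      have hlt : N'.ncard < N.ncard := Set.ncard_lt_ncard hss (Set.toFinite N)
      obtain ⟨e, heN', hmin⟩ := ihn N' (by omega) hN'ne
      have hFea : F e a := heN'.2.1
      refine ⟨e, heN'.1, fun e' he' hFe'e => ?_⟩
      have hFe'a : F e' a := hFt hFe'e hFea
      by_cases hae' : F a e'
      · exact hFt hFea hae'
      · exact hmin e' ⟨he', hFe'a, hae'⟩ hFe'e
    · refine ⟨a, ha, fun e' he' hFe'a => ?_⟩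
      by_contra hae'
      exact hN'ne ⟨e', he', hFe'a, hae'⟩

include hFr hFt hF hunamb hBr hBt hB hM in
/-- The resolution lemma: a subtree of the current approximation, raised to any
`F`-larger target state, can be rebuilt (with a backward-larger root) so that all
leaves advance one level, all internal transitions being real. -/
lemma res (hrun : IsRun (extABA A M) w Tp) {m : ℕ} :
    ∀ (t : FT Q), ∀ {j : ℕ}, 1 ≤ j → SubT A w M Tp m j t → ∀ {y : Q}, F t.root y →
    ∃ (yhat : Q) (t' : FT Q), B y yhat ∧ t'.root = yhat ∧ SubT A w M Tp (m + 1) j t' ∧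
      ∀ p' o', (p', o') ∈ FT.pathData t' →
        ∃ p o cc, (p, o) ∈ FT.pathData t ∧ o' = o ++ [cc] := by
  intro t
  induction t with
  | leaf q o =>
    intro j hj hsub y hqy
    obtain ⟨⟨rfl, hlen, hoTp, hphi⟩, _⟩ := hsub
    obtain ⟨p, hS, hpy, hcry⟩ := Phi_mono hM hphi hqy
    obtain ⟨s₁, hBys₁, hs₁α, R, hR, hcov⟩ := convert hF hBt hB hM hS hpy hcry
    set ch : Q → FT Q := fun r =>
      if h : ∃ c ∈ succs Tp o, F c r then FT.leaf r (o ++ [Classical.choose h])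
      else FT.leaf r [] with hch
    have hchspec : ∀ r ∈ R, ∃ c ∈ succs Tp o, F c r ∧
        ch r = FT.leaf r (o ++ [c]) := by
      intro r hr
      have h := hcov r hr
      obtain ⟨hc1, hc2⟩ := Classical.choose_spec h
      exact ⟨Classical.choose h, hc1, hc2, by rw [hch]; simp only [h, dif_pos]⟩
    refine ⟨s₁, FT.node s₁ R ch, hBys₁, rfl, ⟨⟨by omega, by rwa [hlen] at hR, ?_⟩, ?_⟩, ?_⟩
    · -- children wellformed
      intro r hr
      obtain ⟨c, hcm, hFcr, hchr⟩ := hchspec r hr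
      obtain ⟨hmem, hphi'⟩ := Phi_extend hM hrun hoTp hcm hFcr
      rw [hchr]
      exact ⟨rfl, rfl, by simp [hlen], hmem, hphi'⟩
    · -- DOM
      rintro p' o' ⟨r, hr, pc, oc, hpc, heq⟩
      simp only [Prod.mk.injEq] at heq
      obtain ⟨rfl, rfl⟩ := heq
      obtain ⟨c, hcm, hFcr, hchr⟩ := hchspec r hr
      rw [hchr] at hpc
      simp only [FT.pathData, Set.mem_singleton_iff, Prod.mk.injEq] at hpc
      obtain ⟨rfl, rfl⟩ := hpc
      intro i hi hα
      have hi0 : i = 0 := by omega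
      subst hi0
      simp only [List.getD_cons_zero]
      apply hs₁α
      have h1 : (o ++ [c]).getD (j - 1 + 0) A.ι = o.getD (j - 1) A.ι :=
        List.getD_append _ _ _ _ (by omega)
      rw [h1] at hα
      have hone : o ≠ [] := by intro h; rw [h] at hlen; simp at hlen; omega
      have h2 : lastSt A o = o.getD (j - 1) A.ι := by
        rw [lastSt, getLastD_eq_getD hone A.ι, hlen]
      rw [h2]
      exact hα
    · -- extension property
      rintro p' o' ⟨r, hr, pc, oc, hpc, heq⟩
      simp only [Prod.mk.injEq] at heq
      obtain ⟨rfl, rfl⟩ := heq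
      obtain ⟨c, hcm, hFcr, hchr⟩ := hchspec r hr
      rw [hchr] at hpc
      simp only [FT.pathData, Set.mem_singleton_iff, Prod.mk.injEq] at hpc
      exact ⟨[q], o, c, rfl, hpc.2⟩
  | node z S c ih =>
    intro j hj hsub y hzy
    obtain ⟨⟨hjm, hS, hc⟩, hdom⟩ := hsub
    have hzy' : F z y := hzy
    obtain ⟨E₀, hE₀, hcov₀⟩ := (hF _ _ hzy').2 _ _ hS
    -- the processed predicate
    set P : Q → Prop := fun e => ∃ te : FT Q, te.root = e ∧
        SubT A w M Tp (m + 1) (j + 1) te ∧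
        ∀ p' o', (p', o') ∈ FT.pathData te →
          ∃ x ∈ S, ∃ p o cc, (p, o) ∈ FT.pathData (c x) ∧ o' = o ++ [cc] with hP
    have hPraise : ∀ e rr, P e → F e rr → P rr := by
      rintro e rr ⟨te, hroot, hsub', hext⟩ hFerr
      obtain ⟨te', hroot', hsub'', hmap⟩ := raise hF hM (by omega) hsub'
        (by rw [hroot]; exact hFerr)
      refine ⟨te', hroot', hsub'', fun p' o' hpo => ?_⟩
      obtain ⟨p, hp⟩ := hmap p' o' hpo
      exact hext p o' hp
    -- the main loop
    have loop : ∀ (n : ℕ) (N : Set Q) (y' : Q) (E : Set Q),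
        ({q' | ∃ e ∈ N, F e q'}).ncard < n → B y y' → E ∈ A.δ y' (w (j - 1)) →
        N ⊆ E → (∀ e ∈ E, e ∉ N → P e) → (∀ e ∈ N, ∃ x ∈ S, F x e) →
        ∃ y'' E', B y y'' ∧ E' ∈ A.δ y'' (w (j - 1)) ∧ ∀ e ∈ E', P e := by
      intro n
      induction n with
      | zero => intro N y' E hcard; omega
      | succ n ihn =>
        intro N y' E hcard hBy hE hNE hproc hduty
        by_cases hNne : N.Nonempty
        · obtain ⟨e, heN, hmin⟩ := exists_F_min hFr hFt N.ncard N le_rfl hNne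
          obtain ⟨x, hxS, hFxe⟩ := hduty e heN
          have hsubcx : SubT A w M Tp m (j + 1) (c x) :=
            subT_child hj ⟨⟨hjm, hS, hc⟩, hdom⟩ hxS
          obtain ⟨ehat, tehat, hBeehat, hrootehat, hsubehat, hextehat⟩ := ih x (by omega) hsubcx
            (y := e) (by rw [(hc x hxS).1]; exact hFxe)
          have hPehat : P ehat := ⟨tehat, hrootehat, hsubehat, fun p' o' hpo => by
            obtain ⟨p, o, cc, hpo', heq⟩ := hextehat p' o' hpo
            exact ⟨x, hxS, p, o, cc, hpo', heq⟩⟩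
          obtain ⟨s', R', hehatR', hins, hBy's', hcovR'⟩ :=
            (hB e ehat hBeehat).2.2 (w (j - 1)) y' (E \ {e}) (by simp)
              (by rwa [Set.insert_diff_singleton, Set.insert_eq_self.mpr (hNE heN)])
          set N' := {rr ∈ insert ehat R' | ¬ P rr} with hN'
          have hN'sub : ∀ rr ∈ N', ∃ x' ∈ N, x' ≠ e ∧ F x' rr := by
            rintro rr ⟨hrr, hnP⟩
            rcases hrr with rfl | hrrR'
            · exact absurd hPehat hnP
            · obtain ⟨x', hx'E, hFx'rr⟩ := hcovR' rr hrrR'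
              by_cases hx'N : x' ∈ N
              · exact ⟨x', hx'N, fun h => hx'E.2 (h ▸ rfl), hFx'rr⟩
              · exact absurd (hPraise x' rr (hproc x' hx'E.1 hx'N) hFx'rr) hnP
          have hupsub : {q' | ∃ ee ∈ N', F ee q'} ⊆ {q' | ∃ ee ∈ N, ee ≠ e ∧ F ee q'} := by
            rintro q' ⟨ee, heeN', hFeeq'⟩
            obtain ⟨x', hx'N, hx'ne, hFx'ee⟩ := hN'sub ee heeN'
            exact ⟨x', hx'N, hx'ne, hFt hFx'ee hFeeq'⟩
          have hupss : {q' | ∃ ee ∈ N, ee ≠ e ∧ F ee q'} ⊂ {q' | ∃ ee ∈ N, F ee q'} := by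
            constructor
            · rintro q' ⟨ee, h1, _, h3⟩
              exact ⟨ee, h1, h3⟩
            · intro hsub
              obtain ⟨ee, heeN, heene, hFeee⟩ := hsub ⟨e, heN, hFr e⟩
              exact hunamb y' (w (j - 1)) E hE ee (hNE heeN) e (hNE heN) heene
                ⟨hFeee, hmin ee heeN hFeee⟩
          have hcard' : ({q' | ∃ ee ∈ N', F ee q'}).ncard < n := by
            have h1 : ({q' | ∃ ee ∈ N, ee ≠ e ∧ F ee q'}).ncard <
                ({q' | ∃ ee ∈ N, F ee q'}).ncard :=
              Set.ncard_lt_ncard hupss (Set.toFinite _)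
            have h2 := Set.ncard_le_ncard hupsub (Set.toFinite _)
            omega
          refine ihn N' s' (insert ehat R') hcard' (hBt hBy hBy's') hins
            (fun rr hrr => hrr.1) (fun rr hrrE hrrN => by
              by_contra hnp
              exact hrrN ⟨hrrE, hnp⟩)
            (fun rr hrr => ?_)
          obtain ⟨x', hx'N, _, hFx'rr⟩ := hN'sub rr hrr
          obtain ⟨x₀, hx₀S, hFx₀x'⟩ := hduty x' hx'N
          exact ⟨x₀, hx₀S, hFt hFx₀x' hFx'rr⟩
        · refine ⟨y', E, hBy, hE, fun e he => hproc e he ?_⟩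
          rw [Set.not_nonempty_iff_eq_empty] at hNne
          rw [hNne]
          exact fun h => h
    -- invoke the loop with the initial transition
    obtain ⟨y'', E', hBy'', hE', hallP⟩ := loop (({q' | ∃ e ∈ {e ∈ E₀ | ¬ P e}, F e q'}).ncard + 1)
      {e ∈ E₀ | ¬ P e} y E₀ (by omega) (hBr y) hE₀ (fun e he => he.1)
      (fun e heE heN => by
        by_contra hnp
        exact heN ⟨heE, hnp⟩)
      (fun e he => hcov₀ e he.1)
    set ch : Q → FT Q := fun e => if h : P e then Classical.choose h
      else FT.leaf A.ι [] with hch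
    have hchspec : ∀ e ∈ E', (ch e).root = e ∧
        SubT A w M Tp (m + 1) (j + 1) (ch e) ∧
        ∀ p' o', (p', o') ∈ FT.pathData (ch e) →
          ∃ x ∈ S, ∃ p o cc, (p, o) ∈ FT.pathData (c x) ∧ o' = o ++ [cc] := by
      intro e he
      have h := hallP e he
      rw [hch]
      simp only [h, dif_pos]
      exact Classical.choose_spec h
    refine ⟨y'', FT.node y'' E' ch, hBy'', rfl,
      ⟨⟨by omega, hE', fun e he => ⟨(hchspec e he).1, (hchspec e he).2.1.1⟩⟩, ?_⟩, ?_⟩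
    · -- DOM
      rintro p' o' ⟨e, he, pc, oc, hpc, heq⟩
      simp only [Prod.mk.injEq] at heq
      obtain ⟨rfl, rfl⟩ := heq
      intro i hi hα
      obtain ⟨x, hxS, p, o, cc, hpo, rfl⟩ := (hchspec e he).2.2 pc o' hpc
      have holen : o.length = m := (pathData_length (hc x hxS).2 hpo).2
      cases i with
      | zero =>
        have h1 : (o ++ [cc]).getD (j - 1 + 0) A.ι = o.getD (j - 1) A.ι :=
          List.getD_append _ _ _ _ (by omega)
        rw [h1] at hα
        have hzα : z ∈ A.α := hdom (z :: p) o ⟨x, hxS, p, o, hpo, rfl⟩ 0 (by omega)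
          (by simpa using hα)
        simp only [List.getD_cons_zero]
        exact (hB _ _ hBy'').2.1 ((hF _ _ hzy').1 hzα)
      | succ i' =>
        have hd := (hchspec e he).2.1.2 pc (o ++ [cc]) hpc i' (by omega)
        simp only [List.getD_cons_succ]
        apply hd
        have heq2 : j + 1 - 1 + i' = j - 1 + (i' + 1) := by omega
        rw [heq2]
        exact hα
    · -- extension property
      rintro p' o' ⟨e, he, pc, oc, hpc, heq⟩
      simp only [Prod.mk.injEq] at heq
      obtain ⟨rfl, rfl⟩ := heq
      obtain ⟨x, hxS, p, o, cc, hpo, rfl⟩ := (hchspec e he).2.2 pc o' hpc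
      exact ⟨z :: p, o, cc, ⟨x, hxS, p, o, hpo, rfl⟩, rfl⟩

end Core3
section Core4

set_option linter.unusedSectionVars false
open Classical

variable {σ Q : Type*} [Finite σ] [Finite Q]
variable {A : ABA σ Q} {w : ℕ → σ} {M F B : Q → Q → Prop} {Tp : Set (List Q)}

/-- Walking down a tree along a path of states. -/
inductive Follows : FT Q → List Q → FT Q → Prop where
  | single (t : FT Q) : Follows t [t.root] t
  | cons (q : Q) (S : Set Q) (c : Q → FT Q) (y : Q) (r : List Q) (u : FT Q) :
      y ∈ S → Follows (c y) (y :: r) u → Follows (FT.node q S c) (q :: y :: r) u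

private lemma Follows_ne_nil {t u : FT Q} {π : List Q} (h : Follows t π u) : π ≠ [] := by
  cases h <;> simp

private lemma Follows_root {t u : FT Q} {π : List Q} (h : Follows t π u) (d : Q) :
    π.getLastD d = u.root := by
  induction h with
  | single t => rfl
  | cons q S c y r u hy hf ih => rw [List.getLastD_cons]; exact ih

private lemma Follows_head {t u : FT Q} {π : List Q} (h : Follows t π u) :
    ∃ r, π = t.root :: r := by
  cases h with
  | single t => exact ⟨[], rfl⟩
  | cons q S c y r u hy hf => exact ⟨y :: r, rfl⟩

private lemma Follows_unique {t u u' : FT Q} {π : List Q} (h : Follows t π u)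
    (h' : Follows t π u') : u = u' := by
  induction h generalizing u' with
  | single t =>
    cases h' with
    | single => rfl
  | cons q S c y r u hy hf ih =>
    cases h' with
    | cons _ _ _ _ _ v hy' hf' => exact ih hf'

private lemma Follows_singleton {t u : FT Q} {a : Q} (h : Follows t [a] u) :
    u = t ∧ t.root = a := by
  cases h with
  | single => exact ⟨rfl, rfl⟩

private lemma Follows_snoc_mp {t : FT Q} {l : List Q} {v : FT Q}
    (h : Follows t l v) : ∀ (π : List Q) (x : Q), l = π ++ [x] → π ≠ [] →
      ∃ q S c, Follows t π (FT.node q S c) ∧ x ∈ S ∧ v = c x ∧ (c x).root = x := by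
  induction h with
  | single t =>
    intro π x hl hπ
    have hlen := congrArg List.length hl
    cases π with
    | nil => exact absurd rfl hπ
    | cons a π' => simp at hlen
  | cons q S c y r u hy hf ih =>
    intro π x hl hπ
    cases π with
    | nil => exact absurd rfl hπ
    | cons a π₂ =>
      simp only [List.cons_append, List.cons.injEq] at hl
      obtain ⟨rfl, hl2⟩ := hl
      cases π₂ with
      | nil =>
        simp only [List.nil_append, List.cons.injEq] at hl2
        obtain ⟨rfl, rfl⟩ := hl2
        obtain ⟨rfl, hroot⟩ := Follows_singleton hf
        exact ⟨q, S, c, Follows.single (FT.node q S c), hy, rfl, hroot⟩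
      | cons b π₃ =>
        simp only [List.cons_append, List.cons.injEq] at hl2
        obtain ⟨rfl, hl3⟩ := hl2
        obtain ⟨q', S', c', h1, h2, h3, h4⟩ := ih (y :: π₃) x (by rw [hl3]; simp) (by simp)
        exact ⟨q', S', c', Follows.cons q S c y π₃ _ hy h1, h2, h3, h4⟩

private lemma Follows_snoc_mpr {t : FT Q} {π : List Q} {x : Q} {q : Q} {S : Set Q}
    {c : Q → FT Q} (h : Follows t π (FT.node q S c)) (hx : x ∈ S)
    (hroot : (c x).root = x) : Follows t (π ++ [x]) (c x) := by
  have haux : ∀ (t' : FT Q) (l : List Q) (v : FT Q), Follows t' l v →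
      v = FT.node q S c → Follows t' (l ++ [x]) (c x) := by
    intro t' l v hF
    induction hF with
    | single t'' =>
      rintro rfl
      refine Follows.cons q S c x [] (c x) hx ?_
      have := Follows.single (c x)
      rwa [hroot] at this
    | cons q0 S0 c0 y r u hy hf ih =>
      intro hv
      exact Follows.cons q0 S0 c0 y (r ++ [x]) (c x) hy (ih hv)
  exact haux t π _ h rfl

private lemma Follows_prefix {t : FT Q} {π ρ : List Q} {v : FT Q}
    (h : Follows t π v) (hρπ : ρ <+: π) (hρ : ρ ≠ []) : ∃ u, Follows t ρ u := by
  induction π using List.reverseRecOn generalizing v with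
  | nil =>
    have := List.prefix_nil.mp hρπ
    exact absurd this hρ
  | append_singleton π' x ih =>
    by_cases hρeq : ρ = π' ++ [x]
    · exact ⟨v, hρeq ▸ h⟩
    · have hπ'ne : π' ≠ [] := by
        rintro rfl
        simp only [List.nil_append] at hρπ hρeq
        have h1 : ρ.length ≤ 1 := by simpa using hρπ.length_le
        have h2 : ρ.length ≠ 0 := fun hh => hρ (List.length_eq_zero_iff.mp hh)
        exact hρeq (hρπ.eq_of_length (by simp; omega))
      obtain ⟨q', S', c', h1, _, _, _⟩ := Follows_snoc_mp h π' x rfl hπ'ne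
      apply ih h1
      have hlen : ρ.length < (π' ++ [x]).length := by
        rcases Nat.lt_or_ge ρ.length (π' ++ [x]).length with h' | h'
        · exact h'
        · exact absurd (hρπ.eq_of_length (le_antisymm hρπ.length_le h')) hρeq
      have heq : ρ = List.take ρ.length (π' ++ [x]) := List.prefix_iff_eq_take.mp hρπ
      rw [List.take_append_of_le_length (by simp at hlen; omega)] at heq
      exact heq ▸ List.take_prefix _ _

end Core4
section Core5

set_option linter.unusedSectionVars false
open Classical

variable {σ Q : Type*} [Finite σ] [Finite Q]
variable {A : ABA σ Q} {w : ℕ → σ} {M F B : Q → Q → Prop} {Tp : Set (List Q)}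

/-- Truncation of a set of paths to paths of length at most `k`. -/
def trunc (k : ℕ) (s : Set (List Q)) : Set (List Q) := {π | π ∈ s ∧ π.length ≤ k}

private lemma Follows_SubA {t u : FT Q} {π : List Q} (h : Follows t π u) {D j : ℕ}
    (hsub : SubA A w M Tp D t j) : SubA A w M Tp D u (j + π.length - 1) := by
  induction h generalizing j with
  | single t =>
    have : j + [t.root].length - 1 = j := by simp
    rwa [this]
  | cons q S c y r u hy hf ih =>
    obtain ⟨hjD, hS, hc⟩ := hsub
    have h1 := ih (hc y hy).2
    have : j + (q :: y :: r).length - 1 = j + 1 + (y :: r).length - 1 := by simp; omega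
    rwa [this]

private lemma pathData_oTp {D j : ℕ} {t : FT Q} (hsub : SubA A w M Tp D t j)
    {p o : List Q} (hpo : (p, o) ∈ FT.pathData t) : o ∈ Tp := by
  induction t generalizing j p o with
  | leaf q o' =>
    simp only [FT.pathData, Set.mem_singleton_iff, Prod.mk.injEq] at hpo
    exact hpo.2 ▸ hsub.2.2.1
  | node q S c ih =>
    obtain ⟨x, hx, p', o', hp', heq⟩ := hpo
    simp only [Prod.mk.injEq] at heq
    obtain ⟨rfl, rfl⟩ := heq
    exact ih x (hsub.2.2 x hx).2 hp'

private lemma pathData_head {t : FT Q} {p o : List Q} (hpo : (p, o) ∈ FT.pathData t)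
    (d : Q) : p.getD 0 d = t.root := by
  cases t with
  | leaf q o' =>
    simp only [FT.pathData, Set.mem_singleton_iff, Prod.mk.injEq] at hpo
    rw [hpo.1]
    rfl
  | node q S c =>
    obtain ⟨x, hx, p', o', hp', heq⟩ := hpo
    simp only [Prod.mk.injEq] at heq
    rw [heq.1]
    rfl

private lemma Follows_pathData {t u : FT Q} {π : List Q} (h : Follows t π u)
    {p o : List Q} (hpo : (p, o) ∈ FT.pathData u) :
    (π.dropLast ++ p, o) ∈ FT.pathData t := by
  induction h with
  | single t => simpa using hpo
  | cons q S c y r u hy hf ih =>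
    exact ⟨y, hy, (y :: r).dropLast ++ p, o, ih hpo, rfl⟩

/-- Along an accepting run of `A⁺`, every long enough path contains an `α⁺` state
at a position beyond any given bound. -/
private lemma unbounded_acc (hrun : IsRun (extABA A M) w Tp)
    (hacc : Accepting (extABA A M) Tp) (n₀ : ℕ) :
    ∃ K, n₀ < K ∧ ∀ o ∈ Tp, o.length = K →
      ∃ i, n₀ ≤ i ∧ i < K ∧ o.getD i A.ι ∈ (extABA A M).α := by
  by_contra hcon
  push_neg at hcon
  set S' : Set (List Q) := {π | π ∈ Tp ∧ ∀ i, n₀ ≤ i → i < π.length →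
    π.getD i A.ι ∉ (extABA A M).α} with hS'
  have hpc : ∀ π ∈ S', ∀ ρ : List Q, ρ <+: π → ρ ≠ [] → ρ ∈ S' := by
    rintro π ⟨hπTp, hπ⟩ ρ hpre hρne
    refine ⟨hrun.tree.prefix_closed π hπTp ρ hpre hρne, fun i h1 h2 => ?_⟩
    rw [← prefix_getD hpre h2]
    exact hπ i h1 (lt_of_lt_of_le h2 hpre.length_le)
  have hinf : S'.Infinite := by
    by_contra hninf
    rw [Set.not_infinite] at hninf
    have himg : (List.length '' S').Finite := hninf.image _
    obtain ⟨b, hb⟩ := himg.bddAbove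
    obtain ⟨o, hoTp, holen, hbad⟩ := hcon (n₀ + b + 1) (by omega)
    have hoS' : o ∈ S' := ⟨hoTp, fun i h1 h2 => hbad i h1 (by omega)⟩
    have : o.length ≤ b := hb ⟨o, hoS', rfl⟩
    omega
  obtain ⟨ξ, hbr⟩ := konig S' hpc hinf
  have hbrTp : InfBranch Tp ξ := fun n => (hbr n).1
  obtain ⟨m, hm, hα⟩ := hacc ξ hbrTp n₀
  have hS'm := (hbr m).2 m hm (by simp)
  apply hS'm
  have hlen : m < (List.ofFn fun i : Fin (m + 1) => ξ i).length := by simp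
  rw [List.getD_eq_getElem _ _ hlen, List.getElem_ofFn]
  exact hα

variable (hFr : Reflexive F) (hFt : Transitive F) (hF : ForwardSim A F)
  (hunamb : Unambiguous A F) (hBr : Reflexive B) (hBt : Transitive B)
  (hB : BackwardSim A F B) (hM : IsMediated F B M) (hne : A.NoEmpty)

include hFr hFt hF hunamb hBr hBt hB hM hne in
lemma ext_lang_sub : ABA.Lang (extABA A M) ⊆ ABA.Lang A := by
  intro w hW
  obtain ⟨Tp, hrun, hrootTp, hacc⟩ := hW
  -- the base approximation
  have hU0 : ∃ t : FT Q, SubT A w M Tp 1 1 t ∧ t.root = A.ι := by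
    refine ⟨FT.leaf A.ι [A.ι], ⟨⟨rfl, rfl, hrootTp, ?_⟩, ?_⟩, rfl⟩
    · obtain ⟨p, hpM, hpδ⟩ := hrun.step [A.ι] hrootTp
      refine ⟨p, hpδ, hpM, fun hα => ?_⟩
      obtain ⟨qα, hqαA, hqαι, hιqα⟩ := hα
      exact ⟨qα, hqαA, hM.trans hpM hιqα, hqαι⟩
    · intro p o hpo i hi
      omega
  have hUU : ∀ k : ℕ, ∃ t : FT Q, SubT A w M Tp (k + 1) 1 t ∧ t.root = A.ι := by
    intro k
    induction k with
    | zero => exact hU0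
    | succ k ihk =>
      obtain ⟨t, hsub, hroot⟩ := ihk
      obtain ⟨yhat, t', hByhat, hroot', hsub', _⟩ :=
        res hFr hFt hF hunamb hBr hBt hB hM hrun t le_rfl hsub (y := A.ι)
          (by rw [hroot]; exact hFr A.ι)
      exact ⟨t', hsub', by rw [hroot', (hB _ _ hByhat).1 rfl]⟩
  choose UU hUUsub hUUroot using hUU
  set TS : ℕ → Set (List Q) := fun n => {π | ∃ u, Follows (UU n) π u} with hTSdef
  -- diagonalization
  have hkey : ∀ (k : ℕ) (I : Set ℕ), I.Infinite → ∃ I' : Set ℕ, I'.Infinite ∧ I' ⊆ I ∧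
      ∀ n ∈ I', ∀ n' ∈ I', trunc k (TS n) = trunc k (TS n') := by
    intro k I hI
    obtain ⟨v, hv⟩ := infinite_fiber I hI (fun n => trunc k (TS n))
      {s : Set (List Q) | s ⊆ {l : List Q | l.length ≤ k}}
      ((list_finite_length_le Q k).finite_subsets)
      (fun n _ => fun π hπ => hπ.2)
    exact ⟨{n | n ∈ I ∧ trunc k (TS n) = v}, hv, fun n hn => hn.1,
      fun n hn n' hn' => by rw [hn.2, hn'.2]⟩
  choose KI hKI1 hKI2 hKI3 using hkey
  let CH : ℕ → {I : Set ℕ // I.Infinite} := fun k => Nat.rec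
    ⟨KI 0 Set.univ Set.infinite_univ, hKI1 0 _ _⟩
    (fun k' p => ⟨KI (k' + 1) p.1 p.2, hKI1 (k' + 1) _ _⟩) k
  have hCHeq : ∀ k, ∀ n ∈ (CH k).1, ∀ n' ∈ (CH k).1,
      trunc k (TS n) = trunc k (TS n') := by
    intro k
    cases k with
    | zero => exact hKI3 0 _ _
    | succ k' => exact hKI3 (k' + 1) _ _
  have hCHmono1 : ∀ k, (CH (k + 1)).1 ⊆ (CH k).1 := fun k => hKI2 (k + 1) _ _
  have hCHmono : ∀ j k, j ≤ k → (CH k).1 ⊆ (CH j).1 := by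
    intro j k hjk
    induction k with
    | zero =>
      have : j = 0 := by omega
      subst this
      exact fun x hx => hx
    | succ k ih =>
      rcases Nat.le_succ_iff_eq_or_le.mp hjk with h' | h'
      · subst h'
        exact fun x hx => hx
      · exact fun x hx => ih h' (hCHmono1 k hx)
  have hNex : ∀ k, ∃ n ∈ (CH k).1, k < n := fun k => (CH k).2.exists_gt k
  choose N hN1 hN2 using hNex
  set Tlim : Set (List Q) := {π | π ∈ TS (N π.length)} with hTlimdef
  have hcoh : ∀ (π : List Q) (k : ℕ), π.length ≤ k → (π ∈ Tlim ↔ π ∈ TS (N k)) := by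
    intro π k hk
    have h3 := hCHeq π.length _ (hN1 π.length) _ (hCHmono _ _ hk (hN1 k))
    constructor
    · intro h
      have hmem : π ∈ trunc π.length (TS (N π.length)) := ⟨h, le_rfl⟩
      rw [h3] at hmem
      exact hmem.1
    · intro h
      have hmem : π ∈ trunc π.length (TS (N k)) := ⟨h, le_rfl⟩
      rw [← h3] at hmem
      exact hmem.1
  have hnil : ∀ π ∈ Tlim, π ≠ [] := by
    rintro π ⟨u, hu⟩
    exact Follows_ne_nil hu
  have hrootTlim : [A.ι] ∈ Tlim := by
    rw [hcoh [A.ι] 1 (by simp)]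
    refine ⟨UU (N 1), ?_⟩
    have h := Follows.single (UU (N 1))
    rwa [hUUroot (N 1)] at h
  refine ⟨Tlim, ⟨⟨fun h => hnil [] h rfl, ?_, ?_⟩, ?_⟩, hrootTlim, ?_⟩
  · -- prefix closed
    intro π hπ ρ hpre hρne
    obtain ⟨u, hu⟩ := hπ
    obtain ⟨u', hu'⟩ := Follows_prefix hu hpre hρne
    exact (hcoh ρ π.length hpre.length_le).mpr ⟨u', hu'⟩
  · -- unique root
    refine ⟨A.ι, hrootTlim, fun q hq => ?_⟩
    have hq1 : [q] ∈ TS (N 1) := (hcoh [q] 1 (by simp)).mp hq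
    obtain ⟨u, hu⟩ := hq1
    obtain ⟨_, hroot⟩ := Follows_singleton hu
    rw [← hroot, hUUroot]
  · -- run condition
    intro π hπ
    have hπne : π ≠ [] := hnil π hπ
    have hj1 : 1 ≤ π.length := by
      cases π with
      | nil => exact absurd rfl hπne
      | cons a l => simp
    have hπn : π ∈ TS (N (π.length + 1)) := (hcoh π (π.length + 1) (by omega)).mp hπ
    obtain ⟨u, hu⟩ := hπn
    have hSubu := Follows_SubA hu (hUUsub (N (π.length + 1))).1
    have hlt : 1 + π.length - 1 < N (π.length + 1) + 1 := by
      have := hN2 (π.length + 1)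
      omega
    cases u with
    | leaf q o =>
      obtain ⟨hj, _, _, _⟩ := hSubu
      omega
    | node q' S' c' =>
      obtain ⟨_, hS', hc'⟩ := hSubu
      have hsucc : succs Tlim π = S' := by
        ext x
        simp only [succs, Set.mem_setOf_eq]
        constructor
        · intro hx
          have hx2 : π ++ [x] ∈ TS (N (π.length + 1)) :=
            (hcoh (π ++ [x]) (π.length + 1) (by simp)).mp hx
          obtain ⟨v, hv⟩ := hx2
          obtain ⟨q2, S2, c2, hfol2, hxS2, _, _⟩ := Follows_snoc_mp hv π x rfl hπne
          have heq := Follows_unique hfol2 hu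
          injection heq with h1 h2 h3
          exact h2 ▸ hxS2
        · intro hx
          have hfol := Follows_snoc_mpr hu hx ((hc' x hx).1)
          exact (hcoh (π ++ [x]) (π.length + 1) (by simp)).mpr ⟨c' x, hfol⟩
      rw [hsucc]
      have hlast : lastSt A π = q' := Follows_root hu A.ι
      rw [hlast]
      have hidx : 1 + π.length - 1 - 1 = π.length - 1 := by omega
      rwa [hidx] at hS'
  · -- accepting
    intro ξ hbr n₀
    obtain ⟨K, hn₀K, hKprop⟩ := unbounded_acc hrun hacc n₀
    set π : List Q := List.ofFn (fun i : Fin (K - 1 + 1) => ξ i) with hπdef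
    have hπlen : π.length = K := by simp [hπdef]; omega
    have hπTlim : π ∈ Tlim := hbr (K - 1)
    set n : ℕ := N (K + 1) with hndef
    have hKn : K < n := by have := hN2 (K + 1); omega
    have hπn : π ∈ TS n := (hcoh π (K + 1) (by omega)).mp hπTlim
    obtain ⟨u, hu⟩ := hπn
    have hSubu := Follows_SubA hu (hUUsub n).1
    obtain ⟨⟨pu, o⟩, hpu⟩ := pathData_nonempty hne hSubu
    have hfull := Follows_pathData hu hpu
    have holen : o.length = n + 1 := (pathData_length hSubu hpu).2
    have hoTp : o ∈ Tp := pathData_oTp hSubu hpu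
    have hotake : o.take K ∈ Tp := by
      apply hrun.tree.prefix_closed o hoTp _ (List.take_prefix K o)
      intro hnil2
      have := congrArg List.length hnil2
      simp [holen] at this
      omega
    obtain ⟨i, hi1, hi2, hiα⟩ := hKprop (o.take K) hotake (by simp [holen]; omega)
    have hgetD : (o.take K).getD i A.ι = o.getD i A.ι :=
      (prefix_getD (List.take_prefix K o) (by simp [holen]; omega) A.ι).symm
    rw [hgetD] at hiα
    -- apply DOM of the full tree
    have hdom := (hUUsub n).2
    have hfulllen : (π.dropLast ++ pu).length + 1 = n + 1 + 1 :=
      pathData_length (hUUsub n).1 hfull |>.1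
    have hαfull : (π.dropLast ++ pu).getD i A.ι ∈ A.α := by
      apply hdom _ _ hfull i (by omega)
      have : 1 - 1 + i = i := by omega
      rw [this]
      exact hiα
    -- identify the i-th entry with ξ i
    have hπne2 : π ≠ [] := by rw [hπdef]; simp
    have hπget : ∀ i', i' < K → π.getD i' A.ι = ξ i' := by
      intro i' h
      have hlt : i' < π.length := by omega
      rw [List.getD_eq_getElem _ _ hlt]
      simp only [hπdef, List.getElem_ofFn]
    have hξ : (π.dropLast ++ pu).getD i A.ι = ξ i := by
      rcases Nat.lt_or_ge i (K - 1) with hiK | hiK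
      · rw [List.getD_append _ _ _ _ (by rw [List.length_dropLast, hπlen]; omega),
          ← prefix_getD (List.dropLast_prefix π)
            (by rw [List.length_dropLast, hπlen]; omega) A.ι]
        exact hπget i (by omega)
      · have hieq : i = K - 1 := by omega
        subst hieq
        rw [List.getD_append_right _ _ _ _ (by rw [List.length_dropLast, hπlen])]
        rw [List.length_dropLast, hπlen, Nat.sub_self]
        rw [pathData_head hpu A.ι, ← Follows_root hu A.ι, getLastD_eq_getD hπne2 A.ι, hπlen]
        exact hπget (K - 1) (by omega)
    rw [hξ] at hαfull
    exact ⟨i, hi1, hαfull⟩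

end Core5
section Quot

set_option linter.unusedSectionVars false
open Classical

/-- Paths generated from the initial state by a successor assignment. -/
inductive Lift {Q : Type*} (ι : Q) (f : List Q → Set Q) : List Q → Prop where
  | root : Lift ι f [ι]
  | step (π : List Q) (q : Q) : Lift ι f π → q ∈ f π → Lift ι f (π ++ [q])

namespace Lift

variable {Q : Type*} {ι : Q} {f : List Q → Set Q}

lemma ne_nil {π : List Q} (h : Lift ι f π) : π ≠ [] := by
  cases h with
  | root => simp
  | step π q _ _ => simp

lemma snoc_inv {π : List Q} {q : Q} (h : Lift ι f (π ++ [q])) (hπ : π ≠ []) :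
    Lift ι f π ∧ q ∈ f π := by
  have aux : ∀ l, Lift ι f l → ∀ (π' : List Q) (q' : Q), l = π' ++ [q'] → π' ≠ [] →
      Lift ι f π' ∧ q' ∈ f π' := by
    intro l hl
    induction hl with
    | root =>
      intro π' q' heq hne
      exfalso
      cases π' with
      | nil => exact hne rfl
      | cons a t =>
        have := congrArg List.length heq
        simp at this
    | step π₀ q₀ h1 h2 ih =>
      intro π' q' heq hne
      obtain ⟨rfl, h3⟩ := List.append_inj' heq rfl
      obtain rfl : q₀ = q' := by simpa using h3
      exact ⟨h1, h2⟩
  exact aux _ h π q rfl hπ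

lemma take {π : List Q} (h : Lift ι f π) :
    ∀ k, 1 ≤ k → k ≤ π.length → Lift ι f (π.take k) := by
  induction h with
  | root =>
    intro k h1 h2
    simp only [List.length_singleton] at h2
    obtain rfl : k = 1 := by omega
    exact Lift.root
  | step π q h1 h2 ih =>
    intro k hk1 hk2
    rcases Nat.lt_or_ge k (π.length + 1) with h' | h'
    · rw [List.take_append_of_le_length (by omega)]
      exact ih k hk1 (by omega)
    · have hk : k = π.length + 1 := by
        simp only [List.length_append, List.length_singleton] at hk2
        omega
      have htake : List.take k (π ++ [q]) = π ++ [q] :=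
        List.take_of_length_le (by simp [hk])
      rw [htake]
      exact Lift.step π q h1 h2

lemma singleton {q : Q} (h : Lift ι f [q]) : q = ι := by
  have aux : ∀ l, Lift ι f l → ∀ q' : Q, l = [q'] → q' = ι := by
    intro l hl
    induction hl with
    | root =>
      intro q' heq
      simpa using heq.symm
    | step π₀ q₀ h1 _ ih =>
      intro q' heq
      exfalso
      cases π₀ with
      | nil => exact (ne_nil h1) rfl
      | cons a t =>
        have := congrArg List.length heq
        simp at this
  exact aux _ h q rfl

end Lift

private lemma getLastD_map {Q X : Type*} (g : Q → X) (π : List Q) (d : Q) :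
    (π.map g).getLastD (g d) = g (π.getLastD d) := by
  induction π generalizing d with
  | nil => rfl
  | cons a l ih =>
    rw [List.map_cons, List.getLastD_cons, List.getLastD_cons]
    exact ih a

private lemma take_ofFn_eq {X : Type*} (g : ℕ → X) (m n : ℕ) (h : m ≤ n) :
    (List.ofFn fun i : Fin n => g i).take m = List.ofFn (fun i : Fin m => g i) := by
  apply List.ext_getElem
  · simp
    omega
  · intro i h1 h2
    rw [List.getElem_take, List.getElem_ofFn, List.getElem_ofFn]

variable {σ Q : Type*} [Finite σ] [Finite Q]

/-- The language of `A` is contained in the language of any quotient of `A`. -/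
lemma lang_sub_quot (A : ABA σ Q) (e : Q → Q → Prop) :
    ABA.Lang A ⊆ ABA.Lang (quotABA A e) := by
  classical
  intro w hW
  obtain ⟨T, hrun, hroot, hacc⟩ := hW
  set mk : Q → Quot e := Quot.mk e with hmkdef
  set pick : Set Q → Quot e → Q := fun P x =>
    if h : ∃ y ∈ P, mk y = x then Classical.choose h else A.ι with hpickdef
  have hpick : ∀ (P : Set Q) (x : Quot e), (∃ y ∈ P, mk y = x) →
      pick P x ∈ P ∧ mk (pick P x) = x := by
    intro P x h
    rw [hpickdef]
    simp only [h, dif_pos]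
    exact ⟨(Classical.choose_spec h).1, (Classical.choose_spec h).2⟩
  set f : List Q → Set Q := fun π =>
    {q' | q' ∈ succs T π ∧ q' = pick (succs T π) (mk q')} with hfdef
  have hS_T : ∀ π, Lift A.ι f π → π ∈ T := by
    intro π h
    induction h with
    | root => exact hroot
    | step π q h1 h2 ih => exact h2.1
  have hinj : ∀ π₁, Lift A.ι f π₁ → ∀ π₂, Lift A.ι f π₂ →
      π₁.map mk = π₂.map mk → π₁ = π₂ := by
    intro π₁ h1
    induction h1 with
    | root =>
      intro π₂ h2 heq
      cases h2 with
      | root => rfl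
      | step π₂' q₂ h3 h4 =>
        have := congrArg List.length heq
        have hne := Lift.ne_nil h3
        simp only [List.length_map, List.length_singleton, List.length_append,
          List.length_singleton] at this
        cases π₂' with
        | nil => exact absurd rfl hne
        | cons a l => simp at this
    | step π q h1 h2 ih =>
      intro π₂ h2' heq
      cases h2' with
      | root =>
        have := congrArg List.length heq
        have hne := Lift.ne_nil h1
        simp only [List.length_map, List.length_append, List.length_singleton] at this
        cases π with
        | nil => exact absurd rfl hne
        | cons a l => simp at this
      | step π₂' q₂ h3 h4 =>
        rw [List.map_append, List.map_append] at heq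
        obtain ⟨hmapeq, hqeq⟩ := List.append_inj' heq rfl
        obtain rfl := ih π₂' h3 hmapeq
        obtain hq : mk q = mk q₂ := by simpa using hqeq
        have : q = q₂ := by
          rw [h2.2, h4.2, hq]
        rw [this]
  refine ⟨{ρ | ∃ π, Lift A.ι f π ∧ ρ = π.map mk}, ⟨⟨?_, ?_, ?_⟩, ?_⟩, ?_, ?_⟩
  · -- not_nil
    rintro ⟨π, hπ, heq⟩
    have := congrArg List.length heq
    simp only [List.length_nil, List.length_map] at this
    exact Lift.ne_nil hπ (List.length_eq_zero_iff.mp this.symm)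
  · -- prefix closed
    rintro ρ ⟨π, hπ, rfl⟩ ρ' hpre hρ'ne
    have hlen : ρ'.length ≤ π.length := by
      have := hpre.length_le
      simpa using this
    have h1 : ρ'.length ≥ 1 := by
      cases ρ' with
      | nil => exact absurd rfl hρ'ne
      | cons a l => simp
    refine ⟨π.take ρ'.length, hπ.take _ h1 hlen, ?_⟩
    rw [List.map_take]
    exact List.prefix_iff_eq_take.mp hpre
  · -- unique root
    refine ⟨mk A.ι, ⟨[A.ι], Lift.root, rfl⟩, ?_⟩
    rintro x ⟨π, hπ, heq⟩
    cases π with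
    | nil => simp at heq
    | cons a l =>
      cases l with
      | nil =>
        obtain rfl := hπ.singleton
        simpa using heq
      | cons b l' => simp at heq
  · -- run condition
    rintro ρ ⟨π, hπ, rfl⟩
    have hsucc : succs {ρ | ∃ π', Lift A.ι f π' ∧ ρ = π'.map mk} (π.map mk) =
        mk '' succs T π := by
      ext x
      constructor
      · rintro ⟨σ, hσ, heq⟩
        cases hσ with
        | root =>
          exfalso
          have := congrArg List.length heq
          have hne := Lift.ne_nil hπ
          simp only [List.length_singleton, List.length_append, List.length_map,
            List.length_singleton] at this
          cases π with
          | nil => exact absurd rfl hne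
          | cons a l => simp at this
        | step σ' q₂ h3 h4 =>
          rw [List.map_append] at heq
          obtain ⟨hmapeq, hqeq⟩ := List.append_inj' heq.symm rfl
          obtain rfl := hinj σ' h3 π hπ hmapeq
          obtain rfl : mk q₂ = x := by simpa using hqeq
          exact ⟨q₂, h4.1, rfl⟩
      · rintro ⟨q, hq, rfl⟩
        have hex : ∃ y ∈ succs T π, mk y = mk q := ⟨q, hq, rfl⟩
        obtain ⟨hq₀mem, hq₀mk⟩ := hpick _ _ hex
        set q₀ := pick (succs T π) (mk q) with hq₀def
        have hq₀f : q₀ ∈ f π := by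
          refine ⟨hq₀mem, ?_⟩
          rw [hq₀mk]
        refine ⟨π ++ [q₀], Lift.step π q₀ hπ hq₀f, ?_⟩
        rw [List.map_append]
        simp [hq₀mk]
    rw [hsucc]
    simp only [List.length_map]
    refine ⟨lastSt A π, ?_, succs T π, hrun.step π (hS_T π hπ), rfl⟩
    show mk (lastSt A π) = (π.map mk).getLastD (quotABA A e).ι
    rw [show (quotABA A e).ι = mk A.ι from rfl, getLastD_map]
    rfl
  · exact ⟨[A.ι], Lift.root, rfl⟩
  · -- accepting
    intro ξ' hbr n₀
    have hσ : ∀ n : ℕ, ∃ σ, Lift A.ι f σ ∧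
        σ.map mk = List.ofFn (fun i : Fin (n + 1) => ξ' i) := by
      intro n
      obtain ⟨σ, h1, h2⟩ := hbr n
      exact ⟨σ, h1, h2.symm⟩
    choose σs hσ1 hσ2 using hσ
    have hσlen : ∀ n, (σs n).length = n + 1 := by
      intro n
      have := congrArg List.length (hσ2 n)
      simpa using this
    have hcohσ : ∀ m n, m ≤ n → σs m = (σs n).take (m + 1) := by
      intro m n hmn
      apply hinj _ (hσ1 m) _ ((hσ1 n).take (m + 1) (by omega) (by rw [hσlen]; omega))
      rw [hσ2 m, List.map_take, hσ2 n, take_ofFn_eq _ (m + 1) (n + 1) (by omega)]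
    set ξ : ℕ → Q := fun m => (σs m).getD m A.ι with hξdef
    have hξpre : ∀ n, (List.ofFn fun i : Fin (n + 1) => ξ i) = σs n := by
      intro n
      apply List.ext_getElem (by simp [hσlen])
      intro i h1 h2
      have hi : i < n + 1 := by simpa using h1
      rw [List.getElem_ofFn]
      show (σs i).getD i A.ι = (σs n)[i]
      rw [hcohσ i n (by omega), List.getD_eq_getElem _ _ (by simp [hσlen n]; omega)]
      simp [List.getElem_take]
    have hbrT : InfBranch T ξ := by
      intro n
      rw [hξpre n]
      exact hS_T _ (hσ1 n)
    obtain ⟨m, hm, hα⟩ := hacc ξ hbrT n₀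
    refine ⟨m, hm, ?_⟩
    have hlt : m < (σs m).length := by rw [hσlen]; omega
    have hlt2 : m < (List.map mk (σs m)).length := by
      rw [List.length_map, hσlen]; omega
    have h2 := List.getElem_of_eq (hσ2 m) hlt2
    rw [List.getElem_map, List.getElem_ofFn] at h2
    have h3 : ξ' m = mk ((σs m)[m]'hlt) := h2.symm
    have hξm : ξ m = (σs m)[m]'hlt := by
      show (σs m).getD m A.ι = _
      rw [List.getD_eq_getElem _ _ hlt]
    rw [h3]
    exact ⟨ξ m, hα, congrArg mk hξm⟩

/-- The language of the quotient of `A` by mediated equivalence is contained in the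
language of the `M`-extension of `A`. -/
lemma quot_sub_ext (A : ABA σ Q) {F B M : Q → Q → Prop} (hM : IsMediated F B M) :
    ABA.Lang (quotABA A (fun p q => M p q ∧ M q p)) ⊆ ABA.Lang (extABA A M) := by
  classical
  intro w hW
  set e : Q → Q → Prop := fun p q => M p q ∧ M q p with hedef
  obtain ⟨T', hrun', hroot', hacc'⟩ := hW
  set mk : Q → Quot e := Quot.mk e with hmkdef
  have hequiv : Equivalence e :=
    ⟨fun x => ⟨hM.refl x, hM.refl x⟩, fun h => ⟨h.2, h.1⟩,
      fun h1 h2 => ⟨hM.trans h1.1 h2.1, hM.trans h2.2 h1.2⟩⟩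
  have hmk : ∀ a b : Q, mk a = mk b → e a b := fun a b h =>
    (hequiv.eqvGen_iff).mp (Quot.eq.mp h)
  have hch : ∀ ρ : List (Quot e), ∃ (p : Q) (P : Set Q), ρ ∈ T' →
      (mk p = lastSt (quotABA A e) ρ ∧ P ∈ A.δ p (w (ρ.length - 1)) ∧
        succs T' ρ = mk '' P) := by
    intro ρ
    by_cases hρ : ρ ∈ T'
    · obtain ⟨p, hp1, P, hP1, hP2⟩ := hrun'.step ρ hρ
      exact ⟨p, P, fun _ => ⟨hp1, hP1, hP2⟩⟩
    · exact ⟨A.ι, ∅, fun h => absurd h hρ⟩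
  choose csrc cP hcspec using hch
  set f : List Q → Set Q := fun π => cP (π.map mk) with hfdef
  have hL2T : ∀ π, Lift A.ι f π → π.map mk ∈ T' := by
    intro π h
    induction h with
    | root => exact hroot'
    | step π q h1 h2 ih =>
      have hss := (hcspec (π.map mk) ih).2.2
      have : mk q ∈ succs T' (π.map mk) := by
        rw [hss]
        exact ⟨q, h2, rfl⟩
      rw [List.map_append]
      exact this
  refine ⟨{π | Lift A.ι f π}, ⟨⟨?_, ?_, ?_⟩, ?_⟩, Lift.root, ?_⟩
  · exact fun h => Lift.ne_nil h rfl
  · intro π hπ ρ hpre hρne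
    have h1 : ρ.length ≥ 1 := by
      cases ρ with
      | nil => exact absurd rfl hρne
      | cons a l => simp
    have := hπ.take ρ.length h1 hpre.length_le
    rwa [← List.prefix_iff_eq_take.mp hpre] at this
  · exact ⟨A.ι, Lift.root, fun q hq => hq.singleton⟩
  · -- run condition
    intro π hπ
    have hmem := hL2T π hπ
    have hsucc : succs {π | Lift A.ι f π} π = cP (π.map mk) := by
      ext x
      constructor
      · intro hx
        exact (Lift.snoc_inv hx (Lift.ne_nil hπ)).2
      · intro hx
        exact Lift.step π x hπ hx
    rw [hsucc]
    have hspec := hcspec (π.map mk) hmem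
    have hlast : mk (csrc (π.map mk)) = mk (lastSt A π) := by
      rw [hspec.1]
      show (π.map mk).getLastD (quotABA A e).ι = _
      rw [show (quotABA A e).ι = mk A.ι from rfl, getLastD_map]
      rfl
    have hMle : M (csrc (π.map mk)) (lastSt A π) := (hmk _ _ hlast).1
    refine ⟨csrc (π.map mk), hMle, ?_⟩
    have := hspec.2.1
    rwa [List.length_map] at this
  · -- accepting
    intro ξ hbr n₀
    have hbr' : InfBranch T' (fun n => mk (ξ n)) := by
      intro n
      have := hL2T _ (hbr n)
      rwa [List.map_ofFn] at this
    obtain ⟨m, hm, hα⟩ := hacc' _ hbr' n₀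
    obtain ⟨qα, hqαA, hqαeq⟩ := hα
    have he := hmk _ _ hqαeq
    exact ⟨m, hm, qα, hqαA, he.1, he.2⟩

end Quot
/-- Quotienting `A` with respect to the mediated equivalence `≡_M = ≼_M ∩ ≼_M⁻¹`
preserves the language: `L(A/≡_M) = L(A)`. -/
theorem stmt_18 [Finite σ] [Finite Q] (A : ABA σ Q) (hne : A.NoEmpty)
    (F B M : Q → Q → Prop)
    (hFr : Reflexive F) (hFt : Transitive F) (hF : ForwardSim A F)
    (hunamb : Unambiguous A F)
    (hBr : Reflexive B) (hBt : Transitive B) (hB : BackwardSim A F B)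
    (hM : IsMediated F B M) :
    ABA.Lang (quotABA A fun p q => M p q ∧ M q p) = ABA.Lang A := by
  apply Set.Subset.antisymm
  · intro w hw
    exact ext_lang_sub hFr hFt hF hunamb hBr hBt hB hM hne (quot_sub_ext A hM hw)
  · exact lang_sub_quot A _
end
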